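/- arXiv:0707.0286 — 5 statements merged into one kernel-verified Lean document; each statement's English description precedes it below -/
import Mathlib

section
/- Let G be a group and K a normal subgroup such that the quotient group G/K is cyclic. Then the inclusion [K,K]·G_3 ⊆ D_3(G,K) is an equality, where D_3(G,K) = {g ∈ G : g − 1 ∈ I(K)I(G) + I(G)^3} in the integral group ring ℤ(G). -/
open MonoidAlgebra
open scoped commutatorElement

noncomputable def relAugMulKG {G : Type*} [Group G] (K : Subgroup G) :
    Submodule ℤ (MonoidAlgebra ℤ G) :=
  Submodule.span ℤ {x | ∃ k ∈ K, ∃ g : G, x = (of ℤ G k - 1) * (of ℤ G g - 1)}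

noncomputable def augmentationSubmodule (G : Type*) [Group G] : Submodule ℤ (MonoidAlgebra ℤ G) :=
  Submodule.span ℤ {x | ∃ g : G, x = of ℤ G g - 1}

/-- The third relative dimension subgroup
`D₃(G,K) = {g ∈ G | g - 1 ∈ I(K)I(G) + I(G)³}` (as a subset of `G`). -/
noncomputable def D3 {G : Type*} [Group G] (K : Subgroup G) : Set G :=
  {g : G | of ℤ G g - 1 ∈ relAugMulKG K + augmentationSubmodule G ^ 3}

section lemmas
variable {G : Type*} [Group G]

lemma of_sub_one_mem_aug (g : G) : of ℤ G g - 1 ∈ augmentationSubmodule G :=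
  Submodule.subset_span ⟨g, rfl⟩

lemma pair_expand (a b : G) :
    (of ℤ G a - 1) * (of ℤ G b - 1) = of ℤ G (a * b) - of ℤ G a - of ℤ G b + 1 := by
  simp only [map_mul]
  noncomm_ring

lemma triple_expand (a b c : G) :
    (of ℤ G a - 1) * (of ℤ G b - 1) * (of ℤ G c - 1) =
      of ℤ G (a * b * c) - of ℤ G (a * b) - of ℤ G (a * c) - of ℤ G (b * c)
        + of ℤ G a + of ℤ G b + of ℤ G c - 1 := by
  simp only [map_mul]
  noncomm_ring

lemma aug_mul_aug_le : augmentationSubmodule G * augmentationSubmodule G ≤ augmentationSubmodule G := by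
  rw [augmentationSubmodule, Submodule.span_mul_span, Submodule.span_le]
  rintro x ⟨y, ⟨a, rfl⟩, z, ⟨b, rfl⟩, rfl⟩
  dsimp only
  rw [pair_expand]
  have h1 := of_sub_one_mem_aug (G := G) (a*b)
  have h2 := of_sub_one_mem_aug (G := G) a
  have h3 := of_sub_one_mem_aug (G := G) b
  have : of ℤ G (a * b) - of ℤ G a - of ℤ G b + 1
      = (of ℤ G (a*b) - 1) - (of ℤ G a - 1) - (of ℤ G b - 1) := by abel
  rw [this]
  exact sub_mem (sub_mem h1 h2) h3

lemma triple_mem_cube (a b c : G) :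
    (of ℤ G a - 1) * (of ℤ G b - 1) * (of ℤ G c - 1) ∈ augmentationSubmodule G ^ 3 := by
  have e1 : augmentationSubmodule G ^ 3 = augmentationSubmodule G ^ 2 * augmentationSubmodule G :=
    pow_succ _ 2
  rw [e1, pow_two]
  exact Submodule.mul_mem_mul (Submodule.mul_mem_mul (of_sub_one_mem_aug a) (of_sub_one_mem_aug b))
    (of_sub_one_mem_aug c)

lemma cube_mul_aug_le :
    augmentationSubmodule G ^ 3 * augmentationSubmodule G ≤ augmentationSubmodule G ^ 3 := by
  have e1 : augmentationSubmodule G ^ 3 = augmentationSubmodule G ^ 2 * augmentationSubmodule G :=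
    pow_succ _ 2
  rw [e1, mul_assoc]
  exact mul_le_mul_right aug_mul_aug_le _

end lemmas
section easydir
variable {G : Type*} [Group G]

lemma sq_mul_aug_le :
    augmentationSubmodule G ^ 2 * augmentationSubmodule G ≤ augmentationSubmodule G ^ 2 := by
  rw [pow_two, mul_assoc]
  exact mul_le_mul_right aug_mul_aug_le _

lemma cube_le_sq : augmentationSubmodule G ^ 3 ≤ augmentationSubmodule G ^ 2 :=
  (le_of_eq (pow_succ _ 2)).trans sq_mul_aug_le

lemma pair_mem_sq (a b : G) :
    (of ℤ G a - 1) * (of ℤ G b - 1) ∈ augmentationSubmodule G ^ 2 := by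
  rw [pow_two]
  exact Submodule.mul_mem_mul (of_sub_one_mem_aug a) (of_sub_one_mem_aug b)

lemma comm_decomp (a b : G) :
    of ℤ G ⁅a, b⁆ - 1 =
      ((of ℤ G a - 1) * (of ℤ G b - 1)) * (of ℤ G ((b*a)⁻¹) - 1) + (of ℤ G a - 1) * (of ℤ G b - 1)
      - (((of ℤ G b - 1) * (of ℤ G a - 1)) * (of ℤ G ((b*a)⁻¹) - 1)
          + (of ℤ G b - 1) * (of ℤ G a - 1)) := by
  set A := of ℤ G a with hA
  set B := of ℤ G b with hB
  set W := of ℤ G ((b*a)⁻¹) with hW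
  have e2 : A*B*W - B*A*W =
      ((A - 1) * (B - 1)) * (W - 1) + (A - 1) * (B - 1)
      - (((B - 1) * (A - 1)) * (W - 1) + (B - 1) * (A - 1)) := by noncomm_ring
  rw [← e2]
  have h3 : A * B * W = of ℤ G ⁅a,b⁆ := by
    rw [hA, hB, hW, ← map_mul, ← map_mul]
    congr 1
    rw [commutatorElement_def]
    group
  have h4 : B * A * W = 1 := by
    rw [hA, hB, hW, ← map_mul, ← map_mul, show b*a*(b*a)⁻¹ = 1 by group, map_one]
  rw [h3, h4]

variable (K : Subgroup G)

lemma relAug_mem {k : G} (hk : k ∈ K) (g : G) :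
    (of ℤ G k - 1) * (of ℤ G g - 1) ∈ relAugMulKG K :=
  Submodule.subset_span ⟨k, hk, g, rfl⟩

lemma relAug_mul_aug_le :
    relAugMulKG K * augmentationSubmodule G ≤ augmentationSubmodule G ^ 3 := by
  rw [relAugMulKG, augmentationSubmodule, Submodule.span_mul_span, Submodule.span_le]
  rintro x ⟨y, ⟨k, hk, g, rfl⟩, z, ⟨c, rfl⟩, rfl⟩
  exact triple_mem_cube k g c

lemma J_mul_aug_le :
    (relAugMulKG K + augmentationSubmodule G ^ 3) * augmentationSubmodule G
      ≤ augmentationSubmodule G ^ 3 := by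
  rw [Submodule.add_eq_sup, Submodule.sup_mul]
  exact sup_le (relAug_mul_aug_le K) cube_mul_aug_le

/-- The set `{g | g - 1 ∈ I(K)I(G) + I(G)^3}` as a subgroup. -/
noncomputable def DSgrp : Subgroup G where
  carrier := {g : G | of ℤ G g - 1 ∈ relAugMulKG K + augmentationSubmodule G ^ 3}
  one_mem' := by
    show of ℤ G 1 - 1 ∈ relAugMulKG K + augmentationSubmodule G ^ 3
    rw [map_one, sub_self]
    exact zero_mem _
  mul_mem' := by
    intro a b ha hb
    show of ℤ G (a * b) - 1 ∈ relAugMulKG K + augmentationSubmodule G ^ 3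
    have h : of ℤ G (a*b) - 1 =
        (of ℤ G a - 1) * (of ℤ G b - 1) + (of ℤ G a - 1) + (of ℤ G b - 1) := by
      rw [pair_expand]; abel
    rw [h]
    have h1 : (of ℤ G a - 1) * (of ℤ G b - 1) ∈ augmentationSubmodule G ^ 3 :=
      J_mul_aug_le K (Submodule.mul_mem_mul ha (of_sub_one_mem_aug b))
    exact add_mem (add_mem (Submodule.mem_sup_right h1) ha) hb
  inv_mem' := by
    intro a ha
    show of ℤ G a⁻¹ - 1 ∈ relAugMulKG K + augmentationSubmodule G ^ 3
    have h : of ℤ G a⁻¹ - 1 = -((of ℤ G a - 1) * (of ℤ G a⁻¹ - 1)) - (of ℤ G a - 1) := by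
      rw [pair_expand, show a * a⁻¹ = 1 by group, map_one]; abel
    rw [h]
    have h1 : (of ℤ G a - 1) * (of ℤ G a⁻¹ - 1) ∈ augmentationSubmodule G ^ 3 :=
      J_mul_aug_le K (Submodule.mul_mem_mul ha (of_sub_one_mem_aug a⁻¹))
    exact sub_mem (neg_mem (Submodule.mem_sup_right h1)) ha

lemma mem_DSgrp_iff (g : G) :
    g ∈ DSgrp K ↔ of ℤ G g - 1 ∈ relAugMulKG K + augmentationSubmodule G ^ 3 := Iff.rfl

/-- elements of the commutator subgroup have `g - 1 ∈ I(G)^2`. -/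
lemma gamma2_sub_one_mem_sq {u : G} (hu : u ∈ (⊤ : Subgroup G).lowerCentralSeries 1) :
    of ℤ G u - 1 ∈ augmentationSubmodule G ^ 2 := by
  let DS2 : Subgroup G :=
    { carrier := {g : G | of ℤ G g - 1 ∈ augmentationSubmodule G ^ 2}
      one_mem' := by
        show of ℤ G 1 - 1 ∈ augmentationSubmodule G ^ 2
        rw [map_one, sub_self]; exact zero_mem _
      mul_mem' := by
        intro a b ha hb
        show of ℤ G (a * b) - 1 ∈ augmentationSubmodule G ^ 2
        have h : of ℤ G (a*b) - 1 =
            (of ℤ G a - 1) * (of ℤ G b - 1) + (of ℤ G a - 1) + (of ℤ G b - 1) := by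
          rw [pair_expand]; abel
        rw [h]
        exact add_mem (add_mem (sq_mul_aug_le (Submodule.mul_mem_mul ha (of_sub_one_mem_aug b)))
          ha) hb
      inv_mem' := by
        intro a ha
        show of ℤ G a⁻¹ - 1 ∈ augmentationSubmodule G ^ 2
        have h : of ℤ G a⁻¹ - 1 = -((of ℤ G a - 1) * (of ℤ G a⁻¹ - 1)) - (of ℤ G a - 1) := by
          rw [pair_expand, show a * a⁻¹ = 1 by group, map_one]; abel
        rw [h]
        exact sub_mem (neg_mem (sq_mul_aug_le (Submodule.mul_mem_mul ha
          (of_sub_one_mem_aug a⁻¹)))) ha }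
  have hle : (⊤ : Subgroup G).lowerCentralSeries 1 ≤ DS2 := by
    rw [show (⊤ : Subgroup G).lowerCentralSeries 1 = ⁅(⊤ : Subgroup G), ⊤⁆ from
      Subgroup.top_lowerCentralSeries_one.trans (commutator_def G)]
    rw [Subgroup.commutator_le]
    intro a _ b _
    show of ℤ G ⁅a, b⁆ - 1 ∈ augmentationSubmodule G ^ 2
    rw [comm_decomp]
    have t1 : ((of ℤ G a - 1) * (of ℤ G b - 1)) * (of ℤ G ((b*a)⁻¹) - 1)
        ∈ augmentationSubmodule G ^ 2 := cube_le_sq (triple_mem_cube a b _)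
    have t3 : ((of ℤ G b - 1) * (of ℤ G a - 1)) * (of ℤ G ((b*a)⁻¹) - 1)
        ∈ augmentationSubmodule G ^ 2 := cube_le_sq (triple_mem_cube b a _)
    exact sub_mem (add_mem t1 (pair_mem_sq a b)) (add_mem t3 (pair_mem_sq b a))
  exact hle hu

lemma easy_inclusion [K.Normal] :
    (⁅K, K⁆ ⊔ (⊤ : Subgroup G).lowerCentralSeries 2) ≤ DSgrp K := by
  apply sup_le
  · rw [Subgroup.commutator_le]
    intro a ha b hb
    rw [mem_DSgrp_iff, comm_decomp]
    have t1 : ((of ℤ G a - 1) * (of ℤ G b - 1)) * (of ℤ G ((b*a)⁻¹) - 1)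
        ∈ augmentationSubmodule G ^ 3 := triple_mem_cube a b _
    have t3 : ((of ℤ G b - 1) * (of ℤ G a - 1)) * (of ℤ G ((b*a)⁻¹) - 1)
        ∈ augmentationSubmodule G ^ 3 := triple_mem_cube b a _
    exact sub_mem
      (add_mem (Submodule.mem_sup_right t1) (Submodule.mem_sup_left (relAug_mem K ha b)))
      (add_mem (Submodule.mem_sup_right t3) (Submodule.mem_sup_left (relAug_mem K hb a)))
  · rw [show (⊤ : Subgroup G).lowerCentralSeries 2 = ⁅(⊤ : Subgroup G).lowerCentralSeries 1, (⊤ : Subgroup G)⁆ from rfl]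
    rw [Subgroup.commutator_le]
    intro u hu g _
    rw [mem_DSgrp_iff, comm_decomp]
    have hu2 := gamma2_sub_one_mem_sq hu
    have c1 : (of ℤ G u - 1) * (of ℤ G g - 1) ∈ augmentationSubmodule G ^ 3 := by
      rw [pow_succ]
      exact Submodule.mul_mem_mul hu2 (of_sub_one_mem_aug g)
    have c2 : (of ℤ G g - 1) * (of ℤ G u - 1) ∈ augmentationSubmodule G ^ 3 := by
      rw [pow_succ']
      exact Submodule.mul_mem_mul (of_sub_one_mem_aug g) hu2
    have t1 : ((of ℤ G u - 1) * (of ℤ G g - 1)) * (of ℤ G ((g*u)⁻¹) - 1)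
        ∈ augmentationSubmodule G ^ 3 :=
      cube_mul_aug_le (Submodule.mul_mem_mul c1 (of_sub_one_mem_aug _))
    have t3 : ((of ℤ G g - 1) * (of ℤ G u - 1)) * (of ℤ G ((g*u)⁻¹) - 1)
        ∈ augmentationSubmodule G ^ 3 :=
      cube_mul_aug_le (Submodule.mul_mem_mul c2 (of_sub_one_mem_aug _))
    refine sub_mem (add_mem (Submodule.mem_sup_right t1) (Submodule.mem_sup_right c1))
      (add_mem (Submodule.mem_sup_right t3) (Submodule.mem_sup_right c2))

end easydir
section theta
variable {G : Type*} [Group G] {M : Type*} [AddCommGroup M]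

noncomputable def thetaMap (φ : G → M) : MonoidAlgebra ℤ G →ₗ[ℤ] M :=
  Finsupp.lsum ℤ (fun g => LinearMap.toSpanSingleton ℤ M (φ g)) ∘ₗ (coeffLinearEquiv ℤ).toLinearMap

lemma thetaMap_of (φ : G → M) (g : G) : thetaMap φ (of ℤ G g) = φ g := by
  classical
  rw [MonoidAlgebra.of_apply]
  show (Finsupp.lsum ℤ fun g => LinearMap.toSpanSingleton ℤ M (φ g)) (Finsupp.single g 1) = φ g
  rw [Finsupp.lsum_single, LinearMap.toSpanSingleton_apply, one_smul]

lemma thetaMap_one (φ : G → M) : thetaMap φ (1 : MonoidAlgebra ℤ G) = φ 1 := by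
  rw [show (1 : MonoidAlgebra ℤ G) = of ℤ G 1 from (map_one _).symm, thetaMap_of]

lemma thetaMap_vanish (K : Subgroup G) (φ : G → M)
    (hφ1 : φ 1 = 0)
    (hφ2 : ∀ k ∈ K, ∀ g : G, φ (k * g) = φ k + φ g)
    (hφ3 : ∀ a b c : G, φ (a*b*c) + φ a + φ b + φ c = φ (a*b) + φ (a*c) + φ (b*c)) :
    ∀ u ∈ relAugMulKG K + augmentationSubmodule G ^ 3, thetaMap φ u = 0 := by
  have hrel : relAugMulKG K ≤ LinearMap.ker (thetaMap φ) := by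
    rw [relAugMulKG, Submodule.span_le]
    rintro u ⟨k, hk, g, rfl⟩
    rw [SetLike.mem_coe, LinearMap.mem_ker, pair_expand, map_add, map_sub, map_sub,
      thetaMap_of, thetaMap_of, thetaMap_of, thetaMap_one, hφ1, hφ2 k hk g]
    abel
  have hcube : augmentationSubmodule G ^ 3 ≤ LinearMap.ker (thetaMap φ) := by
    have e1 : augmentationSubmodule G ^ 3
        = augmentationSubmodule G * augmentationSubmodule G * augmentationSubmodule G := by
      rw [pow_succ _ 2, pow_two]
    rw [e1, augmentationSubmodule, Submodule.span_mul_span, Submodule.span_mul_span,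
      Submodule.span_le]
    rintro u ⟨v, ⟨y, ⟨a, rfl⟩, z, ⟨b, rfl⟩, rfl⟩, w, ⟨c, rfl⟩, rfl⟩
    rw [SetLike.mem_coe, LinearMap.mem_ker]
    dsimp only
    rw [triple_expand, map_sub, map_add, map_add, map_add, map_sub, map_sub, map_sub,
      thetaMap_of, thetaMap_of, thetaMap_of, thetaMap_of, thetaMap_of, thetaMap_of,
      thetaMap_of, thetaMap_one, hφ1]
    have h := hφ3 a b c
    have h2 : φ (a*b*c) - φ (a*b) - φ (a*c) - φ (b*c) + φ a + φ b + φ c - 0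
        = (φ (a*b*c) + φ a + φ b + φ c) - (φ (a*b) + φ (a*c) + φ (b*c)) := by abel
    rw [h2, h, sub_self]
  intro u hu
  rcases Submodule.mem_sup.1 hu with ⟨v, hv, w, hw, rfl⟩
  rw [map_add, (hrel hv : _), (hcube hw : _), add_zero]

end theta
section core
variable {G : Type*} [Group G]

theorem core_vanish (K : Subgroup G) [hN : K.Normal] {M : Type*} [AddCommGroup M]
    (x : G) (e : G ⧸ K → ℤ) (lam : G → M) (xi : M)
    (hx : ∀ c : G ⧸ K, (x : G ⧸ K) ^ (e c) = c)
    (he1 : e (1 : G ⧸ K) = 0)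
    (hlam : ∀ a b : G, a ∈ K → b ∈ K → lam (a * b) = lam a + lam b)
    (hlamN : ∀ a : G, a ∈ ⁅K, K⁆ ⊔ (⊤ : Subgroup G).lowerCentralSeries 2 → lam a = 0)
    (hxi : ∀ z : ℤ, (x : G ⧸ K) ^ z = 1 → z • xi = lam (x ^ z)) :
    ∀ g ∈ K, of ℤ G g - 1 ∈ relAugMulKG K + augmentationSubmodule G ^ 3 → lam g = 0 := by
  have lam1 : lam 1 = 0 := by
    have h1 := hlam 1 1 K.one_mem K.one_mem
    rw [one_mul] at h1
    have h2 : lam 1 + lam 1 = lam 1 + 0 := by rw [add_zero, ← h1]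
    exact add_left_cancel h2
  have hmemzpow : ∀ z : ℤ, (x : G ⧸ K) ^ z = 1 → x ^ z ∈ K := by
    intro z hz
    rw [← QuotientGroup.eq_one_iff, QuotientGroup.mk_zpow]
    exact hz
  have hrK : ∀ g : G, g * x ^ (-(e (g : G ⧸ K))) ∈ K := by
    intro g
    rw [← QuotientGroup.eq_one_iff, QuotientGroup.mk_mul, QuotientGroup.mk_zpow, zpow_neg, hx]
    group
  set φ : G → M := fun g => lam (g * x ^ (-(e (g : G ⧸ K)))) + (e (g : G ⧸ K)) • xi with hφdef
  have φval : ∀ k ∈ K, φ k = lam k := by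
    intro k hk
    show lam (k * x ^ (-(e (k : G ⧸ K)))) + (e (k : G ⧸ K)) • xi = lam k
    rw [(QuotientGroup.eq_one_iff k).2 hk, he1, neg_zero, zpow_zero, mul_one, zero_smul, add_zero]
  have φ1 : φ 1 = 0 := by rw [φval 1 K.one_mem, lam1]
  have hφ2 : ∀ k ∈ K, ∀ g : G, φ (k * g) = φ k + φ g := by
    intro k hk g
    rw [φval k hk]
    show lam (k * g * x ^ (-(e ((k*g : G) : G ⧸ K)))) + (e ((k*g : G) : G ⧸ K)) • xi
      = lam k + (lam (g * x ^ (-(e (g : G ⧸ K)))) + (e (g : G ⧸ K)) • xi)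
    have hπ : ((k * g : G) : G ⧸ K) = ((g : G) : G ⧸ K) := by
      rw [QuotientGroup.mk_mul, (QuotientGroup.eq_one_iff k).2 hk, one_mul]
    rw [hπ, mul_assoc, hlam k _ hk (hrK g), add_assoc]
  -- commutator facts
  have hcommK : ∀ (j : ℤ) (u : G), u ∈ K → ⁅x ^ j, u⁆ ∈ K := by
    intro j u hu
    rw [commutatorElement_def]
    exact mul_mem (hN.conj_mem u hu (x ^ j)) (inv_mem hu)
  have hγ2 : ∀ (j : ℤ) (u : G), ⁅x ^ j, u⁆ ∈ (⊤ : Subgroup G).lowerCentralSeries 1 := by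
    intro j u
    rw [show (⊤ : Subgroup G).lowerCentralSeries 1 = ⁅(⊤ : Subgroup G), ⊤⁆ from
      Subgroup.top_lowerCentralSeries_one.trans (commutator_def G)]
    exact Subgroup.commutator_mem_commutator (Subgroup.mem_top _) (Subgroup.mem_top _)
  have hγ3 : ∀ (i : ℤ) (v : G), v ∈ (⊤ : Subgroup G).lowerCentralSeries 1 → lam ⁅x ^ i, v⁆ = 0 := by
    intro i v hv
    apply hlamN
    apply le_sup_right (a := ⁅K, K⁆)
    rw [show (⊤ : Subgroup G).lowerCentralSeries 2 = ⁅(⊤ : Subgroup G).lowerCentralSeries 1, (⊤ : Subgroup G)⁆ from rfl,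
      Subgroup.commutator_comm]
    exact Subgroup.commutator_mem_commutator (Subgroup.mem_top _) hv
  have hconj_lam : ∀ (i : ℤ) (w : G), w ∈ K → lam (x ^ i * w * x ^ (-i)) = lam ⁅x ^ i, w⁆ + lam w := by
    intro i w hw
    have hid : x ^ i * w * x ^ (-i) = ⁅x ^ i, w⁆ * w := by
      rw [commutatorElement_def]; group
    rw [hid, hlam _ _ (hcommK i w hw) hw]
  have hcomm_add : ∀ (i j : ℤ) (u : G), u ∈ K →
      lam ⁅x ^ (i + j), u⁆ = lam ⁅x ^ i, u⁆ + lam ⁅x ^ j, u⁆ := by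
    intro i j u hu
    have hid : ⁅x ^ (i + j), u⁆ = (x ^ i * ⁅x ^ j, u⁆ * x ^ (-i)) * ⁅x ^ i, u⁆ := by
      rw [commutatorElement_def, commutatorElement_def, commutatorElement_def]; group
    have hconjK : x ^ i * ⁅x ^ j, u⁆ * x ^ (-i) ∈ K := by
      rw [zpow_neg]
      exact hN.conj_mem _ (hcommK j u hu) (x ^ i)
    rw [hid, hlam _ _ hconjK (hcommK i u hu), hconj_lam i _ (hcommK j u hu),
      hγ3 i _ (hγ2 j u), zero_add, add_comm]
  have hcomm_vanish : ∀ (z : ℤ) (u : G), u ∈ K → (x : G ⧸ K) ^ z = 1 → lam ⁅x ^ z, u⁆ = 0 := by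
    intro z u hu hz
    apply hlamN
    apply le_sup_left (b := (⊤ : Subgroup G).lowerCentralSeries 2)
    exact Subgroup.commutator_mem_commutator (hmemzpow z hz) hu
  -- the product rule
  have prod_rule : ∀ g h : G,
      φ (g * h) = φ g + φ h + lam ⁅x ^ (e (g : G ⧸ K)), h * x ^ (-(e (h : G ⧸ K)))⁆ := by
    intro g h
    have hd1 : (x : G ⧸ K) ^ (e (g : G ⧸ K) + e (h : G ⧸ K) - e ((g * h : G) : G ⧸ K)) = 1 := by
      rw [zpow_sub, zpow_add, hx, hx, hx, QuotientGroup.mk_mul]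
      group
    have hid : g * h * x ^ (-(e ((g * h : G) : G ⧸ K)))
        = (g * x ^ (-(e (g : G ⧸ K)))) *
          ((x ^ (e (g : G ⧸ K)) * (h * x ^ (-(e (h : G ⧸ K)))) * x ^ (-(e (g : G ⧸ K)))) *
            x ^ (e (g : G ⧸ K) + e (h : G ⧸ K) - e ((g * h : G) : G ⧸ K))) := by
      group
    have hconjK : x ^ (e (g : G ⧸ K)) * (h * x ^ (-(e (h : G ⧸ K)))) * x ^ (-(e (g : G ⧸ K))) ∈ K := by
      have hc := hN.conj_mem _ (hrK h) (x ^ (e (g : G ⧸ K)))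
      rwa [← zpow_neg] at hc
    show lam (g * h * x ^ (-(e ((g*h : G) : G ⧸ K)))) + (e ((g*h : G) : G ⧸ K)) • xi
      = (lam (g * x ^ (-(e (g : G ⧸ K)))) + (e (g : G ⧸ K)) • xi)
        + (lam (h * x ^ (-(e (h : G ⧸ K)))) + (e (h : G ⧸ K)) • xi)
        + lam ⁅x ^ (e (g : G ⧸ K)), h * x ^ (-(e (h : G ⧸ K)))⁆
    rw [hid, hlam _ _ (hrK g) (mul_mem hconjK (hmemzpow _ hd1)),
      hlam _ _ hconjK (hmemzpow _ hd1), hconj_lam _ _ (hrK h), ← hxi _ hd1, sub_smul, add_smul]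
    abel
  -- the third-difference identity
  have hφ3 : ∀ a b c : G, φ (a*b*c) + φ a + φ b + φ c = φ (a*b) + φ (a*c) + φ (b*c) := by
    intro a b c
    have h1 := prod_rule (a*b) c
    have h2 := prod_rule a c
    have h3 := prod_rule b c
    have h4 := prod_rule a b
    have e4 : e ((a*b : G) : G ⧸ K) + (e (a : G ⧸ K) + e (b : G ⧸ K) - e ((a*b : G) : G ⧸ K))
        = e (a : G ⧸ K) + e (b : G ⧸ K) := by ring
    have hd : (x : G ⧸ K) ^ (e (a : G ⧸ K) + e (b : G ⧸ K) - e ((a*b : G) : G ⧸ K)) = 1 := by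
      rw [zpow_sub, zpow_add, hx, hx, hx, QuotientGroup.mk_mul]
      group
    have h5 : lam ⁅x ^ (e (a : G ⧸ K) + e (b : G ⧸ K)), c * x ^ (-(e (c : G ⧸ K)))⁆
        = lam ⁅x ^ (e (a : G ⧸ K)), c * x ^ (-(e (c : G ⧸ K)))⁆
          + lam ⁅x ^ (e (b : G ⧸ K)), c * x ^ (-(e (c : G ⧸ K)))⁆ :=
      hcomm_add _ _ _ (hrK c)
    have h6 : lam ⁅x ^ (e ((a*b : G) : G ⧸ K)
          + (e (a : G ⧸ K) + e (b : G ⧸ K) - e ((a*b : G) : G ⧸ K))), c * x ^ (-(e (c : G ⧸ K)))⁆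
        = lam ⁅x ^ (e ((a*b : G) : G ⧸ K)), c * x ^ (-(e (c : G ⧸ K)))⁆
          + lam ⁅x ^ (e (a : G ⧸ K) + e (b : G ⧸ K) - e ((a*b : G) : G ⧸ K)),
              c * x ^ (-(e (c : G ⧸ K)))⁆ :=
      hcomm_add _ _ _ (hrK c)
    rw [e4, hcomm_vanish _ _ (hrK c) hd, add_zero, h5] at h6
    -- h6 : lam ⁅x^{e(ab)}, rc⁆ = lam ⁅x^{ea}, rc⁆ + lam ⁅x^{eb}, rc⁆
    rw [h1, h2, h3, ← h6]
    abel
  -- conclusion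
  intro g hgK hmem
  have h0 := thetaMap_vanish K φ φ1 hφ2 hφ3 _ hmem
  rw [map_sub, thetaMap_of, thetaMap_one, φ1, sub_zero, φval g hgK] at h0
  exact h0

end core
/-- **Corollary 2.3(3)**: if `K` is normal and `G/K` is cyclic, then
`[K,K]·G₃ = D₃(G,K)`. -/
theorem relative_dim3_eq_of_cyclic_quotient {G : Type*} [Group G] (K : Subgroup G)
    [K.Normal] (h : IsCyclic (G ⧸ K)) :
    D3 K = ↑(⁅K, K⁆ ⊔ (⊤ : Subgroup G).lowerCentralSeries 2) := by
  classical
  haveI : Fact ((0 : ℚ) < 1) := ⟨one_pos⟩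
  haveI := h
  letI : CommGroup (G ⧸ K) := IsCyclic.commGroup
  ext g
  simp only [D3, Set.mem_setOf_eq, SetLike.mem_coe]
  constructor
  · -- hard direction
    intro hg
    -- Step 1: g ∈ K
    have hK1 : ∀ χ : CharacterModule (Additive (G ⧸ K)),
        χ (Additive.ofMul ((g : G ⧸ K))) = 0 := by
      intro χ
      set φ' : G → AddCircle (1 : ℚ) := fun w => χ (Additive.ofMul ((w : G ⧸ K))) with hφ'
      have hhom : ∀ a b : G, φ' (a * b) = φ' a + φ' b := by
        intro a b
        show χ (Additive.ofMul (((a * b : G) : G ⧸ K))) = _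
        rw [QuotientGroup.mk_mul, ofMul_mul, map_add]
      have hφ'1 : φ' 1 = 0 := by
        show χ (Additive.ofMul (((1 : G) : G ⧸ K))) = 0
        rw [QuotientGroup.mk_one, ofMul_one, map_zero]
      have h2' : ∀ k ∈ K, ∀ w : G, φ' (k * w) = φ' k + φ' w := fun k _ w => hhom k w
      have h3' : ∀ a b c : G,
          φ' (a*b*c) + φ' a + φ' b + φ' c = φ' (a*b) + φ' (a*c) + φ' (b*c) := by
        intro a b c
        rw [hhom (a*b) c, hhom a b, hhom a c, hhom b c]
        abel
      have h0 := thetaMap_vanish K φ' hφ'1 h2' h3' _ hg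
      rwa [map_sub, thetaMap_of, thetaMap_one, hφ'1, sub_zero] at h0
    have hgK : g ∈ K := by
      rw [← QuotientGroup.eq_one_iff, ← ofMul_eq_zero]
      exact CharacterModule.eq_zero_of_character_apply hK1
    -- Step 2
    have hKK : ⁅K, K⁆ ≤ K :=
      Subgroup.commutator_le.2 fun p hp q hq =>
        mul_mem (mul_mem (mul_mem hp hq) (inv_mem hp)) (inv_mem hq)
    have hG1K : (⊤ : Subgroup G).lowerCentralSeries 1 ≤ K := by
      rw [Subgroup.top_lowerCentralSeries_one]
      have := Abelianization.commutator_subset_ker (QuotientGroup.mk' K)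
      rwa [QuotientGroup.ker_mk'] at this
    have hNK : ⁅K, K⁆ ⊔ (⊤ : Subgroup G).lowerCentralSeries 2 ≤ K :=
      sup_le hKK (le_trans (Subgroup.lowerCentralSeries_antitone _ (by norm_num : (1:ℕ) ≤ 2)) hG1K)
    letI : CommGroup (K ⧸ (⁅K, K⁆ ⊔ (⊤ : Subgroup G).lowerCentralSeries 2).subgroupOf K) :=
      { (inferInstance : Group (K ⧸ (⁅K, K⁆ ⊔ (⊤ : Subgroup G).lowerCentralSeries 2).subgroupOf K)) with
        mul_comm := by
          intro a b
          refine QuotientGroup.induction_on a fun a => QuotientGroup.induction_on b fun b => ?_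
          rw [← QuotientGroup.mk_mul, ← QuotientGroup.mk_mul]
          apply (QuotientGroup.eq (s := (⁅K, K⁆ ⊔ (⊤ : Subgroup G).lowerCentralSeries 2).subgroupOf K)).2
          rw [Subgroup.mem_subgroupOf]
          apply le_sup_left (b := (⊤ : Subgroup G).lowerCentralSeries 2)
          have hc : ((((a*b)⁻¹ * (b*a) : K)) : G) = ⁅((b : G))⁻¹, ((a : G))⁻¹⁆ := by
            rw [commutatorElement_def]
            push_cast
            group
          rw [hc]
          exact Subgroup.commutator_mem_commutator (inv_mem b.2) (inv_mem a.2)  }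
    obtain ⟨t, ht⟩ := h.exists_generator
    obtain ⟨x, hxt⟩ := QuotientGroup.mk_surjective t
    have hxall : ∀ c : G ⧸ K, ∃ z : ℤ, (x : G ⧸ K) ^ z = c := by
      intro c
      have := Subgroup.mem_zpowers_iff.1 (ht c)
      rwa [← hxt] at this
    choose e0 he0 using hxall
    set e : G ⧸ K → ℤ := fun c => e0 c - e0 1 with hedef
    have hx : ∀ c : G ⧸ K, (x : G ⧸ K) ^ (e c) = c := by
      intro c
      rw [hedef]
      dsimp only
      rw [zpow_sub, he0, he0, inv_one, mul_one]
    have he1 : e 1 = 0 := sub_self _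
    -- the conclusion `g ∈ N` will follow from vanishing of all characters of A
    suffices hsuff : ∀ χ : CharacterModule
        (Additive (K ⧸ (⁅K, K⁆ ⊔ (⊤ : Subgroup G).lowerCentralSeries 2).subgroupOf K)),
        χ (Additive.ofMul ((QuotientGroup.mk (⟨g, hgK⟩ : K)) :
          K ⧸ (⁅K, K⁆ ⊔ (⊤ : Subgroup G).lowerCentralSeries 2).subgroupOf K)) = 0 by
      have h00 := CharacterModule.eq_zero_of_character_apply hsuff
      rw [ofMul_eq_zero, QuotientGroup.eq_one_iff, Subgroup.mem_subgroupOf] at h00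
      exact h00
    intro χ
    set lam : G → AddCircle (1 : ℚ) := fun w =>
      if hw : w ∈ K then χ (Additive.ofMul ((QuotientGroup.mk (⟨w, hw⟩ : K)) :
        K ⧸ (⁅K, K⁆ ⊔ (⊤ : Subgroup G).lowerCentralSeries 2).subgroupOf K)) else 0 with hlamdef
    have hlam : ∀ a b : G, a ∈ K → b ∈ K → lam (a * b) = lam a + lam b := by
      intro a b ha hb
      rw [hlamdef]
      dsimp only
      rw [dif_pos (mul_mem ha hb), dif_pos ha, dif_pos hb]
      have hab : (⟨a * b, mul_mem ha hb⟩ : K) = ⟨a, ha⟩ * ⟨b, hb⟩ := rfl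
      rw [hab, QuotientGroup.mk_mul, ofMul_mul, map_add]
    have hlamN : ∀ w : G, w ∈ ⁅K, K⁆ ⊔ (⊤ : Subgroup G).lowerCentralSeries 2 → lam w = 0 := by
      intro w hw
      have hwK : w ∈ K := hNK hw
      rw [hlamdef]
      dsimp only
      rw [dif_pos hwK]
      have h1 : ((QuotientGroup.mk (⟨w, hwK⟩ : K)) :
          K ⧸ (⁅K, K⁆ ⊔ (⊤ : Subgroup G).lowerCentralSeries 2).subgroupOf K) = 1 :=
        (QuotientGroup.eq_one_iff _).2 (Subgroup.mem_subgroupOf.2 hw)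
      rw [h1, ofMul_one, map_zero]
    have lamK1 : lam 1 = 0 := by
      have h1 := hlam 1 1 K.one_mem K.one_mem
      rw [one_mul] at h1
      have h2 : lam 1 + lam 1 = lam 1 + 0 := by rw [add_zero, ← h1]
      exact add_left_cancel h2
    have lam_inv : ∀ w : G, w ∈ K → lam w⁻¹ = - lam w := by
      intro w hw
      have h1 := hlam w w⁻¹ hw (inv_mem hw)
      rw [mul_inv_cancel, lamK1] at h1
      exact eq_neg_of_add_eq_zero_right h1.symm
    have lam_zpow : ∀ w : G, w ∈ K → ∀ m : ℤ, lam (w ^ m) = m • lam w := by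
      intro w hw m
      induction m using Int.induction_on with
      | zero => rw [zpow_zero, zero_smul, lamK1]
      | succ n ih =>
          rw [zpow_add_one, hlam _ _ (zpow_mem hw _) hw, ih, add_smul, one_smul]
      | pred n ih =>
          rw [zpow_sub_one, hlam _ _ (zpow_mem hw _) (inv_mem hw), ih, lam_inv w hw, sub_smul,
            one_smul, sub_eq_add_neg]
    -- construct xi
    have hxi_ex : ∃ xi : AddCircle (1 : ℚ), ∀ z : ℤ, (x : G ⧸ K) ^ z = 1 → z • xi = lam (x ^ z) := by
      set Zs : AddSubgroup ℤ :=
        { carrier := {z : ℤ | (x : G ⧸ K) ^ z = 1}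
          zero_mem' := by simp
          add_mem' := by
            intro a b ha hb
            simp only [Set.mem_setOf_eq] at *
            rw [zpow_add, ha, hb, one_mul]
          neg_mem' := by
            intro a ha
            simp only [Set.mem_setOf_eq] at *
            rw [zpow_neg, ha, inv_one] } with hZdef
      have hmemZ : ∀ z : ℤ, ((x : G ⧸ K) ^ z = 1) ↔ z ∈ Zs := fun z => Iff.rfl
      obtain ⟨n0, hn0⟩ := Int.subgroup_cyclic Zs
      by_cases h00 : n0 = 0
      · refine ⟨0, fun z hz => ?_⟩
        have hzZ : z ∈ Zs := (hmemZ z).1 hz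
        rw [hn0, h00, AddSubgroup.mem_closure_singleton] at hzZ
        obtain ⟨m, hm⟩ := hzZ
        rw [smul_zero] at hm
        rw [← hm, zero_smul, zpow_zero, lamK1]
      · have hn0Z : (n0 : ℤ) ∈ Zs := by
          rw [hn0]
          exact AddSubgroup.mem_closure_singleton.2 ⟨1, one_smul _ _⟩
        have hxn0K : x ^ n0 ∈ K := by
          rw [← QuotientGroup.eq_one_iff, QuotientGroup.mk_zpow]
          exact (hmemZ n0).2 hn0Z
        refine ⟨DivisibleBy.div (lam (x ^ n0)) n0, fun z hz => ?_⟩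
        have hzZ : z ∈ Zs := (hmemZ z).1 hz
        rw [hn0, AddSubgroup.mem_closure_singleton] at hzZ
        obtain ⟨m, hm⟩ := hzZ
        have hdc : n0 • DivisibleBy.div (lam (x ^ n0)) n0 = lam (x ^ n0) :=
          DivisibleBy.div_cancel _ h00
        have h2 : (m • n0 : ℤ) = m * n0 := by simp
        rw [← hm, h2, mul_smul, hdc, ← lam_zpow _ hxn0K m, ← zpow_mul']
    obtain ⟨xi, hxi⟩ := hxi_ex
    have hfinal := core_vanish K x e lam xi hx he1 hlam hlamN hxi g hgK hg
    rw [hlamdef] at hfinal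
    dsimp only at hfinal
    rw [dif_pos hgK] at hfinal
    exact hfinal
  · intro hg
    exact easy_inclusion K hg
end

section
/- Let A be an abelian group and B ≤ A a subgroup with inclusion j: B → A and quotient map q: A → A/B. Let A∧A = (A⊗A)/⟨a⊗a : a ∈ A⟩ with a∧a' the class of a⊗a', let ν: A⊗B → A∧A be defined by ν(a⊗b) = a∧j(b), and let ℓ: A∧A → A⊗A be defined by ℓ(a∧a') = a⊗a' − a'⊗a. Then the kernel of the composite (q⊗id_A)∘ℓ: A∧A → (A/B)⊗A equals ν((q⊗id_B)^{-1}(Ker(id_{A/B}⊗j: (A/B)⊗B → (A/B)⊗A))), where q⊗id_B: A⊗B → (A/B)⊗B. (Equivalently, since Ker(id⊗j) = Im(τ) for the connecting homomorphism τ: Tor₁^ℤ(A/B, A/B) → (A/B)⊗B, this kernel is ν(q⊗id)^{-1}Im(τ).) -/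
open TensorProduct

section SquareLemmas

variable {M N M' N' : Type*} [AddCommGroup M] [AddCommGroup N]
  [AddCommGroup M'] [AddCommGroup N']

def sqSub (M : Type*) [AddCommGroup M] : Submodule ℤ (M ⊗[ℤ] M) :=
  Submodule.span ℤ {x : M ⊗[ℤ] M | ∃ m : M, x = m ⊗ₜ[ℤ] m}

def GoodSq (M : Type*) [AddCommGroup M] : Prop :=
  ∀ u : M ⊗[ℤ] M, TensorProduct.comm ℤ M M u = u → u ∈ sqSub M

lemma comm_map_apply (f : M →ₗ[ℤ] M') (g : N →ₗ[ℤ] N') (x : M ⊗[ℤ] N) :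
    TensorProduct.comm ℤ M' N' (TensorProduct.map f g x)
      = TensorProduct.map g f (TensorProduct.comm ℤ M N x) := by
  induction x with
  | zero => simp
  | tmul m n => simp
  | add a b ha hb => simp [map_add, ha, hb]

lemma map_sq_le (f : M →ₗ[ℤ] M') :
    Submodule.map (TensorProduct.map f f : M ⊗[ℤ] M →ₗ[ℤ] M' ⊗[ℤ] M') (sqSub M) ≤ sqSub M' := by
  rw [sqSub]; erw [Submodule.map_span]
  refine Submodule.span_le.mpr ?_
  rintro x ⟨y, ⟨m, rfl⟩, rfl⟩
  exact Submodule.subset_span ⟨f m, by simp⟩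

lemma add_comm_mem_sq (x : M ⊗[ℤ] M) : x + TensorProduct.comm ℤ M M x ∈ sqSub M := by
  induction x with
  | zero => simpa using Submodule.zero_mem (sqSub M)
  | tmul m n =>
    have h : (m ⊗ₜ[ℤ] n : M ⊗[ℤ] M) + n ⊗ₜ[ℤ] m
        = (m + n) ⊗ₜ[ℤ] (m + n) - m ⊗ₜ[ℤ] m - n ⊗ₜ[ℤ] n := by
      simp [tmul_add, add_tmul]; abel
    have h1 : ((m + n) ⊗ₜ[ℤ] (m + n) : M ⊗[ℤ] M) ∈ sqSub M :=
      Submodule.subset_span ⟨m + n, rfl⟩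
    have h2 : (m ⊗ₜ[ℤ] m : M ⊗[ℤ] M) ∈ sqSub M := Submodule.subset_span ⟨m, rfl⟩
    have h3 : (n ⊗ₜ[ℤ] n : M ⊗[ℤ] M) ∈ sqSub M := Submodule.subset_span ⟨n, rfl⟩
    simpa [h] using Submodule.sub_mem _ (Submodule.sub_mem _ h1 h2) h3
  | add a b ha hb =>
    have h : (a + b) + TensorProduct.comm ℤ M M (a + b)
        = (a + TensorProduct.comm ℤ M M a) + (b + TensorProduct.comm ℤ M M b) := by
      simp [map_add]; abel
    rw [h]; exact Submodule.add_mem _ ha hb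

lemma goodSq_of_addEquiv (e : M ≃+ M') (hM : GoodSq M) : GoodSq M' := by
  intro u hu
  set f : M →ₗ[ℤ] M' := e.toAddMonoidHom.toIntLinearMap with hf
  set g : M' →ₗ[ℤ] M := e.symm.toAddMonoidHom.toIntLinearMap with hg
  have hfg : f.comp g = LinearMap.id := by ext x; simp [hf, hg]
  set v : M ⊗[ℤ] M := TensorProduct.map g g u with hv
  have hvsymm : TensorProduct.comm ℤ M M v = v := by rw [hv, comm_map_apply, hu]
  have hums : u = TensorProduct.map f f v := by
    rw [hv, ← LinearMap.comp_apply, ← TensorProduct.map_comp, hfg, TensorProduct.map_id,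
      LinearMap.id_apply]
  rw [hums]
  exact map_sq_le f ⟨v, hM v hvsymm, rfl⟩

lemma mem_sq_all (h : ∀ x : M ⊗[ℤ] M, (∃ m n : M, m ⊗ₜ[ℤ] n = x) → x ∈ sqSub M)
    (u : M ⊗[ℤ] M) : u ∈ sqSub M := by
  have hu : u ∈ Submodule.span ℤ {t : M ⊗[ℤ] M | ∃ m n : M, m ⊗ₜ[ℤ] n = t} := by
    erw [TensorProduct.span_tmul_eq_top ℤ M M]; exact Submodule.mem_top
  refine Submodule.span_induction (fun x hx => h x hx) (Submodule.zero_mem _)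
    (fun x y _ _ hx hy => Submodule.add_mem _ hx hy)
    (fun a x _ hx => Submodule.smul_mem _ a hx) hu

lemma goodSq_of_cyclic (g : M) (hg : ∀ x : M, ∃ n : ℤ, n • g = x) : GoodSq M := by
  intro u _
  refine mem_sq_all ?_ u
  rintro x ⟨m, n, rfl⟩
  obtain ⟨a, ha⟩ := hg m
  obtain ⟨b, hb⟩ := hg n
  have hgg : (g ⊗ₜ[ℤ] g : M ⊗[ℤ] M) ∈ sqSub M := Submodule.subset_span ⟨g, rfl⟩
  have : (m ⊗ₜ[ℤ] n : M ⊗[ℤ] M) = (a * b) • (g ⊗ₜ[ℤ] g) := by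
    rw [← ha, ← hb, smul_tmul_smul]
  rw [this]
  exact Submodule.smul_mem _ _ hgg

lemma goodSq_of_subsingleton [Subsingleton M] : GoodSq M := by
  intro u _
  refine mem_sq_all ?_ u
  rintro x ⟨m, n, rfl⟩
  rw [Subsingleton.elim m 0, TensorProduct.zero_tmul]
  exact Submodule.zero_mem _


lemma goodSq_prod (hM : GoodSq M) (hN : GoodSq N) : GoodSq (M × N) := by
  intro u hu
  set a : (M × N) →ₗ[ℤ] (M × N) :=
    (AddMonoidHom.inl M N).toIntLinearMap.comp (AddMonoidHom.fst M N).toIntLinearMap with ha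
  set b : (M × N) →ₗ[ℤ] (M × N) :=
    (AddMonoidHom.inr M N).toIntLinearMap.comp (AddMonoidHom.snd M N).toIntLinearMap with hb
  have hab : a + b = LinearMap.id := by
    refine LinearMap.ext fun x => ?_
    simp only [LinearMap.add_apply, LinearMap.comp_apply, AddMonoidHom.coe_toIntLinearMap,
      AddMonoidHom.inl_apply, AddMonoidHom.inr_apply, LinearMap.id_apply, ha, hb]
    exact Prod.ext (by simp) (by simp)
  have hu4 : TensorProduct.map a a u + TensorProduct.map a b u
      + TensorProduct.map b a u + TensorProduct.map b b u = u := by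
    have h1 : TensorProduct.map (a + b) (a + b) u
        = TensorProduct.map a a u + TensorProduct.map a b u
          + TensorProduct.map b a u + TensorProduct.map b b u := by
      rw [TensorProduct.map_add_left, TensorProduct.map_add_right, TensorProduct.map_add_right]
      simp only [LinearMap.add_apply]
      abel
    rw [← h1, hab, TensorProduct.map_id, LinearMap.id_apply]
  have hdiag : ∀ (i : M →+ M × N) (p : (M × N) →+ M),
      TensorProduct.map (i.toIntLinearMap.comp p.toIntLinearMap)
        (i.toIntLinearMap.comp p.toIntLinearMap) u ∈ sqSub (M × N) := by
    intro i p
    rw [TensorProduct.map_comp, LinearMap.comp_apply]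
    have h2 : TensorProduct.comm ℤ M M (TensorProduct.map p.toIntLinearMap p.toIntLinearMap u)
        = TensorProduct.map p.toIntLinearMap p.toIntLinearMap u := by
      rw [comm_map_apply, hu]
    exact map_sq_le i.toIntLinearMap ⟨_, hM _ h2, rfl⟩
  have hdiag' : ∀ (i : N →+ M × N) (p : (M × N) →+ N),
      TensorProduct.map (i.toIntLinearMap.comp p.toIntLinearMap)
        (i.toIntLinearMap.comp p.toIntLinearMap) u ∈ sqSub (M × N) := by
    intro i p
    rw [TensorProduct.map_comp, LinearMap.comp_apply]
    have h2 : TensorProduct.comm ℤ N N (TensorProduct.map p.toIntLinearMap p.toIntLinearMap u)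
        = TensorProduct.map p.toIntLinearMap p.toIntLinearMap u := by
      rw [comm_map_apply, hu]
    exact map_sq_le i.toIntLinearMap ⟨_, hN _ h2, rfl⟩
  have hcross : TensorProduct.map a b u + TensorProduct.map b a u ∈ sqSub (M × N) := by
    have h2 : TensorProduct.map b a u = TensorProduct.comm ℤ (M × N) (M × N)
        (TensorProduct.map a b u) := by
      rw [comm_map_apply, hu]
    rw [h2]; exact add_comm_mem_sq _
  have d1 := hdiag (AddMonoidHom.inl M N) (AddMonoidHom.fst M N)
  have d2 := hdiag' (AddMonoidHom.inr M N) (AddMonoidHom.snd M N)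
  rw [← hu4]
  have hregroup : TensorProduct.map a a u + TensorProduct.map a b u
      + TensorProduct.map b a u + TensorProduct.map b b u
      = (TensorProduct.map a a u + TensorProduct.map b b u)
        + (TensorProduct.map a b u + TensorProduct.map b a u) := by abel
  rw [hregroup]
  exact Submodule.add_mem _ (Submodule.add_mem _ d1 d2) hcross


lemma comm_fix_sq {x : M ⊗[ℤ] M} (hx : x ∈ sqSub M) :
    TensorProduct.comm ℤ M M x = x := by
  refine Submodule.span_induction ?_ ?_ ?_ ?_ hx
  · rintro x ⟨m, rfl⟩; simp
  · simp
  · intro a b _ _ ha hb; simp [map_add, ha, hb]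
  · intro n a _ ha; simp [map_smul, ha]

end SquareLemmas

universe u v

lemma goodSq_pi {ι : Type u} [Finite ι] :
    ∀ (N : ι → Type v) (_ : ∀ i, AddCommGroup (N i)),
      (∀ i, GoodSq (N i)) → GoodSq (∀ i, N i) := by
  refine Finite.induction_empty_option
    (P := fun (α : Type u) => ∀ (N : α → Type v) (_ : ∀ i, AddCommGroup (N i)),
      (∀ i, GoodSq (N i)) → GoodSq (∀ i, N i)) ?_ ?_ ?_ ι
  · intro α β e hα N instN hN
    have h1 : GoodSq (∀ a : α, N (e a)) := hα (fun a => N (e a)) (fun a => instN (e a))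
      (fun a => hN (e a))
    exact goodSq_of_addEquiv (LinearEquiv.piCongrLeft ℤ N e).toAddEquiv h1
  · intro N instN _
    haveI : Subsingleton (∀ i, N i) := ⟨fun f g => funext fun i => i.elim⟩
    exact goodSq_of_subsingleton
  · intro α _ hα N instN hN
    have h1 : GoodSq ((∀ a : α, N (some a)) × N none) :=
      goodSq_prod (hα (fun a => N (some a)) (fun a => instN (some a)) (fun a => hN (some a)))
        (hN none)
    have e : (N none × ∀ a : α, N (some a)) ≃+ (∀ i, N i) :=
      (LinearEquiv.piOptionEquivProd ℤ (M := N)).toAddEquiv.symm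
    exact goodSq_of_addEquiv (e.trans (AddEquiv.refl _) |>.symm.symm)
      (goodSq_of_addEquiv (AddEquiv.prodComm) h1)

lemma goodSq_int : GoodSq ℤ :=
  goodSq_of_cyclic 1 (fun x => ⟨x, by simp⟩)

lemma goodSq_int_quot (I : Submodule ℤ ℤ) : GoodSq (ℤ ⧸ I) := by
  refine goodSq_of_cyclic (Submodule.Quotient.mk 1) (fun x => ?_)
  obtain ⟨y, rfl⟩ := Submodule.Quotient.mk_surjective I x
  refine ⟨y, ?_⟩
  have : (y : ℤ) • (Submodule.Quotient.mk (1 : ℤ) : ℤ ⧸ I)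
      = Submodule.Quotient.mk (y • (1 : ℤ)) := (map_zsmul I.mkQ y 1).symm
  rw [this, smul_eq_mul, mul_one]

lemma goodSq_of_moduleFinite (M : Type v) [AddCommGroup M] [Module ℤ M]
    [Module.Finite ℤ M] : GoodSq M := by
  obtain ⟨n, ι, fι, p, hp, e, ⟨f⟩⟩ := Module.equiv_free_prod_directSum (R := ℤ) (M := M)
  haveI := fι
  haveI := Classical.decEq ι
  have G1 : GoodSq (Fin n →₀ ℤ) := by
    have hpi : GoodSq (Fin n → ℤ) := goodSq_pi (fun _ => ℤ) (fun _ => inferInstance)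
      (fun _ => goodSq_int)
    exact goodSq_of_addEquiv (Finsupp.linearEquivFunOnFinite ℤ ℤ (Fin n)).toAddEquiv.symm hpi
  have G2 : GoodSq (DirectSum ι fun i => ℤ ⧸ ℤ ∙ p i ^ e i) := by
    have hpi : GoodSq (∀ i : ι, ℤ ⧸ ℤ ∙ p i ^ e i) := goodSq_pi _ (fun _ => inferInstance)
      (fun i => goodSq_int_quot _)
    exact goodSq_of_addEquiv
      (DirectSum.linearEquivFunOnFintype ℤ ι (fun i => ℤ ⧸ ℤ ∙ p i ^ e i)).toAddEquiv.symm hpi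
  exact goodSq_of_addEquiv f.toAddEquiv.symm (goodSq_prod G1 G2)


section FiniteStage

variable {M N : Type*} [AddCommGroup M] [AddCommGroup N]

/-- Finite stage lemma, right-hand version: a vanishing sum of pure tensors already vanishes
with second components in a finitely generated subgroup. -/
lemma exists_fg_right {ι : Type*} [Fintype ι] (x : ι → M) (y : ι → N)
    (h : ∑ i : ι, x i ⊗ₜ[ℤ] y i = (0 : M ⊗[ℤ] N)) :
    ∃ (S : Finset N) (hy : ∀ i, y i ∈ AddSubgroup.closure (S : Set N)),
      ∑ i : ι, x i ⊗ₜ[ℤ] (⟨y i, hy i⟩ : AddSubgroup.closure (S : Set N))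
        = (0 : M ⊗[ℤ] (AddSubgroup.closure (S : Set N))) := by
  classical
  set p : (N →₀ ℤ) →ₗ[ℤ] N := Finsupp.linearCombination ℤ id with hpdef
  have hp : Function.Surjective p := fun n =>
    ⟨Finsupp.single n 1, by simp [hpdef]⟩
  set e0 : M ⊗[ℤ] (N →₀ ℤ) := ∑ i : ι, x i ⊗ₜ[ℤ] Finsupp.single (y i) 1 with he0def
  have he0 : LinearMap.lTensor M p e0 = 0 := by
    rw [he0def, map_sum]
    simpa [hpdef] using h
  have hex : Function.Exact (LinearMap.lTensor M (LinearMap.ker p).subtype)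
      (LinearMap.lTensor M p) :=
    lTensor_exact M p.exact_subtype_ker_map hp
  obtain ⟨k, hk⟩ := (hex e0).mp he0
  obtain ⟨t, ht⟩ := TensorProduct.exists_finset k
  set S : Finset N := Finset.image y Finset.univ ∪
      t.sup (fun j => (j.2 : N →₀ ℤ).support) with hSdef
  set H : AddSubgroup N := AddSubgroup.closure (S : Set N) with hHdef
  have hy : ∀ i, y i ∈ H := by
    intro i
    refine AddSubgroup.subset_closure ?_
    have : y i ∈ S := Finset.mem_union_left _ (Finset.mem_image.mpr ⟨i, Finset.mem_univ i, rfl⟩)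
    exact this
  have hsupp : ∀ j ∈ t, ∀ n ∈ ((j.2 : ↥(LinearMap.ker p)) : N →₀ ℤ).support, (n : N) ∈ H := by
    intro j hj n hn
    refine AddSubgroup.subset_closure ?_
    simp only [hSdef, Finset.coe_union, Set.mem_union, Finset.mem_coe]
    exact Or.inr (Finset.mem_sup.mpr ⟨j, hj, hn⟩)
  set g : N → ↥H := fun n => if h : n ∈ H then (⟨n, h⟩ : ↥H) else 0 with hgdef
  set φ : (N →₀ ℤ) →ₗ[ℤ] ↥H := Finsupp.linearCombination ℤ g with hφdef
  have hφcoe : ∀ r : N →₀ ℤ, (∀ n ∈ r.support, n ∈ H) →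
      ((φ r : ↥H) : N) = p r := by
    intro r hr
    have h1 : ((φ r : ↥H) : N) = H.subtype.toIntLinearMap (φ r) := rfl
    rw [h1, hφdef, Finsupp.apply_linearCombination]
    rw [hpdef, Finsupp.linearCombination_apply, Finsupp.linearCombination_apply]
    refine Finsupp.sum_congr ?_
    intro n hn
    simp [hgdef, dif_pos (hr n hn)]
  have hφsingle : ∀ i, φ (Finsupp.single (y i) 1) = (⟨y i, hy i⟩ : ↥H) := by
    intro i
    rw [hφdef, Finsupp.linearCombination_single, one_smul, hgdef]
    exact dif_pos (hy i)
  refine ⟨S, hy, ?_⟩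
  have key : LinearMap.lTensor M φ e0 = ∑ i : ι, x i ⊗ₜ[ℤ] (⟨y i, hy i⟩ : ↥H) := by
    rw [he0def, map_sum]
    refine Finset.sum_congr rfl fun i _ => ?_
    rw [LinearMap.lTensor_tmul, hφsingle]
  rw [← key, ← hk, ← LinearMap.comp_apply, ← LinearMap.lTensor_comp, ht, map_sum]
  refine Finset.sum_eq_zero fun j hj => ?_
  rw [LinearMap.lTensor_tmul, LinearMap.comp_apply]
  have hz : φ ((LinearMap.ker p).subtype j.2) = 0 := by
    have hcoe : ((φ ((LinearMap.ker p).subtype j.2) : ↥H) : N)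
        = p ((LinearMap.ker p).subtype j.2) := hφcoe _ (fun n hn => hsupp j hj n hn)
    have hker : p ((LinearMap.ker p).subtype j.2) = 0 := j.2.2
    exact Subtype.ext (by rw [hcoe, hker]; rfl)
  rw [hz, TensorProduct.tmul_zero]

/-- Finite stage lemma, left-hand version. -/
lemma exists_fg_left {ι : Type*} [Fintype ι] (x : ι → M) (y : ι → N)
    (h : ∑ i : ι, x i ⊗ₜ[ℤ] y i = (0 : M ⊗[ℤ] N)) :
    ∃ (S : Finset M) (hx : ∀ i, x i ∈ AddSubgroup.closure (S : Set M)),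
      ∑ i : ι, (⟨x i, hx i⟩ : AddSubgroup.closure (S : Set M)) ⊗ₜ[ℤ] y i
        = (0 : (AddSubgroup.closure (S : Set M)) ⊗[ℤ] N) := by
  have h' : ∑ i : ι, y i ⊗ₜ[ℤ] x i = (0 : N ⊗[ℤ] M) := by
    have := congrArg (TensorProduct.comm ℤ M N) h
    simpa [map_sum] using this
  obtain ⟨S, hx, hS⟩ := exists_fg_right y x h'
  refine ⟨S, hx, ?_⟩
  have := congrArg (TensorProduct.comm ℤ N (AddSubgroup.closure (S : Set M))) hS
  simpa [map_sum] using this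


end FiniteStage

section BigLemma
variable {M N : Type*} [AddCommGroup M] [AddCommGroup N]

/-- **Every symmetric element of `C ⊗ C` is a sum of squares.** -/
theorem goodSq_all (C : Type*) [AddCommGroup C] : GoodSq C := by
  classical
  intro u hu
  obtain ⟨sp, hsp⟩ := TensorProduct.exists_finset u
  set x : (↥sp ⊕ ↥sp) → C := Sum.elim (fun j => (j : C × C).1) (fun j => -(j : C × C).2) with hx
  set y : (↥sp ⊕ ↥sp) → C := Sum.elim (fun j => (j : C × C).2) (fun j => (j : C × C).1) with hy
  have hcommu : TensorProduct.comm ℤ C C u = ∑ p ∈ sp, p.2 ⊗ₜ[ℤ] p.1 := by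
    rw [hsp, map_sum]
    exact Finset.sum_congr rfl fun p _ => rfl
  have hsum : ∑ i : ↥sp ⊕ ↥sp, x i ⊗ₜ[ℤ] y i = (0 : C ⊗[ℤ] C) := by
    rw [Fintype.sum_sum_type]
    have h1 : ∑ j : ↥sp, x (Sum.inl j) ⊗ₜ[ℤ] y (Sum.inl j) = u := by
      rw [hsp, ← Finset.sum_coe_sort sp (fun p => p.1 ⊗ₜ[ℤ] p.2)]
      exact Finset.sum_congr rfl fun j _ => rfl
    have h2 : ∑ j : ↥sp, x (Sum.inr j) ⊗ₜ[ℤ] y (Sum.inr j) = -u := by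
      have : ∀ j : ↥sp, x (Sum.inr j) ⊗ₜ[ℤ] y (Sum.inr j)
          = -((j : C × C).2 ⊗ₜ[ℤ] (j : C × C).1) := by
        intro j; rw [hx, hy]; simp [TensorProduct.neg_tmul]
      rw [Finset.sum_congr rfl fun j _ => this j, Finset.sum_neg_distrib,
        Finset.sum_coe_sort sp (fun p => p.2 ⊗ₜ[ℤ] p.1), ← hcommu, hu]
    rw [h1, h2, add_neg_cancel]
  obtain ⟨S₂, hy₂, eq₂⟩ := exists_fg_right x y hsum
  obtain ⟨S₁, hx₁, eq₁⟩ := exists_fg_left (fun i => x i)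
    (fun i => (⟨y i, hy₂ i⟩ : AddSubgroup.closure (S₂ : Set C))) eq₂
  set H₁ := AddSubgroup.closure (S₁ : Set C) with hH₁
  set H₂ := AddSubgroup.closure (S₂ : Set C) with hH₂
  set K := AddSubgroup.closure ((S₁ ∪ S₂ : Finset C) : Set C) with hK
  have h1K : H₁ ≤ K := by
    rw [hH₁, hK]; exact AddSubgroup.closure_mono (by simp)
  have h2K : H₂ ≤ K := by
    rw [hH₂, hK]; exact AddSubgroup.closure_mono (by simp)
  have hxK : ∀ i, x i ∈ K := fun i => h1K (hx₁ i)
  have hyK : ∀ i, y i ∈ K := fun i => h2K (hy₂ i)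
  -- push eq₁ into K ⊗ K
  have eqK : ∑ i : ↥sp ⊕ ↥sp, (⟨x i, hxK i⟩ : ↥K) ⊗ₜ[ℤ] (⟨y i, hyK i⟩ : ↥K) = (0 : ↥K ⊗[ℤ] ↥K) := by
    have := congrArg (TensorProduct.map (AddSubgroup.inclusion h1K).toIntLinearMap
      (AddSubgroup.inclusion h2K).toIntLinearMap) eq₁
    rw [map_sum, map_zero] at this
    rw [← this]
    exact Finset.sum_congr rfl fun i _ => rfl
  set v : ↥K ⊗[ℤ] ↥K := ∑ j : ↥sp,
    (⟨x (Sum.inl j), hxK _⟩ : ↥K) ⊗ₜ[ℤ] (⟨y (Sum.inl j), hyK _⟩ : ↥K) with hv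
  have hvsymm : TensorProduct.comm ℤ ↥K ↥K v = v := by
    have hcv : TensorProduct.comm ℤ ↥K ↥K v = ∑ j : ↥sp,
        (⟨y (Sum.inl j), hyK _⟩ : ↥K) ⊗ₜ[ℤ] (⟨x (Sum.inl j), hxK _⟩ : ↥K) := by
      rw [hv, map_sum]; exact Finset.sum_congr rfl fun j _ => rfl
    have hneg : ∀ j : ↥sp, (⟨x (Sum.inr j), hxK _⟩ : ↥K) ⊗ₜ[ℤ] (⟨y (Sum.inr j), hyK _⟩ : ↥K)
        = -((⟨y (Sum.inl j), hyK _⟩ : ↥K) ⊗ₜ[ℤ] (⟨x (Sum.inl j), hxK _⟩ : ↥K)) := by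
      intro j
      have hxj : (⟨x (Sum.inr j), hxK _⟩ : ↥K) = -(⟨y (Sum.inl j), hyK _⟩ : ↥K) := by
        apply Subtype.ext; simp [hx, hy]
      have hyj : (⟨y (Sum.inr j), hyK _⟩ : ↥K) = (⟨x (Sum.inl j), hxK _⟩ : ↥K) := by
        apply Subtype.ext; simp [hx, hy]
      rw [hxj, hyj, TensorProduct.neg_tmul]
    have h0 : v - TensorProduct.comm ℤ ↥K ↥K v = 0 := by
      rw [hcv, sub_eq_add_neg, ← Finset.sum_neg_distrib]
      rw [← Finset.sum_congr rfl fun j _ => hneg j]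
      rw [hv, ← Fintype.sum_sum_type
        (fun i : ↥sp ⊕ ↥sp => (⟨x i, hxK i⟩ : ↥K) ⊗ₜ[ℤ] (⟨y i, hyK i⟩ : ↥K))]
      exact eqK
    have := sub_eq_zero.mp h0
    exact this.symm
  haveI : AddGroup.FG ↥K := by rw [hK]; infer_instance
  haveI : Module.Finite ℤ ↥K := Module.Finite.iff_addGroup_fg.mpr inferInstance
  have hvsq : v ∈ sqSub ↥K := goodSq_of_moduleFinite ↥K v hvsymm
  have humap : u = TensorProduct.map K.subtype.toIntLinearMap K.subtype.toIntLinearMap v := by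
    rw [hv, map_sum, hsp, ← Finset.sum_coe_sort sp (fun p => p.1 ⊗ₜ[ℤ] p.2)]
    exact Finset.sum_congr rfl fun j _ => rfl
  rw [humap]
  exact map_sq_le K.subtype.toIntLinearMap ⟨v, hvsq, rfl⟩

end BigLemma

/-- The exterior square `A ∧ A` of an abelian group: the quotient of `A ⊗ A` by the
subgroup generated by the elements `a ⊗ a`. -/
abbrev wedgeSquare (A : Type*) [AddCommGroup A] :=
  (A ⊗[ℤ] A) ⧸ Submodule.span ℤ {x : A ⊗[ℤ] A | ∃ a : A, x = a ⊗ₜ[ℤ] a}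


/-- **Lemma 2.7**: let `B ≤ A` be abelian groups, `q : A → A/B` the quotient map,
`j : B → A` the inclusion, `ν : A ⊗ B → A ∧ A`, `a ⊗ b ↦ a ∧ b`, and
`ℓ : A ∧ A → A ⊗ A`, `a ∧ a' ↦ a ⊗ a' - a' ⊗ a`.  Then
`Ker((q ⊗ id_A) ∘ ℓ) = ν((q ⊗ id_B)⁻¹(Ker(id_{A/B} ⊗ j)))`. -/
theorem wedge_kernel_lemma {A : Type*} [AddCommGroup A] (B : AddSubgroup A)
    (ν : (A ⊗[ℤ] B) →ₗ[ℤ] wedgeSquare A)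
    (hν : ∀ (a : A) (b : B), ν (a ⊗ₜ[ℤ] b) = Submodule.Quotient.mk (a ⊗ₜ[ℤ] (b : A)))
    (ℓ : wedgeSquare A →ₗ[ℤ] A ⊗[ℤ] A)
    (hℓ : ∀ a a' : A,
      ℓ (Submodule.Quotient.mk (a ⊗ₜ[ℤ] a')) = a ⊗ₜ[ℤ] a' - a' ⊗ₜ[ℤ] a) :
    LinearMap.ker
        ((TensorProduct.map (QuotientAddGroup.mk' B).toIntLinearMap
          (LinearMap.id : A →ₗ[ℤ] A)).comp ℓ) =
      Submodule.map ν
        (Submodule.comap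
          (TensorProduct.map (QuotientAddGroup.mk' B).toIntLinearMap
            (LinearMap.id : (B : Type _) →ₗ[ℤ] B))
          (LinearMap.ker
            (TensorProduct.map (LinearMap.id : (A ⧸ B) →ₗ[ℤ] A ⧸ B)
              B.subtype.toIntLinearMap))) := by
  classical
  set q : A →ₗ[ℤ] (A ⧸ B) := (QuotientAddGroup.mk' B).toIntLinearMap with hq
  set jB : (B : Type _) →ₗ[ℤ] A := B.subtype.toIntLinearMap with hjB
  set D : Submodule ℤ (A ⊗[ℤ] A) :=
    Submodule.span ℤ {x : A ⊗[ℤ] A | ∃ a : A, x = a ⊗ₜ[ℤ] a} with hD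
  have hDsq : D = sqSub A := rfl
  set F : A ⊗[ℤ] A →ₗ[ℤ] (A ⧸ B) ⊗[ℤ] A :=
    TensorProduct.map q (LinearMap.id : A →ₗ[ℤ] A) with hF
  set G : A ⊗[ℤ] A →ₗ[ℤ] A ⊗[ℤ] (A ⧸ B) :=
    TensorProduct.map (LinearMap.id : A →ₗ[ℤ] A) q with hG
  set JA : A ⊗[ℤ] (B : Type _) →ₗ[ℤ] A ⊗[ℤ] A :=
    TensorProduct.map (LinearMap.id : A →ₗ[ℤ] A) jB with hJA
  set P : A ⊗[ℤ] (B : Type _) →ₗ[ℤ] (A ⧸ B) ⊗[ℤ] (B : Type _) :=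
    TensorProduct.map q (LinearMap.id : (B : Type _) →ₗ[ℤ] B) with hP
  set Mm : (A ⧸ B) ⊗[ℤ] (B : Type _) →ₗ[ℤ] (A ⧸ B) ⊗[ℤ] A :=
    TensorProduct.map (LinearMap.id : (A ⧸ B) →ₗ[ℤ] A ⧸ B) jB with hMm
  have hqj : ∀ b : (B : Type _), q (jB b) = 0 := by
    intro b
    have : (jB b : A) ∈ B := b.2
    simpa [hq, hjB] using (QuotientAddGroup.eq_zero_iff _).mpr this
  have hsurjq : Function.Surjective q := fun c => QuotientAddGroup.mk'_surjective B c
  have hjq : Function.Exact jB q := by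
    intro a
    constructor
    · intro ha
      have : a ∈ B := (QuotientAddGroup.eq_zero_iff _).mp ha
      exact ⟨⟨a, this⟩, rfl⟩
    · rintro ⟨b, rfl⟩; exact hqj b
  -- composite identities
  have cFJ : F.comp JA = Mm.comp P := by
    apply TensorProduct.ext'
    intro a b
    rfl
  have cGJ : G.comp JA = 0 := by
    apply TensorProduct.ext'
    intro a b
    show (a ⊗ₜ[ℤ] q (jB b) : A ⊗[ℤ] (A ⧸ B)) = 0
    rw [hqj b, TensorProduct.tmul_zero]
  have cQQ : (TensorProduct.map (LinearMap.id : (A ⧸ B) →ₗ[ℤ] A ⧸ B) q).comp F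
      = TensorProduct.map q q := by
    apply TensorProduct.ext'
    intro a a'
    rfl
  have hFcomm : ∀ w : A ⊗[ℤ] A,
      F (TensorProduct.comm ℤ A A w) = TensorProduct.comm ℤ A (A ⧸ B) (G w) :=
    fun w => (comm_map_apply (LinearMap.id : A →ₗ[ℤ] A) q w).symm
  have hGcomm : ∀ w : A ⊗[ℤ] A,
      G (TensorProduct.comm ℤ A A w) = TensorProduct.comm ℤ (A ⧸ B) A (F w) :=
    fun w => (comm_map_apply q (LinearMap.id : A →ₗ[ℤ] A) w).symm
  -- ℓ and ν descriptions
  have hℓmk : ∀ t : A ⊗[ℤ] A, ℓ (Submodule.Quotient.mk t) = t - TensorProduct.comm ℤ A A t := by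
    intro t
    induction t with
    | zero =>
      have : (Submodule.Quotient.mk (0 : A ⊗[ℤ] A) : wedgeSquare A) = 0 := rfl
      simp [this]
    | tmul a a' => rw [hℓ]; simp
    | add s t hs ht =>
      have : (Submodule.Quotient.mk (s + t) : wedgeSquare A)
          = Submodule.Quotient.mk s + Submodule.Quotient.mk t := rfl
      rw [this, map_add, hs, ht, map_add]
      abel
  have hνmk : ∀ z : A ⊗[ℤ] (B : Type _), ν z = Submodule.Quotient.mk (JA z) := by
    intro z
    induction z with
    | zero => simp
    | tmul a b =>
      rw [hν]
      rfl
    | add s t hs ht =>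
      rw [map_add, hs, ht, map_add]
      rfl
  -- exactness
  have hexA : Function.Exact (LinearMap.lTensor A jB) (LinearMap.lTensor A q) :=
    lTensor_exact A hjq hsurjq
  have hexC : Function.Exact (LinearMap.lTensor (A ⧸ B) jB) (LinearMap.lTensor (A ⧸ B) q) :=
    lTensor_exact (A ⧸ B) hjq hsurjq
  have hlA_j : LinearMap.lTensor A jB = JA := rfl
  have hlA_q : LinearMap.lTensor A q = G := rfl
  apply le_antisymm
  · -- ker ⊆ image
    intro w hw
    rw [LinearMap.mem_ker] at hw; erw [LinearMap.comp_apply] at hw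
    obtain ⟨t, rfl⟩ := Submodule.Quotient.mk_surjective D w
    erw [hℓmk] at hw; rw [map_sub] at hw
    have hker : F t = F (TensorProduct.comm ℤ A A t) := by
      have := sub_eq_zero.mp hw; exact this
    set u : (A ⧸ B) ⊗[ℤ] (A ⧸ B) := TensorProduct.map q q t with hu
    have husymm : TensorProduct.comm ℤ (A ⧸ B) (A ⧸ B) u = u := by
      rw [hu, comm_map_apply]
      have h1 : TensorProduct.map q q (TensorProduct.comm ℤ A A t)
          = (TensorProduct.map (LinearMap.id : (A ⧸ B) →ₗ[ℤ] A ⧸ B) q)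
            (F (TensorProduct.comm ℤ A A t)) := by
        exact (LinearMap.congr_fun cQQ _).symm
      have h2 : TensorProduct.map q q t
          = (TensorProduct.map (LinearMap.id : (A ⧸ B) →ₗ[ℤ] A ⧸ B) q) (F t) := by
        exact (LinearMap.congr_fun cQQ _).symm
      rw [h1, ← hker, ← h2]
    have hu_sq : u ∈ sqSub (A ⧸ B) := goodSq_all (A ⧸ B) u husymm
    have hDle : sqSub (A ⧸ B) ≤ Submodule.map (TensorProduct.map q q) D := by
      refine Submodule.span_le.mpr ?_
      rintro x ⟨c, rfl⟩
      obtain ⟨a, rfl⟩ := hsurjq c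
      exact ⟨a ⊗ₜ[ℤ] a, Submodule.subset_span ⟨a, rfl⟩, by simp⟩
    obtain ⟨d, hdD, hdu⟩ := hDle hu_sq
    have hdsymm : TensorProduct.comm ℤ A A d = d := comm_fix_sq (hDsq ▸ hdD)
    set t₁ : A ⊗[ℤ] A := t - d with ht₁
    have ht₁qq : TensorProduct.map q q t₁ = 0 := by
      rw [ht₁, map_sub, hdu, ← hu, sub_self]
    have hker₁ : F t₁ = F (TensorProduct.comm ℤ A A t₁) := by
      rw [ht₁, map_sub, map_sub, map_sub, hdsymm, hker]
    -- F t₁ lies in the image of lTensor (A⧸B) jB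
    have hFt₁ : (LinearMap.lTensor (A ⧸ B) q) (F t₁) = 0 := by
      have : LinearMap.lTensor (A ⧸ B) q
          = TensorProduct.map (LinearMap.id : (A ⧸ B) →ₗ[ℤ] A ⧸ B) q := rfl
      rw [this]; exact (LinearMap.congr_fun cQQ t₁).trans ht₁qq
    obtain ⟨g₀, hg₀⟩ := (hexC (F t₁)).mp hFt₁
    obtain ⟨zh, hzh⟩ := LinearMap.rTensor_surjective (B : Type _) (g := q) hsurjq g₀
    have hPzh : P zh = g₀ := by rw [← hzh]; rfl
    set y : A ⊗[ℤ] A := JA zh with hy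
    have hyG : G y = 0 := by
      rw [hy, ← LinearMap.comp_apply, cGJ]; rfl
    have hyF : F y = F t₁ := by
      rw [hy, ← LinearMap.comp_apply, cFJ, LinearMap.comp_apply, hPzh]
      rw [← hg₀]
      rfl
    set t' : A ⊗[ℤ] A := (t₁ - y) - TensorProduct.comm ℤ A A y with ht'
    have hFt' : F t' = 0 := by
      rw [ht', map_sub, map_sub, hyF, hFcomm, hyG, map_zero, sub_self, sub_zero]
    have hGt' : G t' = 0 := by
      rw [ht', map_sub, map_sub, hyG, sub_zero]
      have h1 : G (TensorProduct.comm ℤ A A y)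
          = (TensorProduct.comm ℤ (A ⧸ B) A) (F y) := hGcomm y
      have hinv : ∀ z : A ⊗[ℤ] (A ⧸ B),
          TensorProduct.comm ℤ (A ⧸ B) A (TensorProduct.comm ℤ A (A ⧸ B) z) = z := by
        intro z
        induction z with
        | zero => simp
        | tmul a c => simp
        | add s t hs ht => simp [map_add, hs, ht]
      have h2 : G t₁ = (TensorProduct.comm ℤ (A ⧸ B) A) (F t₁) := by
        have h3 : TensorProduct.comm ℤ A (A ⧸ B) (G t₁) = F (TensorProduct.comm ℤ A A t₁) :=
          (hFcomm t₁).symm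
        rw [← hker₁] at h3
        rw [← h3, hinv]
      rw [h1, h2, hyF, sub_self]
    -- conclude
    have hmk : (Submodule.Quotient.mk t' : wedgeSquare A) = Submodule.Quotient.mk t := by
      rw [Submodule.Quotient.eq]
      have : t' - t = -(d + (y + TensorProduct.comm ℤ A A y)) := by
        rw [ht', ht₁]; abel
      rw [this]
      refine Submodule.neg_mem _ (Submodule.add_mem _ hdD ?_)
      exact add_comm_mem_sq y
    obtain ⟨x₀, hx₀⟩ := (hexA t').mp (by rw [hlA_q]; exact hGt')
    rw [hlA_j] at hx₀
    have hmem : x₀ ∈ Submodule.comap P (LinearMap.ker Mm) := by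
      rw [Submodule.mem_comap, LinearMap.mem_ker]
      have : Mm (P x₀) = F (JA x₀) := by rw [← LinearMap.comp_apply, ← cFJ]; rfl
      rw [this]; erw [hx₀]; exact hFt'
    exact ⟨x₀, hmem, by rw [hνmk]; erw [hx₀]; exact hmk⟩
  · -- image ⊆ ker
    rintro w ⟨z, hz, rfl⟩
    simp only [SetLike.mem_coe, Submodule.mem_comap, LinearMap.mem_ker] at hz
    rw [LinearMap.mem_ker]; erw [LinearMap.comp_apply]; rw [hνmk]; erw [hℓmk]; rw [map_sub]
    have h1 : F (JA z) = 0 := by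
      rw [← LinearMap.comp_apply, cFJ, LinearMap.comp_apply]; exact hz
    have h2 : F (TensorProduct.comm ℤ A A (JA z)) = 0 := by
      rw [hFcomm, ← LinearMap.comp_apply, cGJ, LinearMap.zero_apply, map_zero]
    erw [h1, h2, sub_zero]
end

section
/- Let A be an abelian group (written additively), m ≥ 0 an integer, A_(m) = {a ∈ A : m·a = 0}, and SP²(A) = (A⊗A)/⟨a⊗b − b⊗a : a,b ∈ A⟩ with a⊗̂b the class of a⊗b. Then the map τ₃: A_(m) → SP²(A)/m·SP²(A), a ↦ class of C(m,2)·(a⊗̂a) where C(m,2) = m(m−1)/2, is a group homomorphism, and its kernel is: all of A_(m) if m is odd; and (A_(m) ∩ 2A) + A_(m/2) if m is even, where 2A = {2a : a ∈ A} and A_(m/2) = {a ∈ A : (m/2)·a = 0}. -/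
open TensorProduct

/-- The symmetric square `SP²(A)` of an abelian group: the quotient of `A ⊗ A` by the
subgroup generated by the elements `a ⊗ b - b ⊗ a`. -/
abbrev symSquare (A : Type*) [AddCommGroup A] :=
  (A ⊗[ℤ] A) ⧸ Submodule.span ℤ {x : A ⊗[ℤ] A | ∃ a b : A, x = a ⊗ₜ[ℤ] b - b ⊗ₜ[ℤ] a}

/-- The quotient `SP²(A)/m·SP²(A)`. -/
abbrev symSquareModM (A : Type*) [AddCommGroup A] (m : ℕ) :=
  symSquare A ⧸ Submodule.span ℤ {x : symSquare A | ∃ y : symSquare A, x = m • y}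

/-- The connecting homomorphism `τ₃ : A_(m) → SP²(A)/m·SP²(A)`,
`a ↦ class of C(m,2)·(a ⊗̂ a)` (given here by its explicit formula on all of `A`). -/
noncomputable def tauThree (A : Type*) [AddCommGroup A] (m : ℕ) (a : A) : symSquareModM A m :=
  Submodule.Quotient.mk (Submodule.Quotient.mk ((m.choose 2) • (a ⊗ₜ[ℤ] a)))

/-! ### Auxiliary lemmas -/

lemma choose_two_mul_two (m : ℕ) : m.choose 2 * 2 = m * (m-1) := by
  rw [Nat.choose_two_right]
  rcases m with _ | n
  · rfl
  · exact Nat.div_mul_cancel (by simpa [Nat.mul_comm] using (Nat.even_mul_succ_self n).two_dvd)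

section AuxTensor
variable {A : Type*} [AddCommGroup A]

lemma smul_tmul_left' (n : ℕ) (x y : A) : (n • x) ⊗ₜ[ℤ] y = n • (x ⊗ₜ[ℤ] y) := by
  rw [← natCast_zsmul, ← natCast_zsmul, TensorProduct.smul_tmul']

lemma smul_tmul_right' (n : ℕ) (x y : A) : x ⊗ₜ[ℤ] (n • y) = n • (x ⊗ₜ[ℤ] y) := by
  rw [← natCast_zsmul, ← natCast_zsmul, TensorProduct.tmul_smul]

lemma key1 (m : ℕ) (a b : A) (hb : m • b = 0) :
    (Submodule.Quotient.mk (m.choose 2 • ((a+b) ⊗ₜ[ℤ] (a+b))) : symSquare A) =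
      Submodule.Quotient.mk (m.choose 2 • (a ⊗ₜ[ℤ] a)) +
      Submodule.Quotient.mk (m.choose 2 • (b ⊗ₜ[ℤ] b)) := by
  rw [← Submodule.Quotient.mk_add, Submodule.Quotient.eq]
  have hmb : m • (b ⊗ₜ[ℤ] a) = 0 := by rw [← smul_tmul_left', hb, TensorProduct.zero_tmul]
  have h0 : (m.choose 2 * 2) • (b ⊗ₜ[ℤ] a) = 0 := by
    rw [choose_two_mul_two, mul_comm, mul_smul, hmb, smul_zero]
  have expand : (a+b) ⊗ₜ[ℤ] (a+b) = a ⊗ₜ[ℤ] a + a ⊗ₜ[ℤ] b + b ⊗ₜ[ℤ] a + b ⊗ₜ[ℤ] b := by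
    rw [TensorProduct.tmul_add, TensorProduct.add_tmul, TensorProduct.add_tmul]; abel
  have key : m.choose 2 • ((a+b) ⊗ₜ[ℤ] (a+b)) - (m.choose 2 • (a ⊗ₜ[ℤ] a) + m.choose 2 • (b ⊗ₜ[ℤ] b))
      = (m.choose 2 : ℤ) • (a ⊗ₜ[ℤ] b - b ⊗ₜ[ℤ] a) + (m.choose 2 * 2) • (b ⊗ₜ[ℤ] a) := by
    rw [expand]
    simp only [← natCast_zsmul, Nat.cast_mul, smul_add, smul_sub, mul_smul, Nat.cast_ofNat]
    module
  rw [key, h0, add_zero]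
  exact Submodule.smul_mem _ _ (Submodule.subset_span ⟨a, b, rfl⟩)

/-- The bilinear pairing `x ⊗ y ↦ χ(x)·χ(y)`. -/
noncomputable def charForm (m : ℕ) (χ : A →+ ZMod m) : A ⊗[ℤ] A →ₗ[ℤ] ZMod m :=
  TensorProduct.lift (LinearMap.mk₂ ℤ (fun x y => χ x * χ y)
    (fun x x' y => by beta_reduce; rw [map_add, add_mul])
    (fun c x y => by beta_reduce; rw [AddMonoidHom.map_zsmul, smul_mul_assoc])
    (fun x y y' => by beta_reduce; rw [map_add, mul_add])
    (fun c x y => by beta_reduce; rw [AddMonoidHom.map_zsmul, mul_smul_comm]))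

lemma charForm_tmul (m : ℕ) (χ : A →+ ZMod m) (x y : A) :
    charForm m χ (x ⊗ₜ[ℤ] y) = χ x * χ y := rfl

lemma char_vanish {m : ℕ} {a : A} (h : tauThree A m a = 0) (χ : A →+ ZMod m) :
    (m.choose 2 : ZMod m) * (χ a * χ a) = 0 := by
  have h1 : Submodule.span ℤ {x : A ⊗[ℤ] A | ∃ a b : A, x = a ⊗ₜ[ℤ] b - b ⊗ₜ[ℤ] a}
      ≤ LinearMap.ker (charForm m χ) := by
    rw [Submodule.span_le]
    rintro _ ⟨x, y, rfl⟩
    simp [LinearMap.mem_ker, map_sub, charForm_tmul, mul_comm]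
  set Φ₁ : symSquare A →ₗ[ℤ] ZMod m := Submodule.liftQ _ (charForm m χ) h1 with hΦ₁
  have h2 : Submodule.span ℤ {x : symSquare A | ∃ y : symSquare A, x = m • y}
      ≤ LinearMap.ker Φ₁ := by
    rw [Submodule.span_le]
    rintro _ ⟨y, rfl⟩
    simp only [SetLike.mem_coe, LinearMap.mem_ker, map_nsmul]
    rw [nsmul_eq_mul, ZMod.natCast_self, zero_mul]
  set Φ₂ : symSquareModM A m →ₗ[ℤ] ZMod m := Submodule.liftQ _ Φ₁ h2 with hΦ₂
  have := congrArg Φ₂ h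
  rw [map_zero, hΦ₂, tauThree, Submodule.liftQ_apply, hΦ₁, Submodule.liftQ_apply,
    map_nsmul, charForm_tmul, nsmul_eq_mul] at this
  exact this

end AuxTensor

lemma contra_arith {m k t : ℕ} (hm : m = 2*k) (hk : 0 < k) (ht : ¬ 2 ∣ t)
    (h : m ∣ m.choose 2 * (t*t)) : False := by
  have hC : m.choose 2 * 2 = 2 * (k * (m-1)) := by rw [choose_two_mul_two, hm]; ring
  have hC' : m.choose 2 = k * (m-1) := by omega
  obtain ⟨d, hd⟩ := h
  have h2 : k * ((m-1) * (t*t)) = k * (2*d) := by rw [← mul_assoc, ← hC', hd, hm]; ring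
  have h3 : (m-1) * (t*t) = 2*d := Nat.eq_of_mul_eq_mul_left hk h2
  have h4 : 2 ∣ (m-1) * (t*t) := ⟨d, h3⟩
  rcases (Nat.Prime.dvd_mul Nat.prime_two).mp h4 with h5 | h5
  · omega
  · rcases (Nat.Prime.dvd_mul Nat.prime_two).mp h5 with h6 | h6 <;> exact ht h6

lemma exists_char {A : Type*} [AddCommGroup A] {q : ℕ} (hq : 0 < q) (a' : A)
    (key : ∀ j : ℤ, (∃ x : A, j • a' = (q:ℤ) • x) → (q:ℤ) ∣ j) :
    ∃ ψ : A →+ ZMod q, ψ a' = 1 := by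
  classical
  haveI : NeZero q := ⟨hq.ne'⟩
  set Qs : AddSubgroup A :=
    AddMonoidHom.range (AddMonoidHom.mk' (fun x : A => q • x) (fun x y => smul_add q x y)) with hQs
  have memQs : ∀ x : A, (q • x) ∈ Qs := fun x => ⟨x, rfl⟩
  set S : Set (AddSubgroup (A × ZMod q)) :=
    {G | (∀ z : ZMod q, ((0:A), z) ∈ G → z = 0) ∧ ((a', (1 : ZMod q)) ∈ G) ∧
      ∀ x : A, ((q • x : A), (0 : ZMod q)) ∈ G} with hS
  set G₀ : AddSubgroup (A × ZMod q) :=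
    AddSubgroup.zmultiples ((a', (1:ZMod q)) : A × ZMod q) ⊔ Qs.prod ⊥ with hG₀def
  have hG₀ : G₀ ∈ S := by
    refine ⟨?_, ?_, ?_⟩
    · intro z hz
      rw [hG₀def, AddSubgroup.mem_sup] at hz
      obtain ⟨g1, hg1, g2, hg2, hsum⟩ := hz
      obtain ⟨j, rfl⟩ := AddSubgroup.mem_zmultiples_iff.mp hg1
      rw [Prod.smul_mk] at hsum
      obtain ⟨hg2a, hg2b⟩ := AddSubgroup.mem_prod.mp hg2
      obtain ⟨x, hx⟩ := hg2a
      have hx' : q • x = g2.1 := hx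
      have h1 : j • a' + g2.1 = 0 := congrArg Prod.fst hsum
      have h2 : j • (1 : ZMod q) + g2.2 = z := congrArg Prod.snd hsum
      have hb : g2.2 = 0 := AddSubgroup.mem_bot.mp hg2b
      have hdvd : (q:ℤ) ∣ j := by
        refine key j ⟨-x, ?_⟩
        rw [smul_neg, natCast_zsmul, hx']
        exact eq_neg_of_add_eq_zero_left h1
      rw [hb, add_zero, zsmul_eq_mul, mul_one] at h2
      rw [← h2]
      exact (ZMod.intCast_zmod_eq_zero_iff_dvd j q).mpr hdvd
    · exact AddSubgroup.mem_sup_left (AddSubgroup.mem_zmultiples _)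
    · intro x
      exact AddSubgroup.mem_sup_right (AddSubgroup.mem_prod.mpr ⟨memQs x, AddSubgroup.mem_bot.mpr rfl⟩)
  obtain ⟨M, hG₀M, hMS, hMmax⟩ := zorn_le_nonempty₀ S (fun c hcS hchain y hy =>
    ⟨sSup c, ⟨fun z hz => by
        rw [AddSubgroup.mem_sSup_of_directedOn ⟨y, hy⟩ hchain.directedOn] at hz
        obtain ⟨G, hGc, hzG⟩ := hz
        exact (hcS hGc).1 z hzG,
      le_sSup hy (hcS hy).2.1,
      fun x => le_sSup hy ((hcS hy).2.2 x)⟩,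
      fun z hz => le_sSup hz⟩) G₀ hG₀
  -- M is maximal; show totality
  have htotal : ∀ x : A, ∃ z : ZMod q, ((x, z) : A × ZMod q) ∈ M := by
    by_contra hcon
    push_neg at hcon
    obtain ⟨x₀, hx₀⟩ := hcon
    have hex : ∃ n : ℕ, 0 < n ∧ ∃ w : ZMod q, (((n : ℕ) • x₀ : A), w) ∈ M :=
      ⟨q, hq, 0, hMS.2.2 x₀⟩
    set n := Nat.find hex with hn
    obtain ⟨hn_pos, w, hw⟩ := Nat.find_spec hex
    have hwz : (((n : ℤ) • x₀ : A), w) ∈ M := by rwa [natCast_zsmul]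
    have hdvd : ∀ j : ℤ, (∃ ω : ZMod q, ((j • x₀ : A), ω) ∈ M) → (n:ℤ) ∣ j := by
      rintro j ⟨ω, hω⟩
      set r : ℕ := (j % (n:ℤ)).toNat with hr
      have hnne : (n:ℤ) ≠ 0 := by exact_mod_cast hn_pos.ne'
      have hjr : (r : ℤ) = j % (n:ℤ) := Int.toNat_of_nonneg (Int.emod_nonneg j hnne)
      have hrn : r < n := by
        have := Int.emod_lt_of_pos j (by exact_mod_cast hn_pos : (0:ℤ) < n)
        omega
      have hmem : (((r:ℤ) • x₀ : A), ω - (j / (n:ℤ)) • w) ∈ M := by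
        have h1 : (((j / (n:ℤ)) • ((n:ℤ) • x₀) : A), (j / (n:ℤ)) • w) ∈ M := by
          have := AddSubgroup.zsmul_mem M hwz (j / (n:ℤ))
          rwa [Prod.smul_mk] at this
        have h2 := AddSubgroup.sub_mem M hω h1
        have h3 : (j • x₀ - (j / (n:ℤ)) • ((n:ℤ) • x₀) : A) = (r:ℤ) • x₀ := by
          rw [smul_smul, ← sub_smul, hjr]
          congr 1
          linarith [Int.mul_ediv_add_emod j (n:ℤ)]
        rwa [Prod.mk_sub_mk, h3] at h2
      rcases Nat.eq_zero_or_pos r with h0 | hpos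
      · refine Int.dvd_of_emod_eq_zero ?_
        omega
      · exfalso
        refine Nat.find_min hex hrn ⟨hpos, ω - (j / (n:ℤ)) • w, ?_⟩
        rwa [natCast_zsmul] at hmem
    have hnq : n ∣ q := by
      have := hdvd (q:ℤ) ⟨0, by rw [natCast_zsmul]; exact hMS.2.2 x₀⟩
      exact_mod_cast this
    obtain ⟨d, hd⟩ := hnq
    have hd0 : 0 < d := by
      rcases Nat.eq_zero_or_pos d with h | h
      · exfalso; rw [h, mul_zero] at hd; omega
      · exact h
    have hdw : d • w = 0 := by
      have h1 : ((d • (n • x₀) : A), d • w) ∈ M := by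
        have := AddSubgroup.nsmul_mem M hw d
        rwa [Prod.smul_mk] at this
      have h2 : (d • (n • x₀) : A) = q • x₀ := by rw [smul_smul, mul_comm, ← hd]
      rw [h2] at h1
      have h3 := AddSubgroup.sub_mem M h1 (hMS.2.2 x₀)
      rw [Prod.mk_sub_mk, sub_self, sub_zero] at h3
      exact hMS.1 _ h3
    have hqdw : q ∣ d * w.val := by
      have : ((d * w.val : ℕ) : ZMod q) = 0 := by
        push_cast
        rw [ZMod.natCast_zmod_val, ← nsmul_eq_mul, hdw]
      exact (ZMod.natCast_eq_zero_iff _ _).mp this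
    have hnval : n ∣ w.val := by
      obtain ⟨e, he⟩ := hqdw
      refine ⟨e, Nat.eq_of_mul_eq_mul_left hd0 ?_⟩
      calc d * w.val = q * e := he
        _ = d * (n * e) := by rw [hd]; ring
    set y : ZMod q := ((w.val / n : ℕ) : ZMod q) with hy
    have hny : (n:ℕ) • y = w := by
      rw [hy, nsmul_eq_mul, ← Nat.cast_mul, Nat.mul_div_cancel' hnval, ZMod.natCast_zmod_val]
    set M' := M ⊔ AddSubgroup.zmultiples ((x₀, y) : A × ZMod q) with hM'
    have hM'S : M' ∈ S := by
      refine ⟨?_, AddSubgroup.mem_sup_left hMS.2.1, fun x => AddSubgroup.mem_sup_left (hMS.2.2 x)⟩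
      intro z hz
      rw [hM', AddSubgroup.mem_sup] at hz
      obtain ⟨g, hg, g2, hg2, hsum⟩ := hz
      obtain ⟨j, rfl⟩ := AddSubgroup.mem_zmultiples_iff.mp hg2
      rw [Prod.smul_mk] at hsum
      have h1 : g.1 + j • x₀ = 0 := congrArg Prod.fst hsum
      have h2 : g.2 + j • y = z := congrArg Prod.snd hsum
      have hneg : -g.1 = j • x₀ := add_eq_zero_iff_neg_eq.mp h1
      have hjm : ((j • x₀ : A), -g.2) ∈ M := by
        have := AddSubgroup.neg_mem M hg
        have hfst : -g = ((j • x₀ : A), -g.2) :=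
          Prod.ext_iff.mpr ⟨by simp [hneg], by simp⟩
        rwa [hfst] at this
      obtain ⟨e, hje⟩ := hdvd j ⟨-g.2, hjm⟩
      have hjw : ((j • x₀ : A), e • w) ∈ M := by
        have := AddSubgroup.zsmul_mem M hwz e
        rw [Prod.smul_mk, smul_smul] at this
        rwa [hje, mul_comm]
      have h3 := AddSubgroup.add_mem M hg hjw
      have h4 : g + ((j • x₀ : A), e • w) = ((0:A), g.2 + e • w) :=
        Prod.ext_iff.mpr ⟨by simp [h1], by simp⟩
      rw [h4] at h3
      have h5 : g.2 + e • w = 0 := hMS.1 _ h3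
      have hjy : j • y = e • w := by
        rw [hje, mul_comm, mul_smul, natCast_zsmul, hny]
      rw [← h2, hjy]
      exact h5
    have hle : M' ≤ M := hMmax hM'S le_sup_left
    exact hx₀ y (hle (AddSubgroup.mem_sup_right (AddSubgroup.mem_zmultiples _)))
  have huniq : ∀ (x : A) (z₁ z₂ : ZMod q),
      ((x, z₁) : A × ZMod q) ∈ M → ((x, z₂) : A × ZMod q) ∈ M → z₁ = z₂ := by
    intro x z₁ z₂ h1 h2
    have h3 := AddSubgroup.sub_mem M h1 h2
    rw [Prod.mk_sub_mk, sub_self] at h3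
    have := hMS.1 _ h3
    exact sub_eq_zero.mp this
  choose g hg using htotal
  refine ⟨AddMonoidHom.mk' g (fun x y => ?_), ?_⟩
  · exact huniq (x+y) _ _ (hg (x+y))
      (by have := AddSubgroup.add_mem M (hg x) (hg y); rwa [Prod.mk_add_mk] at this)
  · exact huniq a' _ _ (hg a') hMS.2.1
lemma exists_oddchar {A : Type*} [AddCommGroup A] {m k : ℕ} (hm : m = 2*k) (hk : 0 < k)
    {a : A} (ha : m • a = 0)
    (hP : ¬ ∃ b c : A, k • c = 0 ∧ a = 2 • b + c) :
    ∃ χ : A →+ ZMod m, ¬ 2 ∣ (χ a).val := by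
  classical
  have hm0 : m ≠ 0 := by omega
  set f : ℕ := m.factorization 2 with hfdef
  have hf1 : 1 ≤ f := Nat.Prime.factorization_pos_of_dvd Nat.prime_two hm0 ⟨k, hm⟩
  set q : ℕ := 2^f with hqdef
  set u : ℕ := ordCompl[2] m with hudef
  have hqu : q * u = m := Nat.ordProj_mul_ordCompl_eq_self m 2
  have hu : ¬ 2 ∣ u := Nat.not_dvd_ordCompl Nat.prime_two hm0
  have hu0 : 0 < u := Nat.ordCompl_pos 2 hm0
  have hq0 : 0 < q := Nat.pow_pos (n := f) (by norm_num)
  have hq2 : 2 ∣ q := by rw [hqdef]; exact dvd_pow_self 2 (by omega)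
  have hkval : k = 2^(f-1) * u := by
    have h1 : 2 * k = 2 * (2^(f-1) * u) := by
      rw [← hm, ← hqu, hqdef, ← mul_assoc]
      congr 2
      rw [← pow_succ']
      congr 1
      omega
    exact Nat.eq_of_mul_eq_mul_left (by norm_num) h1
  have hma : (m:ℤ) • a = 0 := by rw [natCast_zsmul]; exact ha
  set a' : A := (u:ℤ) • a with ha'def
  have hqa' : (q:ℤ) • a' = 0 := by
    rw [ha'def, smul_smul, ← Int.natCast_mul, hqu, natCast_zsmul, ha]
  have key : ∀ j : ℤ, (∃ x : A, j • a' = (q:ℤ) • x) → (q:ℤ) ∣ j := by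
    rintro j ⟨x, hx⟩
    by_contra hnd
    set r : ℕ := (j % (q:ℤ)).toNat with hrdef
    have hqz : (q:ℤ) ≠ 0 := by exact_mod_cast hq0.ne'
    have hjr : (r : ℤ) = j % (q:ℤ) := Int.toNat_of_nonneg (Int.emod_nonneg j hqz)
    have hr0 : r ≠ 0 := by
      intro h0
      exact hnd (Int.dvd_of_emod_eq_zero (by omega))
    have hrq : r < q := by
      have := Int.emod_lt_of_pos j (by exact_mod_cast hq0 : (0:ℤ) < q)
      omega
    have hra' : (r:ℤ) • a' = (q:ℤ) • x := by
      have hjq : (r:ℤ) = j - (j / (q:ℤ)) * (q:ℤ) := by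
        rw [hjr]; linarith [Int.mul_ediv_add_emod j (q:ℤ)]
      rw [hjq, sub_smul, hx, mul_smul, hqa', smul_zero, sub_zero]
    set i : ℕ := r.factorization 2 with hidef
    set wodd : ℕ := ordCompl[2] r with hwdef
    have hiw : 2^i * wodd = r := Nat.ordProj_mul_ordCompl_eq_self r 2
    have hwodd : ¬ 2 ∣ wodd := Nat.not_dvd_ordCompl Nat.prime_two hr0
    have hif : i < f := by
      have h1 : 2^i ≤ r := le_trans (Nat.le_mul_of_pos_right _ (Nat.ordCompl_pos 2 hr0)) hiw.le
      have h2 : (2:ℕ)^i < 2^f := lt_of_le_of_lt h1 hrq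
      exact (Nat.pow_lt_pow_iff_right (by norm_num)).mp h2
    have hcop : Nat.Coprime wodd q :=
      Nat.Coprime.pow_right f ((Nat.prime_two.coprime_iff_not_dvd.mpr hwodd).symm)
    obtain ⟨α, β, hαβ⟩ := Nat.isCoprime_iff_coprime.mpr hcop
    have h2i : (2^i : ℤ) • a' = (q:ℤ) • (α • x) := by
      have e1 : (α * (r:ℤ)) • a' = (q:ℤ) • (α • x) := by
        rw [mul_smul, hra', smul_comm]
      have e2 : ((2:ℤ)^i : ℤ) = α * (r:ℤ) + (2^i * β) * (q:ℤ) := by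
        have hr' : (r:ℤ) = 2^i * wodd := by exact_mod_cast hiw.symm
        rw [hr']
        linear_combination (-(2:ℤ)^i) * hαβ
      rw [e2, add_smul, e1, mul_smul, hqa', smul_zero, add_zero]
    set x' : A := α • x with hx'def
    set c' : A := a' - (2^(f-i) : ℤ) • x' with hc'def
    have h2ic' : (2^i:ℤ) • c' = 0 := by
      have hqsplit : (q:ℤ) = 2^i * 2^(f-i) := by
        rw [hqdef]; push_cast; rw [← pow_add]; congr 1; omega
      rw [hc'def, smul_sub, h2i, hqsplit, mul_smul, sub_self]
    have hkc' : (k:ℤ) • c' = 0 := by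
      have hksplit : (k:ℤ) = (2^(f-1-i) * u) * 2^i := by
        rw [hkval]; push_cast; rw [mul_comm ((2:ℤ)^(f-1-i) * u) (2^i), ← mul_assoc, ← pow_add]
        congr 2
        omega
      rw [hksplit, mul_smul, h2ic', smul_zero]
    set b' : A := (2^(f-i-1) : ℤ) • x' with hb'def
    have ha'split : a' = (2:ℤ) • b' + c' := by
      rw [hc'def, hb'def, smul_smul]
      have h22 : (2:ℤ) * 2^(f-i-1) = 2^(f-i) := by
        rw [← pow_succ']; congr 1; omega
      rw [h22]; abel
    have hcopu : Nat.Coprime u q :=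
      Nat.Coprime.pow_right f ((Nat.prime_two.coprime_iff_not_dvd.mpr hu).symm)
    obtain ⟨α₂, β₂, hαβ₂⟩ := Nat.isCoprime_iff_coprime.mpr hcopu
    have hasplit : a = α₂ • a' + (β₂ * (q:ℤ)) • a := by
      rw [ha'def, smul_smul, ← add_smul]
      have : α₂ * (u:ℤ) + β₂ * q = 1 := hαβ₂
      rw [this, one_smul]
    have hkc₀ : (k:ℤ) • ((β₂ * (q:ℤ)) • a) = 0 := by
      rw [smul_smul]
      have hnat : k * q = 2^(f-1) * m := by rw [hkval, ← hqu]; ring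
      have hint : (k:ℤ) * q = 2^(f-1) * m := by exact_mod_cast hnat
      have hkq : (k:ℤ) * (β₂ * q) = (β₂ * 2^(f-1)) * m := by linear_combination β₂ * hint
      rw [hkq, mul_smul, hma, smul_zero]
    refine hP ⟨α₂ • b', α₂ • c' + (β₂ * (q:ℤ)) • a, ?_, ?_⟩
    · rw [← natCast_zsmul, smul_add, smul_comm ((k:ℕ):ℤ) α₂ c', hkc', smul_zero, zero_add, hkc₀]
    · have h2b : (2:ℕ) • (α₂ • b') = α₂ • ((2:ℤ) • b') := by
        rw [← natCast_zsmul, smul_comm]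
        norm_num
      calc a = α₂ • a' + (β₂ * (q:ℤ)) • a := hasplit
        _ = 2 • (α₂ • b') + (α₂ • c' + (β₂ * (q:ℤ)) • a) := by
            rw [ha'split, smul_add, ← h2b]
            abel
  obtain ⟨ψ, hψ⟩ := exists_char hq0 a' key
  haveI : NeZero q := ⟨hq0.ne'⟩
  haveI : NeZero m := ⟨hm0⟩
  have hua : (u:ℕ) • a = a' := by rw [ha'def, natCast_zsmul]
  have hψa : (u:ℕ) • ψ a = 1 := by rw [← map_nsmul, hua, hψ]
  set t : ℕ := (ψ a).val with htdef
  have htq : t < q := ZMod.val_lt _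
  have htodd : ¬ 2 ∣ t := by
    intro h2t
    have h1 : ((u * t : ℕ) : ZMod q) = ((1:ℕ) : ZMod q) := by
      push_cast
      rw [htdef, ZMod.natCast_zmod_val, ← nsmul_eq_mul]
      exact hψa
    have hdvdq : (q:ℤ) ∣ ((u*t : ℕ) : ℤ) - 1 := by
      rw [← ZMod.intCast_zmod_eq_zero_iff_dvd]
      push_cast
      rw [sub_eq_zero]
      exact_mod_cast h1
    obtain ⟨s, hs⟩ := hdvdq
    have h2q : (2:ℤ) ∣ (q:ℤ) := by exact_mod_cast hq2
    have h2ut : (2:ℤ) ∣ ((u*t : ℕ) : ℤ) := by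
      have : (2:ℕ) ∣ u * t := Dvd.dvd.mul_left h2t u
      exact_mod_cast this
    have h21 : (2:ℤ) ∣ 1 := by
      have h3 : (1:ℤ) = ((u*t:ℕ):ℤ) - (q:ℤ)*s := by linarith [hs]
      rw [h3]
      exact dvd_sub h2ut (h2q.mul_right s)
    norm_num at h21
  set ι : ZMod q →+ ZMod m := ZMod.lift q ⟨zmultiplesHom (ZMod m) ((u : ZMod m)), by
    simp only [zmultiplesHom_apply]
    rw [natCast_zsmul, nsmul_eq_mul, ← Nat.cast_mul, hqu, ZMod.natCast_self]⟩ with hι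
  refine ⟨ι.comp ψ, ?_⟩
  have hχa : (ι.comp ψ) a = ((t * u : ℕ) : ZMod m) := by
    have h1 : ψ a = ((t:ℤ) : ZMod q) := by
      rw [htdef]; push_cast; rw [ZMod.natCast_zmod_val]
    rw [AddMonoidHom.comp_apply, h1, hι, ZMod.lift_coe, zmultiplesHom_apply]
    rw [natCast_zsmul, nsmul_eq_mul, ← Nat.cast_mul]
  rw [hχa]
  have hval : ((t * u : ℕ) : ZMod m).val = t * u := ZMod.val_cast_of_lt (by
    calc t * u < q * u := (Nat.mul_lt_mul_right hu0).mpr htq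
      _ = m := hqu)
  rw [hval]
  intro hdvd2
  rcases (Nat.Prime.dvd_mul Nat.prime_two).mp hdvd2 with h | h
  · exact htodd h
  · exact hu h

/-- **Lemma 2.8**: `τ₃` is a homomorphism on `A_(m) = {a | m•a = 0}`, its kernel is all
of `A_(m)` if `m` is odd, and equals `(A_(m) ∩ 2A) + A_(m/2)` if `m` is even. -/
theorem tauThree_hom_and_kernel (A : Type*) [AddCommGroup A] (m : ℕ) :
    (∀ a b : A, m • a = 0 → m • b = 0 →
      tauThree A m (a + b) = tauThree A m a + tauThree A m b) ∧
    (Odd m → ∀ a : A, m • a = 0 → tauThree A m a = 0) ∧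
    (Even m → ∀ a : A, m • a = 0 →
      (tauThree A m a = 0 ↔
        ∃ b c : A, m • (2 • b) = 0 ∧ (m / 2) • c = 0 ∧ a = 2 • b + c)) := by
  have hom : ∀ a b : A, m • a = 0 → m • b = 0 →
      tauThree A m (a + b) = tauThree A m a + tauThree A m b := by
    intro a b ha hb
    unfold tauThree
    rw [key1 m a b hb, Submodule.Quotient.mk_add]
  refine ⟨hom, ?_, ?_⟩
  · -- odd case
    intro hodd a ha
    obtain ⟨j, hj⟩ : ∃ j, m - 1 = 2*j := by
      obtain ⟨l, hl⟩ := hodd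
      exact ⟨l, by omega⟩
    have hC : m.choose 2 = j * m := by
      have h1 : m.choose 2 * 2 = (j * m) * 2 := by
        rw [choose_two_mul_two, hj]; ring
      omega
    have hz : m.choose 2 • (a ⊗ₜ[ℤ] a) = 0 := by
      rw [hC, mul_smul, ← smul_tmul_left', ha, TensorProduct.zero_tmul, smul_zero]
    unfold tauThree
    rw [hz, Submodule.Quotient.mk_zero, Submodule.Quotient.mk_zero]
  · -- even case
    intro heven a ha
    obtain ⟨k, hk⟩ := heven
    have hm2k : m = 2 * k := by omega
    have hmdiv : m / 2 = k := by omega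
    rcases Nat.eq_zero_or_pos k with hk0 | hkpos
    · -- m = 0 : everything is trivial
      subst hk0
      simp only [Nat.mul_zero] at hm2k
      subst hm2k
      constructor
      · intro _
        exact ⟨0, a, by simp, by simp, by simp⟩
      · intro _
        unfold tauThree
        simp
    · constructor
      · -- hard direction
        intro htau
        rw [hmdiv]
        by_contra hP'
        have hP : ¬ ∃ b c : A, k • c = 0 ∧ a = 2 • b + c := by
          rintro ⟨b, c, hc, hdec⟩
          have hmc : m • c = 0 := by
            rw [hm2k, mul_smul, hc, smul_zero]
          have h2b : m • (2 • b) = 0 := by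
            have h1 : m • a = m • (2 • b) + m • c := by rw [hdec, smul_add]
            rw [ha, hmc, add_zero] at h1
            exact h1.symm
          exact hP' ⟨b, c, h2b, hc, hdec⟩
        obtain ⟨χ, hχ⟩ := exists_oddchar hm2k hkpos ha hP
        haveI : NeZero m := ⟨by omega⟩
        have hv := char_vanish htau χ
        set t := (χ a).val with ht
        have hcast : ((m.choose 2 * (t*t) : ℕ) : ZMod m) = 0 := by
          push_cast
          rw [ht, ZMod.natCast_zmod_val]
          exact_mod_cast hv
        have hdvd : m ∣ m.choose 2 * (t*t) := (ZMod.natCast_eq_zero_iff _ _).mp hcast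
        exact contra_arith hm2k hkpos hχ hdvd
      · -- easy direction
        rintro ⟨b, c, hb2, hc, hdec⟩
        rw [hmdiv] at hc
        have hmc : m • c = 0 := by rw [hm2k, mul_smul, hc, smul_zero]
        have hz1 : tauThree A m (2 • b) = 0 := by
          have h4 : (2 • b) ⊗ₜ[ℤ] (2 • b) = (2*2) • (b ⊗ₜ[ℤ] b) := by
            rw [smul_tmul_left', smul_tmul_right', smul_smul]
          have hzz : m.choose 2 • ((2 • b) ⊗ₜ[ℤ] (2 • b)) = (0 : A ⊗[ℤ] A) := by
            rw [h4, smul_smul]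
            have he : m.choose 2 * (2*2) = (m-1) * (m*2) :=
              calc m.choose 2 * (2*2) = (m.choose 2 * 2) * 2 := by ring
                _ = (m*(m-1))*2 := by rw [choose_two_mul_two]
                _ = (m-1)*(m*2) := by ring
            rw [he, mul_smul]
            have hb2' : (m*2) • (b ⊗ₜ[ℤ] b) = 0 := by
              rw [← smul_tmul_left']
              have hmb : (m*2) • b = 0 := by rw [mul_smul]; exact hb2
              rw [hmb, TensorProduct.zero_tmul]
            rw [hb2', smul_zero]
          unfold tauThree
          rw [hzz, Submodule.Quotient.mk_zero, Submodule.Quotient.mk_zero]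
        have hz2 : tauThree A m c = 0 := by
          have hC : m.choose 2 = k * (m-1) := by
            have h1 : m.choose 2 * 2 = (k * (m-1)) * 2 := by
              rw [choose_two_mul_two, hm2k]; ring
            omega
          have hzz : m.choose 2 • (c ⊗ₜ[ℤ] c) = (0 : A ⊗[ℤ] A) := by
            rw [hC, mul_comm, mul_smul, ← smul_tmul_left', hc, TensorProduct.zero_tmul, smul_zero]
          unfold tauThree
          rw [hzz, Submodule.Quotient.mk_zero, Submodule.Quotient.mk_zero]
        rw [hdec, hom (2 • b) c hb2 hmc, hz1, hz2, add_zero]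
end

section
/- Let G be a group, H a subgroup of G, and R a commutative ring with unit of characteristic 0. Then G ∩ (1_R + I_R(G)I_R(H)) = {g ∈ G : g − 1 ∈ I_R(G)I_R(H)} equals the subgroup of H generated by H₂ = [H,H] together with, for each prime p ∈ σ(R), the p^{e(p)}-th powers of the elements of t_p(H mod H₂) = {h ∈ H : h^{p^k} ∈ H₂ for some k ≥ 0}. -/
open MonoidAlgebra
open scoped commutatorElement

/-- The `R`-submodule `I_R(G)·I_R(H)` of `R(G)` spanned by the products
`(g-1)(h-1)` with `g ∈ G`, `h ∈ H`. -/
noncomputable def augMulGH (R : Type*) [CommRing R] {G : Type*} [Group G]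
    (H : Subgroup G) : Submodule R (MonoidAlgebra R G) :=
  Submodule.span R {x | ∃ g : G, ∃ h ∈ H, x = (of R G g - 1) * (of R G h - 1)}

/-- `p ∈ σ(R)`: `p` is prime and `p^n·R = p^{n+1}·R` for some `n ≥ 0`. -/
def inSigma (R : Type*) [CommRing R] (p : ℕ) : Prop :=
  p.Prime ∧ ∃ n : ℕ, Ideal.span {((p : R) ^ n)} = Ideal.span {((p : R) ^ (n + 1))}

/-- For `p ∈ σ(R)`, `e(p)` is the smallest `n` with `p^n·R = p^{n+1}·R`. -/
noncomputable def sigmaExp (R : Type*) [CommRing R] (p : ℕ) : ℕ :=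
  sInf {n : ℕ | Ideal.span {((p : R) ^ n)} = Ideal.span {((p : R) ^ (n + 1))}}

section FoxAux
variable (R : Type*) [CommRing R] {G : Type*} [Group G] (H : Subgroup G)

lemma gen_mem {g : G} {h : G} (hh : h ∈ H) :
    (of R G g - 1) * (of R G h - 1) ∈ augMulGH R H :=
  Submodule.subset_span ⟨g, h, hh, rfl⟩

lemma mul_of_mem {x : MonoidAlgebra R G} (hx : x ∈ augMulGH R H) (g : G) :
    of R G g * x ∈ augMulGH R H := by
  induction hx using Submodule.span_induction with
  | mem y hy =>
    obtain ⟨g', h, hh, rfl⟩ := hy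
    have : of R G g * ((of R G g' - 1) * (of R G h - 1)) =
        (of R G (g * g') - 1) * (of R G h - 1) - (of R G g - 1) * (of R G h - 1) := by
      rw [map_mul]; noncomm_ring
    rw [this]
    exact sub_mem (gen_mem R H hh) (gen_mem R H hh)
  | zero => simpa using (augMulGH R H).zero_mem
  | add y z _ _ hy hz => rw [mul_add]; exact add_mem hy hz
  | smul r y _ hy => rw [mul_smul_comm]; exact Submodule.smul_mem _ r hy

lemma mem_mul_of {x : MonoidAlgebra R G} (hx : x ∈ augMulGH R H) {h : G} (hh : h ∈ H) :
    x * of R G h ∈ augMulGH R H := by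
  induction hx using Submodule.span_induction with
  | mem y hy =>
    obtain ⟨g', h', hh', rfl⟩ := hy
    have : (of R G g' - 1) * (of R G h' - 1) * of R G h =
        (of R G g' - 1) * (of R G (h' * h) - 1) - (of R G g' - 1) * (of R G h - 1) := by
      rw [map_mul]; noncomm_ring
    rw [this]
    exact sub_mem (gen_mem R H (mul_mem hh' hh)) (gen_mem R H hh)
  | zero => simpa using (augMulGH R H).zero_mem
  | add y z _ _ hy hz => rw [add_mul]; exact add_mem hy hz
  | smul r y _ hy => rw [smul_mul_assoc]; exact Submodule.smul_mem _ r hy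

/-- The subgroup `{g | g - 1 ∈ I(G)I(H)}`. -/
noncomputable def foxSubgroup : Subgroup G where
  carrier := {g : G | of R G g - 1 ∈ augMulGH R H}
  one_mem' := by
    show of R G 1 - 1 ∈ augMulGH R H
    rw [map_one, sub_self]; exact (augMulGH R H).zero_mem
  mul_mem' := by
    intro a b ha hb
    have : of R G (a * b) - 1 = of R G a * (of R G b - 1) + (of R G a - 1) := by
      rw [map_mul]; noncomm_ring
    rw [Set.mem_setOf_eq, this]
    exact add_mem (mul_of_mem R H hb a) ha
  inv_mem' := by
    intro a ha
    have : of R G a⁻¹ - 1 = -(of R G a⁻¹ * (of R G a - 1)) := by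
      have : of R G a⁻¹ * of R G a = 1 := by rw [← map_mul, inv_mul_cancel, map_one]
      rw [mul_sub, this, mul_one]; noncomm_ring
    rw [Set.mem_setOf_eq, this]
    exact neg_mem (mul_of_mem R H ha a⁻¹)

lemma commutator_mem {a b : G} (ha : a ∈ H) (hb : b ∈ H) :
    ⁅a, b⁆ ∈ foxSubgroup R H := by
  show of R G ⁅a, b⁆ - 1 ∈ augMulGH R H
  have key : of R G ⁅a, b⁆ - 1 =
      ((of R G a - 1) * (of R G b - 1) - (of R G b - 1) * (of R G a - 1))
        * of R G (a⁻¹ * b⁻¹) := by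
    rw [commutatorElement_def]
    have h1 : of R G a * of R G b * (of R G (a⁻¹ * b⁻¹)) = of R G (a * b * (a⁻¹ * b⁻¹)) := by
      simp only [map_mul]
    have h2 : of R G b * of R G a * (of R G (a⁻¹ * b⁻¹)) = 1 := by
      rw [← map_mul, ← map_mul]
      have : b * a * (a⁻¹ * b⁻¹) = 1 := by group
      rw [this, map_one]
    have hc : a * b * (a⁻¹ * b⁻¹) = a * b * a⁻¹ * b⁻¹ := by group
    calc of R G (a * b * a⁻¹ * b⁻¹) - 1
        = of R G a * of R G b * (of R G (a⁻¹ * b⁻¹)) -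
          of R G b * of R G a * (of R G (a⁻¹ * b⁻¹)) := by rw [h1, h2, hc]
      _ = _ := by noncomm_ring
  rw [key]
  exact mem_mul_of R H
    (sub_mem (gen_mem R H hb) (gen_mem R H ha)) (mul_mem (inv_mem ha) (inv_mem hb))

lemma pow_sub_one_mem {h : G} (hh : h ∈ H) (m : ℕ) :
    of R G (h ^ m) - 1 - (m : R) • (of R G h - 1) ∈ augMulGH R H := by
  induction m with
  | zero =>
    rw [pow_zero, map_one]
    simp only [Nat.cast_zero, zero_smul, sub_self, sub_zero]
    exact (augMulGH R H).zero_mem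
  | succ m ih =>
    have hcomm : of R G (h ^ m) * of R G h = of R G h * of R G (h ^ m) := by
      rw [← map_mul, ← map_mul, ← pow_succ, ← pow_succ']
    have hsm : ((m + 1 : ℕ) : R) • (of R G h - 1) =
        (m : R) • (of R G h - 1) + (of R G h - 1) := by
      push_cast
      rw [add_smul, one_smul]
    have key : ∀ s : MonoidAlgebra R G,
        of R G (h ^ m) * of R G h - 1 - (s + (of R G h - 1)) =
          (of R G h - 1) * (of R G (h ^ m) - 1) + (of R G (h ^ m) - 1 - s) := by
      intro s
      have h2 : of R G (h ^ m) * of R G h - 1 - (of R G h - 1) =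
          (of R G h - 1) * (of R G (h ^ m) - 1) + (of R G (h ^ m) - 1) := by
        rw [hcomm]; noncomm_ring
      calc of R G (h ^ m) * of R G h - 1 - (s + (of R G h - 1))
          = (of R G (h ^ m) * of R G h - 1 - (of R G h - 1)) - s := by abel
        _ = ((of R G h - 1) * (of R G (h ^ m) - 1) + (of R G (h ^ m) - 1)) - s := by rw [h2]
        _ = _ := by abel
    rw [pow_succ, map_mul, hsm, key]
    exact add_mem (gen_mem R H (pow_mem hh m)) ih

lemma sigmaExp_spec {p : ℕ} (hp : inSigma R p) :
    Ideal.span {((p : R) ^ sigmaExp R p)} = Ideal.span {((p : R) ^ (sigmaExp R p + 1))} :=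
  Nat.sInf_mem (⟨hp.2.choose, hp.2.choose_spec⟩ :
    {n : ℕ | Ideal.span {((p : R) ^ n)} = Ideal.span {((p : R) ^ (n + 1))}}.Nonempty)

lemma sigma_pow_factor {p : ℕ} (hp : inSigma R p) (k : ℕ) :
    ∃ r : R, (p : R) ^ sigmaExp R p = (p : R) ^ k * r := by
  set e := sigmaExp R p with he
  have claim : ∀ m : ℕ, ∃ r : R, (p : R) ^ e = (p : R) ^ (e + m) * r := by
    intro m
    induction m with
    | zero => exact ⟨1, by rw [add_zero, mul_one]⟩
    | succ m ih =>
      obtain ⟨r, hr⟩ := ih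
      have hmem : (p : R) ^ e ∈ Ideal.span {((p : R) ^ (e + 1))} := by
        rw [← sigmaExp_spec R hp]
        exact Ideal.mem_span_singleton_self _
      obtain ⟨d, hd⟩ := Ideal.mem_span_singleton'.mp hmem
      refine ⟨d * r, ?_⟩
      calc (p : R) ^ e = d * (p : R) ^ (e + 1) := hd.symm
        _ = d * ((p : R) ^ e * (p : R)) := by rw [pow_succ]
        _ = d * ((p : R) ^ (e + m) * r * (p : R)) := by rw [← hr]
        _ = (p : R) ^ (e + (m + 1)) * (d * r) := by rw [← add_assoc, pow_succ]; ring
  rcases le_or_gt k e with hk | hk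
  · exact ⟨(p : R) ^ (e - k), by rw [← pow_add, Nat.add_sub_cancel' hk]⟩
  · obtain ⟨r, hr⟩ := claim (k - e)
    exact ⟨r, by rwa [Nat.add_sub_cancel' hk.le] at hr⟩

lemma commutator_le_fox : (⁅H, H⁆ : Subgroup G) ≤ foxSubgroup R H := by
  rw [Subgroup.commutator_le]
  intro a ha b hb
  exact commutator_mem R H ha hb

lemma power_mem_fox {p : ℕ} (hp : inSigma R p) {h : G} (hh : h ∈ H)
    (hk : ∃ k : ℕ, h ^ p ^ k ∈ (⁅H, H⁆ : Subgroup G)) :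
    h ^ p ^ sigmaExp R p ∈ foxSubgroup R H := by
  obtain ⟨k, hk⟩ := hk
  have h1 : of R G (h ^ p ^ k) - 1 ∈ augMulGH R H := commutator_le_fox R H hk
  have h2 : ((p ^ k : ℕ) : R) • (of R G h - 1) ∈ augMulGH R H := by
    have := pow_sub_one_mem R H hh (p ^ k)
    have heq : ((p ^ k : ℕ) : R) • (of R G h - 1) =
        (of R G (h ^ p ^ k) - 1) -
          (of R G (h ^ p ^ k) - 1 - ((p ^ k : ℕ) : R) • (of R G h - 1)) := by abel
    rw [heq]
    exact sub_mem h1 this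
  obtain ⟨r, hr⟩ := sigma_pow_factor R hp k
  show of R G (h ^ p ^ sigmaExp R p) - 1 ∈ augMulGH R H
  have h3 : of R G (h ^ p ^ sigmaExp R p) - 1 =
      (of R G (h ^ p ^ sigmaExp R p) - 1 -
        ((p ^ sigmaExp R p : ℕ) : R) • (of R G h - 1)) +
        ((p ^ sigmaExp R p : ℕ) : R) • (of R G h - 1) := by abel
  rw [h3]
  refine add_mem (pow_sub_one_mem R H hh _) ?_
  have h4 : ((p ^ sigmaExp R p : ℕ) : R) • (of R G h - 1) =
      r • (((p ^ k : ℕ) : R) • (of R G h - 1)) := by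
    rw [smul_smul]
    congr 1
    push_cast
    rw [hr]; ring
  rw [h4]
  exact Submodule.smul_mem _ r h2

lemma closure_le_fox :
    Subgroup.closure ((⁅H, H⁆ : Subgroup G) ∪
        ⋃ p ∈ {p : ℕ | inSigma R p},
          {x : G | ∃ h ∈ H, (∃ k : ℕ, h ^ p ^ k ∈ (⁅H, H⁆ : Subgroup G)) ∧
            x = h ^ p ^ sigmaExp R p}) ≤ foxSubgroup R H := by
  rw [Subgroup.closure_le]
  rintro x (hx | hx)
  · exact commutator_le_fox R H hx
  · simp only [Set.mem_iUnion, Set.mem_setOf_eq] at hx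
    obtain ⟨p, hp, h, hh, hk, rfl⟩ := hx
    exact power_mem_fox R H hp hh hk

/-- The "relations" submodule: `(A →₀ R) / relSub ≅ A ⊗ R`. -/
noncomputable def relSub (A : Type*) [AddCommGroup A] : Submodule R (A →₀ R) :=
  Submodule.span R {f | ∃ x y : A,
    f = Finsupp.single (x + y) 1 - Finsupp.single x 1 - Finsupp.single y 1}

def TZero (A : Type*) [AddCommGroup A] (a : A) : Prop :=
  Finsupp.single a (1 : R) ∈ relSub R A

lemma TZero.eval {A : Type*} [AddCommGroup A] {a : A} (h : TZero R A a)
    {V : Type*} [AddCommGroup V] [Module R V] (φ : A →+ V) : φ a = 0 := by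
  classical
  let Ψ : (A →₀ R) →ₗ[R] V := Finsupp.linearCombination R (⇑φ)
  have hker : relSub R A ≤ LinearMap.ker Ψ := by
    rw [relSub, Submodule.span_le]
    rintro f ⟨x, y, rfl⟩
    simp only [SetLike.mem_coe, LinearMap.mem_ker, map_sub,
      Finsupp.linearCombination_single, one_smul, Ψ]
    rw [map_add]
    abel
  have h0 : Ψ (Finsupp.single a 1) = 0 := hker h
  simpa [Ψ, Finsupp.linearCombination_single] using h0

lemma TZero.map {A B : Type*} [AddCommGroup A] [AddCommGroup B] {a : A}
    (h : TZero R A a) (f : A →+ B) : TZero R B (f a) := by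
  classical
  let L : (A →₀ R) →ₗ[R] (B →₀ R) := Finsupp.lmapDomain R R f
  have hmap : ∀ x : A →₀ R, x ∈ relSub R A → L x ∈ relSub R B := by
    intro x hx
    have : Submodule.map L (relSub R A) ≤ relSub R B := by
      rw [relSub, Submodule.map_span, Submodule.span_le]
      rintro _ ⟨_, ⟨x, y, rfl⟩, rfl⟩
      refine Submodule.subset_span ⟨f x, f y, ?_⟩
      show Finsupp.lmapDomain R R (⇑f) _ = _
      simp only [map_sub, Finsupp.lmapDomain_apply, Finsupp.mapDomain_single, map_add]
    exact this (Submodule.mem_map_of_mem hx)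
  have := hmap _ h
  simpa [L, Finsupp.mapDomain_single, TZero] using this

lemma TZero.subtype {A : Type*} [AddCommGroup A] {a : A} (h : TZero R A a) :
    ∃ (A' : Submodule ℤ A) (ha : a ∈ A'), A'.FG ∧ TZero R A' ⟨a, ha⟩ := by
  classical
  obtain ⟨n, c, v, hsum⟩ := Submodule.mem_span_set'.mp h
  choose xs ys hxy using fun i => (v i).2
  set F : Set A := {a} ∪ (Set.range xs ∪ Set.range ys) with hF
  have hFfin : F.Finite := by
    apply Set.Finite.union (Set.finite_singleton a)
    exact Set.Finite.union (Set.finite_range xs) (Set.finite_range ys)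
  refine ⟨Submodule.span ℤ F, Submodule.subset_span (by simp [hF]), Submodule.fg_span hFfin, ?_⟩
  set A' := Submodule.span ℤ F
  have hx' : ∀ i, xs i ∈ A' := fun i =>
    Submodule.subset_span (by simp [hF, Set.mem_union])
  have hy' : ∀ i, ys i ∈ A' := fun i =>
    Submodule.subset_span (by simp [hF, Set.mem_union])
  set g' : Fin n → (A' →₀ R) := fun i =>
    Finsupp.single (⟨xs i, hx' i⟩ + ⟨ys i, hy' i⟩) 1 -
      Finsupp.single ⟨xs i, hx' i⟩ 1 - Finsupp.single ⟨ys i, hy' i⟩ 1 with hg'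
  have key : Finsupp.single (⟨a, Submodule.subset_span (by simp [hF])⟩ : A') (1 : R) =
      ∑ i, c i • g' i := by
    apply Finsupp.mapDomain_injective (Subtype.val_injective (p := (· ∈ A')))
    have hmd : ∀ z : A' →₀ R, Finsupp.mapDomain Subtype.val z =
        Finsupp.lmapDomain R R (Subtype.val : A' → A) z := fun _ => rfl
    rw [hmd, hmd, map_sum]
    have hterm : ∀ i, Finsupp.lmapDomain R R (Subtype.val : A' → A) (c i • g' i) =
        c i • (v i : A →₀ R) := by
      intro i
      rw [map_smul]
      congr 1
      rw [hxy i, hg']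
      simp only []
      rw [map_sub, map_sub]
      simp only [Finsupp.lmapDomain_apply, Finsupp.mapDomain_single]
      rfl
    simp only [hterm]
    rw [hsum]
    simp only [Finsupp.lmapDomain_apply, Finsupp.mapDomain_single]
  show Finsupp.single _ (1:R) ∈ relSub R A'
  rw [key]
  refine Submodule.sum_mem _ fun i _ => Submodule.smul_mem _ _ ?_
  exact Submodule.subset_span ⟨_, _, rfl⟩

/-- The target subgroup generated by `p^{e(p)}`-th multiples of `p`-torsion, `p ∈ σ(R)`. -/
noncomputable def sigmaSub (A : Type*) [AddCommGroup A] : AddSubgroup A :=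
  AddSubgroup.closure (⋃ p ∈ {p : ℕ | inSigma R p},
    {x : A | ∃ b : A, (∃ k : ℕ, p ^ k • b = 0) ∧ x = p ^ sigmaExp R p • b})

lemma sigmaSub_map {A B : Type*} [AddCommGroup A] [AddCommGroup B] (f : A →+ B)
    {a : A} (ha : a ∈ sigmaSub R A) : f a ∈ sigmaSub R B := by
  have : a ∈ (sigmaSub R B).comap f := by
    refine AddSubgroup.closure_le ((sigmaSub R B).comap f) |>.mpr ?_ ha
    intro x hx
    simp only [Set.mem_iUnion, Set.mem_setOf_eq] at hx
    obtain ⟨p, hp, b, ⟨k, hk⟩, rfl⟩ := hx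
    simp only [SetLike.mem_coe, AddSubgroup.mem_comap, map_nsmul]
    refine AddSubgroup.subset_closure ?_
    simp only [Set.mem_iUnion, Set.mem_setOf_eq]
    exact ⟨p, hp, f b, ⟨k, by rw [← map_nsmul, hk, map_zero]⟩, rfl⟩
  exact this

lemma tzero_cyclic [CharZero R] {q : ℤ} (hq : Irreducible q) (m : ℕ)
    {c : ℤ ⧸ (Submodule.span ℤ {q ^ m} : Submodule ℤ ℤ)}
    (h : TZero R _ c) : c ∈ sigmaSub R (ℤ ⧸ (Submodule.span ℤ {q ^ m} : Submodule ℤ ℤ)) := by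
  classical
  obtain ⟨c₀, rfl⟩ := Submodule.Quotient.mk_surjective _ c
  set p := q.natAbs with hpdef
  have hqprime : Prime q := hq.prime
  have hp : p.Prime := Int.prime_iff_natAbs_prime.mp hqprime
  have hd1 : q ∣ (p : ℤ) := Int.dvd_natAbs.mpr dvd_rfl
  have hd2 : (p : ℤ) ∣ q := Int.natAbs_dvd.mpr dvd_rfl
  -- Step (i): evaluate to get `(c₀ : R) ∈ span {(p:R)^m}`
  set J : Ideal R := Ideal.span {(p : R) ^ m} with hJ
  have hcR : ((c₀ : ℤ) : R) ∈ J := by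
    set φ₀ : ℤ →+ (R ⧸ J) := (J.mkQ.toAddMonoidHom).comp (Int.castAddHom R) with hφ₀
    have hle : (Submodule.span ℤ {q ^ m} : Submodule ℤ ℤ) ≤ LinearMap.ker φ₀.toIntLinearMap := by
      rw [Submodule.span_le]
      rintro _ rfl
      obtain ⟨d, hd⟩ := pow_dvd_pow_of_dvd hd2 m
      simp only [SetLike.mem_coe, LinearMap.mem_ker, AddMonoidHom.coe_toIntLinearMap, hφ₀,
        AddMonoidHom.coe_comp, Function.comp_apply, Int.coe_castAddHom, LinearMap.toAddMonoidHom_coe]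
      rw [Submodule.mkQ_apply, Submodule.Quotient.mk_eq_zero]
      rw [hd]
      push_cast
      exact Ideal.mul_mem_right _ _ (Ideal.subset_span rfl)
    set φ := Submodule.liftQ _ φ₀.toIntLinearMap hle
    have h0 : φ.toAddMonoidHom (Submodule.Quotient.mk c₀) = 0 := TZero.eval R h φ.toAddMonoidHom
    rw [LinearMap.toAddMonoidHom_coe, Submodule.liftQ_apply] at h0
    simp only [hφ₀, AddMonoidHom.coe_toIntLinearMap, AddMonoidHom.coe_comp,
      Function.comp_apply, Int.coe_castAddHom, LinearMap.toAddMonoidHom_coe] at h0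
    rwa [Submodule.mkQ_apply, Submodule.Quotient.mk_eq_zero] at h0
  by_cases hdvd : ((p : ℤ)) ^ m ∣ c₀
  · have : Submodule.Quotient.mk (p := (Submodule.span ℤ {q ^ m} : Submodule ℤ ℤ)) c₀ = 0 := by
      rw [Submodule.Quotient.mk_eq_zero]
      exact Ideal.mem_span_singleton.mpr ((pow_dvd_pow_of_dvd hd1 m).trans hdvd)
    rw [this]
    exact (sigmaSub R _).zero_mem
  · have hc₀ : c₀ ≠ 0 := by rintro rfl; exact hdvd (dvd_zero _)
    set n₀ := c₀.natAbs with hn₀def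
    have hn₀ : n₀ ≠ 0 := Int.natAbs_ne_zero.mpr hc₀
    set s := n₀.factorization p with hs
    have hps : p ^ s ∣ n₀ := Nat.ordProj_dvd n₀ p
    have hnd : ¬ p ^ (s + 1) ∣ n₀ := Nat.pow_succ_factorization_not_dvd hn₀ hp
    have hnatdvd : ∀ t : ℕ, p ^ t ∣ n₀ → ((p : ℤ)) ^ t ∣ c₀ := by
      intro t ht
      have := Int.natCast_dvd_natCast.mpr ht
      push_cast at this
      exact (Int.dvd_natAbs.mp (by exact_mod_cast this))
    have hsm : s < m := by
      by_contra hle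
      push_neg at hle
      exact hdvd (hnatdvd m (dvd_trans (pow_dvd_pow p hle) hps))
    set u := n₀ / p ^ s with hu
    have hnu : p ^ s * u = n₀ := Nat.ordProj_mul_ordCompl_eq_self n₀ p
    have hpu : ¬ p ∣ u := Nat.not_dvd_ordCompl hp hn₀
    have hco : IsCoprime (u : ℤ) (((p : ℕ) : ℤ) ^ (m - s)) := by
      have h1 : Nat.Coprime u (p ^ (m - s)) :=
        Nat.Coprime.pow_right _ ((hp.coprime_iff_not_dvd.mpr hpu).symm)
      have := Nat.isCoprime_iff_coprime.mpr h1
      push_cast at this ⊢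
      exact this
    obtain ⟨x, y, hxy⟩ := hco
    have hmm : m - s + s = m := Nat.sub_add_cancel hsm.le
    have hkey : (p : ℤ) ^ s = x * (n₀ : ℤ) + y * (p : ℤ) ^ m := by
      have : (p : ℤ) ^ s * (x * (u : ℤ) + y * ((p : ℤ)) ^ (m - s)) = (p : ℤ) ^ s := by
        have hxy' : x * (u : ℤ) + y * ((p : ℤ)) ^ (m - s) = 1 := by
          push_cast at hxy ⊢; linarith [hxy]
        rw [hxy', mul_one]
      calc (p : ℤ) ^ s = (p : ℤ) ^ s * (x * (u : ℤ) + y * ((p : ℤ)) ^ (m - s)) := this.symm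
        _ = x * ((p : ℤ) ^ s * u) + y * ((p : ℤ) ^ (m - s) * (p : ℤ) ^ s) := by ring
        _ = x * (n₀ : ℤ) + y * (p : ℤ) ^ m := by
            rw [← pow_add, hmm]
            congr 2
            exact_mod_cast congrArg (fun t : ℕ => (t : ℤ)) hnu
    -- `(p:R)^s ∈ span {(p:R)^(s+1)}`
    have hnR : ((n₀ : ℤ) : R) ∈ J := by
      rcases Int.natAbs_eq c₀ with hh | hh
      · rw [← hh]; exact hcR
      · have hZ : (n₀ : ℤ) = -c₀ := by omega
        have : ((n₀ : ℤ) : R) = -((c₀ : ℤ) : R) := by rw [hZ]; push_cast; ring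
        rw [this]; exact neg_mem hcR
    have hpsJ : (p : R) ^ s ∈ J := by
      have : ((p : ℤ) ^ s : ℤ) = x * (n₀ : ℤ) + y * (p : ℤ) ^ m := hkey
      have hcast : (p : R) ^ s = (x : R) * ((n₀ : ℤ) : R) + (y : R) * (p : R) ^ m := by
        exact_mod_cast congrArg (fun t : ℤ => (t : R)) this
      rw [hcast]
      exact add_mem (Ideal.mul_mem_left _ _ hnR)
        (Ideal.mul_mem_left _ _ (Ideal.subset_span rfl))
    have hspan : Ideal.span {(p : R) ^ s} = Ideal.span {(p : R) ^ (s + 1)} := by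
      apply le_antisymm
      · rw [Ideal.span_le, Set.singleton_subset_iff]
        refine SetLike.mem_coe.mpr ?_
        refine (Ideal.span_singleton_le_span_singleton.mpr (pow_dvd_pow _ hsm)) ?_
        · exact hpsJ
      · exact Ideal.span_singleton_le_span_singleton.mpr (pow_dvd_pow _ s.le_succ)
    have hsig : inSigma R p := ⟨hp, s, hspan⟩
    have he : sigmaExp R p ≤ s := Nat.sInf_le hspan
    obtain ⟨d, hd⟩ : ((p : ℤ)) ^ sigmaExp R p ∣ c₀ :=
      dvd_trans (pow_dvd_pow _ he) (hnatdvd s hps)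
    set b : ℤ ⧸ (Submodule.span ℤ {q ^ m} : Submodule ℤ ℤ) := Submodule.Quotient.mk d with hb
    have htor : p ^ m • b = 0 := by
      rw [hb, ← Submodule.Quotient.mk_smul, Submodule.Quotient.mk_eq_zero]
      have : (p ^ m : ℕ) • d = ((p : ℤ)) ^ m * d := by push_cast; ring
      rw [this]
      exact Ideal.mem_span_singleton.mpr (Dvd.dvd.mul_right (pow_dvd_pow_of_dvd hd1 m) d)
    have heq : Submodule.Quotient.mk (p := (Submodule.span ℤ {q ^ m} : Submodule ℤ ℤ)) c₀ =
        p ^ sigmaExp R p • b := by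
      rw [hb, ← Submodule.Quotient.mk_smul]
      congr 1
    rw [heq]
    refine AddSubgroup.subset_closure ?_
    simp only [Set.mem_iUnion, Set.mem_setOf_eq]
    exact ⟨p, hsig, b, ⟨m, htor⟩, rfl⟩

open scoped DirectSum in
set_option maxHeartbeats 1000000 in
lemma tzero_mem_sigmaSub [CharZero R] {A : Type*} [AddCommGroup A] {a : A}
    (h : TZero R A a) : a ∈ sigmaSub R A := by
  classical
  obtain ⟨A', ha, hfg, h'⟩ := TZero.subtype R h
  haveI : Module.Finite ℤ A' := Module.Finite.iff_fg.mpr hfg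
  obtain ⟨n, ι, hfin, q, hq, e, ⟨E⟩⟩ :=
    Module.equiv_free_prod_directSum (R := ℤ) (M := A')
  haveI := hfin
  set x := E ⟨a, ha⟩ with hx
  have hTx : TZero R ((Fin n →₀ ℤ) × ⨁ i : ι, ℤ ⧸ Submodule.span ℤ {q i ^ e i}) x := by
    have := TZero.map R h' E.toLinearMap.toAddMonoidHom
    simpa [hx] using this
  have hTw : ∀ i : ι, TZero R _ (x.2 i) := by
    intro i
    have := TZero.map R hTx
      (((DirectSum.component ℤ ι _ i).toAddMonoidHom).comp
        (AddMonoidHom.snd (Fin n →₀ ℤ) _))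
    exact this
  have hwi : ∀ i : ι,
      x.2 i ∈ sigmaSub R (ℤ ⧸ (Submodule.span ℤ {q i ^ e i} : Submodule ℤ ℤ)) :=
    fun i => tzero_cyclic R (hq i) (e i) (hTw i)
  have hx1 : x.1 = 0 := by
    ext j
    have h0 := TZero.eval R hTx
      ((Int.castAddHom R).comp ((Finsupp.applyAddHom j).comp
        (AddMonoidHom.fst (Fin n →₀ ℤ) _)))
    simp only [AddMonoidHom.coe_comp, Function.comp_apply, AddMonoidHom.coe_fst,
      Finsupp.applyAddHom_apply, Int.coe_castAddHom, Int.cast_eq_zero] at h0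
    simpa using h0
  have hx2 : x = (0, ∑ i : ι, DirectSum.of (fun i => ℤ ⧸ Submodule.span ℤ {q i ^ e i}) i (x.2 i)) := by
    rw [DirectSum.sum_univ_of, ← hx1]
  have hasum : (⟨a, ha⟩ : A') = ∑ i : ι,
      E.symm (0, DirectSum.of (fun i => ℤ ⧸ Submodule.span ℤ {q i ^ e i}) i (x.2 i)) := by
    have h1 : (⟨a, ha⟩ : A') = E.symm x := by rw [hx, LinearEquiv.symm_apply_apply]
    have h2 : (0, ∑ i : ι, DirectSum.of (fun i => ℤ ⧸ Submodule.span ℤ {q i ^ e i}) i (x.2 i)) =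
        ∑ i : ι, ((0 : Fin n →₀ ℤ), DirectSum.of (fun i => ℤ ⧸ Submodule.span ℤ {q i ^ e i}) i (x.2 i)) := by
      rw [Prod.ext_iff]
      exact ⟨by rw [Prod.fst_sum]; simp, by rw [Prod.snd_sum]⟩
    rw [h1]
    conv_lhs => rw [hx2, h2]
    rw [map_sum]
  have h4 : a = A'.subtype (∑ i : ι,
      E.symm (0, DirectSum.of (fun i => ℤ ⧸ Submodule.span ℤ {q i ^ e i}) i (x.2 i))) := by
    rw [← hasum]; rfl
  rw [h4, map_sum]
  refine AddSubgroup.sum_mem _ fun i _ => ?_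
  set f : (ℤ ⧸ (Submodule.span ℤ {q i ^ e i} : Submodule ℤ ℤ)) →+ A :=
    ((A'.subtype.toAddMonoidHom).comp (E.symm.toLinearMap.toAddMonoidHom)).comp
      (((LinearMap.inr ℤ (Fin n →₀ ℤ) _).toAddMonoidHom).comp
        (DirectSum.lof ℤ ι (fun i => ℤ ⧸ Submodule.span ℤ {q i ^ e i}) i).toAddMonoidHom)
    with hf
  have : (A'.subtype) (E.symm (0, DirectSum.of (fun i => ℤ ⧸ Submodule.span ℤ {q i ^ e i}) i (x.2 i)))
      = f (x.2 i) := by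
    simp [hf, DirectSum.lof_eq_of]
  rw [this]
  exact sigmaSub_map R f (hwi i)

end FoxAux

section PartB
variable (R : Type*) [CommRing R] {G : Type*} [Group G] (H : Subgroup G)

lemma gen_expand (g h : G) :
    (of R G g - 1) * (of R G h - 1) =
      MonoidAlgebra.single (g * h) (1 : R) - MonoidAlgebra.single g 1 - MonoidAlgebra.single h 1 +
        MonoidAlgebra.single 1 1 := by
  have e0 : (of R G g - 1) * (of R G h - 1) =
      of R G g * of R G h - of R G g - of R G h + 1 := by noncomm_ring
  have e1 : of R G g * of R G h = of R G (g * h) := (map_mul (of R G) g h).symm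
  rw [e0, e1]
  rfl

lemma mem_H_of_fox [CharZero R] {g : G} (hg : of R G g - 1 ∈ augMulGH R H) : g ∈ H := by
  classical
  set π : MonoidAlgebra R G →ₗ[R] ((G ⧸ H) →₀ R) :=
    (Finsupp.lmapDomain R R (QuotientGroup.mk (s := H))).comp
      (MonoidAlgebra.coeffLinearEquiv R).toLinearMap with hπ
  have hπs : ∀ a : G, π (MonoidAlgebra.single a (1 : R)) =
      Finsupp.single (QuotientGroup.mk (s := H) a) (1 : R) := fun a =>
    Finsupp.mapDomain_single
  have hker : augMulGH R H ≤ LinearMap.ker π := by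
    rw [augMulGH, Submodule.span_le]
    rintro _ ⟨g', h, hh, rfl⟩
    simp only [SetLike.mem_coe, LinearMap.mem_ker]
    rw [gen_expand, map_add, map_sub, map_sub, hπs, hπs, hπs, hπs]
    have e1 : QuotientGroup.mk (s := H) (g' * h) = QuotientGroup.mk g' :=
      QuotientGroup.mk_mul_of_mem g' hh
    have e2 : QuotientGroup.mk (s := H) h = QuotientGroup.mk 1 := by
      rw [QuotientGroup.eq]
      simpa using hh
    rw [e1, e2]
    abel
  have h0 : π (of R G g - 1) = 0 := hker hg
  rw [map_sub] at h0
  have h1 : π (of R G g) = Finsupp.single (QuotientGroup.mk (s := H) g) (1 : R) := hπs g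
  have h2 : π (1 : MonoidAlgebra R G) =
      Finsupp.single (QuotientGroup.mk (s := H) 1) (1 : R) := hπs 1
  rw [h1, h2, sub_eq_zero] at h0
  have hq : QuotientGroup.mk (s := H) g = QuotientGroup.mk 1 :=
    Finsupp.single_left_injective (α := G ⧸ H) (one_ne_zero (α := R)) h0
  rw [QuotientGroup.eq] at hq
  simpa using hq

/-- The canonical map `↥H → Additive (Abelianization ↥H)`. -/
def iotaH : ↥H → Additive (Abelianization ↥H) :=
  fun h => Additive.ofMul (Abelianization.of h)

lemma tzero_of_fox [CharZero R] {g : G} (hg : of R G g - 1 ∈ augMulGH R H) (hgH : g ∈ H) :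
    TZero R (Additive (Abelianization ↥H)) (iotaH H ⟨g, hgH⟩) := by
  classical
  set Add := Additive (Abelianization ↥H)
  set V := ((Add →₀ R) ⧸ relSub R Add) with hV
  set ψ : Add → V := fun x => Submodule.Quotient.mk (Finsupp.single x 1) with hψdef
  have hψ : ∀ x y : Add, ψ (x + y) = ψ x + ψ y := by
    intro x y
    show Submodule.Quotient.mk _ = Submodule.Quotient.mk _ + Submodule.Quotient.mk _
    rw [← Submodule.Quotient.mk_add, Submodule.Quotient.eq]
    exact Submodule.subset_span ⟨x, y, by abel⟩
  -- the H-part of an element of G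
  have hpart_mem : ∀ g' : G, ((QuotientGroup.mk (s := H) g').out)⁻¹ * g' ∈ H := by
    intro g'
    have : QuotientGroup.mk (s := H) ((QuotientGroup.mk (s := H) g').out) =
        QuotientGroup.mk g' := QuotientGroup.out_eq' _
    exact (QuotientGroup.eq).mp this
  set θ : G → Add := fun g' => iotaH H ⟨_, hpart_mem g'⟩ with hθ
  have hθmul : ∀ (g' : G) (h : G) (hh : h ∈ H), θ (g' * h) = θ g' + iotaH H ⟨h, hh⟩ := by
    intro g' h hh
    have hq : QuotientGroup.mk (s := H) (g' * h) = QuotientGroup.mk g' :=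
      QuotientGroup.mk_mul_of_mem g' hh
    have hsub : (⟨_, hpart_mem (g' * h)⟩ : ↥H) = ⟨_, hpart_mem g'⟩ * ⟨h, hh⟩ := by
      ext
      show ((QuotientGroup.mk (s := H) (g' * h)).out)⁻¹ * (g' * h) = _
      rw [hq]
      show _ = ((QuotientGroup.mk (s := H) g').out)⁻¹ * g' * h
      group
    rw [hθ]
    simp only []
    rw [hsub]
    show Additive.ofMul (Abelianization.of (_ * _)) = _
    rw [map_mul]
    rfl
  set Φ : MonoidAlgebra R G →ₗ[R] V := (Finsupp.linearCombination R (fun g' => ψ (θ g'))).comp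
    (MonoidAlgebra.coeffLinearEquiv R).toLinearMap with hΦ
  have s1 : ∀ a : G, Φ (MonoidAlgebra.single a (1 : R)) = ψ (θ a) := by
    intro a
    have h := Finsupp.linearCombination_single (R := R) (v := fun g' => ψ (θ g')) (1 : R) a
    rw [one_smul] at h
    exact h
  have hΦone : Φ 1 = ψ (θ 1) := s1 1
  have hΦof : ∀ g' : G, Φ (of R G g') = ψ (θ g') := fun g' => s1 g' 
  have hker : augMulGH R H ≤ LinearMap.ker Φ := by
    rw [augMulGH, Submodule.span_le]
    rintro _ ⟨g', h, hh, rfl⟩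
    simp only [SetLike.mem_coe, LinearMap.mem_ker]
    rw [gen_expand, map_add, map_sub, map_sub]
    rw [s1, s1, s1, s1]
    have e1 : θ (g' * h) = θ g' + iotaH H ⟨h, hh⟩ := hθmul g' h hh
    have e2 : θ h = θ 1 + iotaH H ⟨h, hh⟩ := by
      have := hθmul 1 h hh
      rwa [one_mul] at this
    rw [e1, e2, hψ, hψ]
    abel
  have h0 : Φ (of R G g - 1) = 0 := hker hg
  rw [map_sub, hΦof, hΦone] at h0
  have e3 : θ g = θ 1 + iotaH H ⟨g, hgH⟩ := by
    have := hθmul 1 g hgH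
    rwa [one_mul] at this
  rw [e3, hψ] at h0
  rw [add_sub_cancel_left] at h0
  have h4 : ψ (iotaH H ⟨g, hgH⟩) = 0 := h0
  have h5 : Finsupp.single (iotaH H ⟨g, hgH⟩) (1 : R) ∈ relSub R Add := by
    rwa [hψdef, Submodule.Quotient.mk_eq_zero (relSub R Add)] at h4
  exact h5

lemma map_commutator_subtype {x : ↥H} (hx : x ∈ commutator ↥H) :
    (x : G) ∈ (⁅H, H⁆ : Subgroup G) := by
  have hmap : Subgroup.map H.subtype (commutator ↥H) = ⁅H, H⁆ := by
    rw [commutator, Subgroup.map_commutator]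
    congr 1 <;>
    · rw [← MonoidHom.range_eq_map]
      exact Subgroup.subtype_range H
  rw [← hmap]
  exact Subgroup.mem_map_of_mem _ hx

lemma fox_le_closure [CharZero R] {g : G} (hg : of R G g - 1 ∈ augMulGH R H) :
    g ∈ Subgroup.closure ((⁅H, H⁆ : Subgroup G) ∪
        ⋃ p ∈ {p : ℕ | inSigma R p},
          {x : G | ∃ h ∈ H, (∃ k : ℕ, h ^ p ^ k ∈ (⁅H, H⁆ : Subgroup G)) ∧
            x = h ^ p ^ sigmaExp R p}) := by
  classical
  set K := Subgroup.closure ((⁅H, H⁆ : Subgroup G) ∪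
        ⋃ p ∈ {p : ℕ | inSigma R p},
          {x : G | ∃ h ∈ H, (∃ k : ℕ, h ^ p ^ k ∈ (⁅H, H⁆ : Subgroup G)) ∧
            x = h ^ p ^ sigmaExp R p}) with hK
  have hgH : g ∈ H := mem_H_of_fox R H hg
  have htz := tzero_of_fox R H hg hgH
  have hsig := tzero_mem_sigmaSub R htz
  set K' := K.subgroupOf H with hK'
  have hcommK : ∀ x, x ∈ (⁅H, H⁆ : Subgroup G) → x ∈ K := fun x hx =>
    Subgroup.subset_closure (Or.inl hx)
  have hcommK' : commutator ↥H ≤ K' := by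
    rw [commutator]
    rw [Subgroup.commutator_le]
    intro a _ b _
    rw [Subgroup.mem_subgroupOf]
    have hco : ((⁅a, b⁆ : ↥H) : G) = ⁅(a : G), (b : G)⁆ := by
      simp [commutatorElement_def]
    rw [hco]
    exact hcommK _ (Subgroup.commutator_mem_commutator a.2 b.2)
  set Kab := Subgroup.map (Abelianization.of (G := ↥H)) K' with hKab
  have hTle : sigmaSub R (Additive (Abelianization ↥H)) ≤ Subgroup.toAddSubgroup Kab := by
    rw [sigmaSub]
    refine (AddSubgroup.closure_le _).mpr ?_
    intro x hx
    simp only [Set.mem_iUnion, Set.mem_setOf_eq] at hx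
    obtain ⟨p, hp, b, ⟨k, hk⟩, rfl⟩ := hx
    obtain ⟨h₀, hh₀⟩ : ∃ h₀ : ↥H, Abelianization.of h₀ = Additive.toMul b :=
      QuotientGroup.mk_surjective (Additive.toMul b)
    have htor : h₀ ^ p ^ k ∈ commutator ↥H := by
      have h1 : Abelianization.of (h₀ ^ p ^ k) = 1 := by
        rw [map_pow, hh₀]
        have h2 : Additive.toMul (p ^ k • b) = Additive.toMul b ^ p ^ k := rfl
        rw [← h2, hk]
        rfl
      exact (QuotientGroup.eq_one_iff _).mp h1
    have hgen : (↑h₀ : G) ^ p ^ sigmaExp R p ∈ K := by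
      apply Subgroup.subset_closure
      refine Or.inr ?_
      simp only [Set.mem_iUnion, Set.mem_setOf_eq]
      refine ⟨p, hp, ↑h₀, h₀.2, ⟨k, ?_⟩, rfl⟩
      have : ((h₀ ^ p ^ k : ↥H) : G) = (↑h₀ : G) ^ p ^ k := by push_cast; rfl
      rw [← this]
      exact map_commutator_subtype H htor
    have hKmem : h₀ ^ p ^ sigmaExp R p ∈ K' := by
      rw [Subgroup.mem_subgroupOf]
      have : ((h₀ ^ p ^ sigmaExp R p : ↥H) : G) = (↑h₀ : G) ^ p ^ sigmaExp R p := by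
        push_cast; rfl
      rw [this]
      exact hgen
    have hmem : Abelianization.of (h₀ ^ p ^ sigmaExp R p) ∈ Kab :=
      Subgroup.mem_map_of_mem _ hKmem
    have heq : Additive.toMul (p ^ sigmaExp R p • b) =
        Abelianization.of (h₀ ^ p ^ sigmaExp R p) := by
      rw [map_pow, hh₀]
      rfl
    show Additive.toMul (p ^ sigmaExp R p • b) ∈ Kab
    rw [heq]
    exact hmem
  have hin : Abelianization.of (⟨g, hgH⟩ : ↥H) ∈ Kab := hTle hsig
  obtain ⟨y, hy, hyeq⟩ := Subgroup.mem_map.mp hin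
  have hdiff : (⟨g, hgH⟩ : ↥H) * y⁻¹ ∈ commutator ↥H := by
    have : Abelianization.of ((⟨g, hgH⟩ : ↥H) * y⁻¹) = 1 := by
      rw [map_mul, map_inv, hyeq]
      rw [mul_inv_eq_one]
    exact (QuotientGroup.eq_one_iff _).mp this
  have hfin : (⟨g, hgH⟩ : ↥H) ∈ K' := by
    have h1 : (⟨g, hgH⟩ : ↥H) = ((⟨g, hgH⟩ : ↥H) * y⁻¹) * y := by group
    rw [h1]
    exact mul_mem (hcommK' hdiff) hy
  rw [hK'] at hfin
  exact (Subgroup.mem_subgroupOf).mp hfin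

end PartB

/-- **Proposition 3.2(1)**: if `R` has characteristic `0`, then
`G ∩ (1_R + I_R(G)I_R(H))` equals the subgroup generated by `H₂ = [H,H]` together with,
for each prime `p ∈ σ(R)`, the `p^{e(p)}`-th powers of the elements of
`t_p(H mod H₂) = {h ∈ H | h^{p^k} ∈ H₂ for some k}`. -/
theorem first_fox_subgroup_char_zero (R : Type*) [CommRing R] [CharZero R]
    {G : Type*} [Group G] (H : Subgroup G) :
    {g : G | of R G g - 1 ∈ augMulGH R H} =
      ↑(Subgroup.closure ((⁅H, H⁆ : Subgroup G) ∪
        ⋃ p ∈ {p : ℕ | inSigma R p},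
          {x : G | ∃ h ∈ H, (∃ k : ℕ, h ^ p ^ k ∈ (⁅H, H⁆ : Subgroup G)) ∧
            x = h ^ p ^ sigmaExp R p})) := by
  ext g
  simp only [Set.mem_setOf_eq, SetLike.mem_coe]
  constructor
  · intro hg
    exact fox_le_closure R H hg
  · intro hg
    exact closure_le_fox R H hg
end

section
/- Let G be a group, H and K subgroups of G, m ≥ 0 an integer and R = ℤ/mℤ. Set V_H^{(m)} = H^m if m is odd, and V_H^{(m)} = H^{2m}·W^m with W = {h ∈ H : h^{m/2} ∈ K·G₂·G^m} if m is even (where W^m is the subgroup generated by m-th powers of elements of W). Let T₁ be the subgroup generated by all commutators [h, k^q] with h, k ∈ H, q ∈ ℤ, h^q ∈ K·G₂·G^m and k^q ∈ K·G₂·G^m, and let T₂ be the subgroup generated by all commutators [h, k] with h ∈ H ∩ K·G₂·G^m, k ∈ H ∩ K·G₂·G^m·G^q for some q ∈ ℤ with h^q ∈ H₂. Then the subgroup H₃·V_H^{(m)}·T₁·T₂ is contained in G ∩ (1_R + I_R(K)I_R(H) + I_R²(G)I_R(H)) = {g ∈ G : g−1 ∈ I_R(K)I_R(H) + I_R²(G)I_R(H)}.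 -/
open MonoidAlgebra
open scoped commutatorElement

/-- The `R`-submodule `I_R(K)·I_R(H)` of `R(G)` spanned by the products `(k-1)(h-1)`,
`k ∈ K`, `h ∈ H`. -/
noncomputable def relAugMulKH (R : Type*) [CommRing R] {G : Type*} [Group G]
    (K H : Subgroup G) : Submodule R (MonoidAlgebra R G) :=
  Submodule.span R {x | ∃ k ∈ K, ∃ h ∈ H, x = (of R G k - 1) * (of R G h - 1)}

/-- The `R`-submodule `I_R²(G)·I_R(H)` of `R(G)` spanned by the products
`(g-1)(g'-1)(h-1)`, `g, g' ∈ G`, `h ∈ H`. -/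
noncomputable def augSqMulH (R : Type*) [CommRing R] {G : Type*} [Group G]
    (H : Subgroup G) : Submodule R (MonoidAlgebra R G) :=
  Submodule.span R
    {x | ∃ g g' : G, ∃ h ∈ H, x = (of R G g - 1) * (of R G g' - 1) * (of R G h - 1)}

/-- The subgroup `G^m` generated by all `m`-th powers. -/
def powSubgroup (G : Type*) [Group G] (m : ℕ) : Subgroup G :=
  Subgroup.closure {x : G | ∃ g : G, x = g ^ m}

/-- The subgroup `H^m` generated by the `m`-th powers of the elements of `H`. -/
def powInSubgroup {G : Type*} [Group G] (H : Subgroup G) (m : ℕ) : Subgroup G :=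
  Subgroup.closure {x : G | ∃ h ∈ H, x = h ^ m}

/-- The subgroup `V_H^{(m)}`: `H^m` if `m` is odd, and `H^{2m}·W^m` with
`W = {h ∈ H | h^{m/2} ∈ K·G₂·G^m}` if `m` is even. -/
def foxVH {G : Type*} [Group G] (H K : Subgroup G) (m : ℕ) : Subgroup G :=
  if Odd m then powInSubgroup H m
  else powInSubgroup H (2 * m) ⊔
    Subgroup.closure {x : G | ∃ h ∈ H,
      h ^ (m / 2) ∈ K ⊔ commutator G ⊔ powSubgroup G m ∧ x = h ^ m}

/-- The subgroup `T₁`, generated by the commutators `[h, k^q]` with `h, k ∈ H`,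
`q ∈ ℤ`, `h^q, k^q ∈ K·G₂·G^m`. -/
def foxT1 {G : Type*} [Group G] (H K : Subgroup G) (m : ℕ) : Subgroup G :=
  Subgroup.closure {x : G | ∃ h ∈ H, ∃ k ∈ H, ∃ q : ℤ,
    h ^ q ∈ K ⊔ commutator G ⊔ powSubgroup G m ∧
    k ^ q ∈ K ⊔ commutator G ⊔ powSubgroup G m ∧ x = ⁅h, k ^ q⁆}

/-- The subgroup generated by the `q`-th powers, `q ∈ ℤ`. -/
def zpowSubgroup (G : Type*) [Group G] (q : ℤ) : Subgroup G :=
  Subgroup.closure {x : G | ∃ g : G, x = g ^ q}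

/-- The subgroup `T₂`, generated by the commutators `[h, k]` with
`h ∈ H ∩ K·G₂·G^m` and `k ∈ H ∩ K·G₂·G^m·G^q` for some `q ∈ ℤ` with `h^q ∈ H₂`. -/
def foxT2 {G : Type*} [Group G] (H K : Subgroup G) (m : ℕ) : Subgroup G :=
  Subgroup.closure {x : G | ∃ h k : G, ∃ q : ℤ,
    h ∈ H ∧ h ∈ K ⊔ commutator G ⊔ powSubgroup G m ∧
    k ∈ H ∧ k ∈ K ⊔ commutator G ⊔ powSubgroup G m ⊔ zpowSubgroup G q ∧
    h ^ q ∈ ⁅H, H⁆ ∧ x = ⁅h, k⁆}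

namespace FoxAux

open Pointwise

variable (R : Type*) [CommRing R] {G : Type*} [Group G]

/-- The relative augmentation submodule of a subgroup. -/
noncomputable def J (H : Subgroup G) : Submodule R (MonoidAlgebra R G) :=
  Submodule.span R {x | ∃ h ∈ H, x = of R G h - 1}

variable {R}

lemma mem_J {H : Subgroup G} {h : G} (hh : h ∈ H) : of R G h - 1 ∈ J R H :=
  Submodule.subset_span ⟨h, hh, rfl⟩

lemma J_mono {H K : Subgroup G} (hHK : H ≤ K) : J R H ≤ J R K :=
  Submodule.span_mono (by rintro x ⟨h, hh, rfl⟩; exact ⟨h, hHK hh, rfl⟩)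

lemma mul_sub_one_eq (a b : G) :
    (of R G a - 1) * (of R G b - 1)
      = (of R G (a * b) - 1) - (of R G a - 1) - (of R G b - 1) := by
  rw [map_mul]; noncomm_ring

lemma JJ_le (H : Subgroup G) : J R H * J R H ≤ J R H := by
  rw [J, Submodule.span_mul_span]
  refine Submodule.span_le.2 ?_
  rintro x hx
  rw [Set.mem_mul] at hx
  obtain ⟨y, ⟨a, ha, rfl⟩, z, ⟨b, hb, rfl⟩, rfl⟩ := hx
  rw [mul_sub_one_eq]
  exact sub_mem (sub_mem (mem_J (mul_mem ha hb)) (mem_J ha)) (mem_J hb)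

lemma pow_mem_J {H : Subgroup G} {h : G} (hh : h ∈ H) (k : ℕ) :
    (of R G h - 1) ^ (k + 1) ∈ J R H := by
  induction k with
  | zero => simpa using mem_J hh
  | succ n ih =>
      rw [pow_succ]
      exact JJ_le H (Submodule.mul_mem_mul ih (mem_J hh))

lemma comm_expand (a b : G) :
    of R G ⁅a, b⁆ - 1
      = ((of R G a - 1) * (of R G b - 1) - (of R G b - 1) * (of R G a - 1))
          * of R G (a⁻¹ * b⁻¹) := by
  have e1 : (of R G a - 1) * (of R G b - 1) - (of R G b - 1) * (of R G a - 1)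
      = of R G a * of R G b - of R G b * of R G a := by noncomm_ring
  have e2 : a * b * (a⁻¹ * b⁻¹) = ⁅a, b⁆ := by group
  have e3 : b * a * (a⁻¹ * b⁻¹) = 1 := by group
  rw [e1, sub_mul, ← map_mul, ← map_mul, ← map_mul, ← map_mul, e2, e3, map_one]

lemma comm_mem {P : Submodule R (MonoidAlgebra R G)} {a b : G}
    (h1 : (of R G a - 1) * (of R G b - 1) ∈ P)
    (h2 : (of R G b - 1) * (of R G a - 1) ∈ P)
    (h3 : ((of R G a - 1) * (of R G b - 1) - (of R G b - 1) * (of R G a - 1))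
        * (of R G (a⁻¹ * b⁻¹) - 1) ∈ P) :
    of R G ⁅a, b⁆ - 1 ∈ P := by
  have e2 : ((of R G a - 1) * (of R G b - 1) - (of R G b - 1) * (of R G a - 1))
      * of R G (a⁻¹ * b⁻¹)
      = ((of R G a - 1) * (of R G b - 1) - (of R G b - 1) * (of R G a - 1))
        + ((of R G a - 1) * (of R G b - 1) - (of R G b - 1) * (of R G a - 1))
          * (of R G (a⁻¹ * b⁻¹) - 1) := by noncomm_ring
  rw [comm_expand, e2]
  exact add_mem (sub_mem h1 h2) h3

/-- The subgroup of elements of `H` whose `of`-image minus `1` lies in `P`. -/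
def grp (H : Subgroup G) (P : Submodule R (MonoidAlgebra R G))
    (hP : ∀ h ∈ H, ∀ x ∈ P, (of R G h - 1) * x ∈ P) : Subgroup G where
  carrier := {g | g ∈ H ∧ of R G g - 1 ∈ P}
  one_mem' := ⟨H.one_mem, by rw [map_one]; simpa using P.zero_mem⟩
  mul_mem' := by
    rintro a b ⟨ha, pa⟩ ⟨hb, pb⟩
    refine ⟨H.mul_mem ha hb, ?_⟩
    have key : of R G (a * b) - 1
        = (of R G a - 1) * (of R G b - 1) + (of R G a - 1) + (of R G b - 1) := by
      rw [map_mul]; noncomm_ring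
    rw [key]
    exact add_mem (add_mem (hP a ha _ pb) pa) pb
  inv_mem' := by
    rintro a ⟨ha, pa⟩
    refine ⟨H.inv_mem ha, ?_⟩
    have h1 : of R G a⁻¹ * of R G a = 1 := by rw [← map_mul, inv_mul_cancel, map_one]
    have key : of R G a⁻¹ - 1
        = -(of R G a - 1) - (of R G a⁻¹ - 1) * (of R G a - 1) := by
      have e : (of R G a⁻¹ - 1) * (of R G a - 1)
          = of R G a⁻¹ * of R G a - of R G a⁻¹ - of R G a + 1 := by noncomm_ring
      rw [e, h1]; abel
    rw [key]
    exact sub_mem (neg_mem pa) (hP a⁻¹ (H.inv_mem ha) _ pa)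

lemma mem_grp {H : Subgroup G} {P : Submodule R (MonoidAlgebra R G)} {hP} {g : G} :
    g ∈ grp H P hP ↔ g ∈ H ∧ of R G g - 1 ∈ P := Iff.rfl

lemma add_one_pow_sub_one {A : Type*} [Ring A] (x : A) (n : ℕ) :
    (x + 1) ^ n - 1 = ∑ i ∈ Finset.range n, x ^ (i + 1) * (n.choose (i + 1) : A) := by
  rw [Commute.add_pow (Commute.one_right x), Finset.sum_range_succ']
  simp

lemma cast_mul_eq_smul {A : Type*} [Ring A] (x : A) (c : ℕ) : x * (c : A) = c • x := by
  rw [nsmul_eq_mul, (Nat.cast_commute c x).eq]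

lemma of_pow_expand (h : G) (n : ℕ) :
    of R G (h ^ n) - 1 = ∑ i ∈ Finset.range n,
      (n.choose (i + 1)) • (of R G h - 1) ^ (i + 1) := by
  have : of R G (h ^ n) = ((of R G h - 1) + 1) ^ n := by rw [map_pow, sub_add_cancel]
  rw [this, add_one_pow_sub_one]
  exact Finset.sum_congr rfl fun i _ => cast_mul_eq_smul _ _

lemma pow_mem_JJJ {H : Subgroup G} {h : G} (hh : h ∈ H) (k : ℕ) :
    (of R G h - 1) ^ (k + 3) ∈ J R H * J R H * J R H := by
  have e : k + 3 = 2 + (k + 1) := by omega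
  rw [e, pow_add, sq]
  exact Submodule.mul_mem_mul (Submodule.mul_mem_mul (mem_J hh) (mem_J hh)) (pow_mem_J hh k)

/-- Binomial expansion: everything past degree two lies in `J H ^ 3`. -/
lemma of_pow_sub_mem (H : Subgroup G) {h : G} (hh : h ∈ H) (n : ℕ) :
    of R G (h ^ n) - 1 - n • (of R G h - 1)
      - n.choose 2 • ((of R G h - 1) * (of R G h - 1))
      ∈ J R H * J R H * J R H := by
  match n with
  | 0 => simp only [pow_zero, map_one]
         simpa using Submodule.zero_mem (J R H * J R H * J R H)
  | 1 => simp only [pow_one]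
         simpa using Submodule.zero_mem (J R H * J R H * J R H)
  | (n + 2) =>
    have expand := of_pow_expand (R := R) h (n + 2)
    rw [Finset.sum_range_succ' (fun i => (n + 2).choose (i + 1) • (of R G h - 1) ^ (i + 1)) (n + 1),
      Finset.sum_range_succ' (fun i => (n + 2).choose (i + 1 + 1) • (of R G h - 1) ^ (i + 1 + 1)) n]
      at expand
    have key : of R G (h ^ (n + 2)) - 1 - (n + 2) • (of R G h - 1)
        - (n + 2).choose 2 • ((of R G h - 1) * (of R G h - 1))
        = ∑ i ∈ Finset.range n,
            (n + 2).choose (i + 1 + 1 + 1) • (of R G h - 1) ^ (i + 1 + 1 + 1) := by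
      rw [expand, Nat.choose_one_right, pow_one, sq ((of R G h - 1))] at *
      abel
    rw [key]
    exact Submodule.sum_mem _ fun i _ => nsmul_mem (pow_mem_JJJ hh i) _

lemma of_zpow_sub_mem (H : Subgroup G) {h : G} (hh : h ∈ H) (q : ℤ) :
    of R G (h ^ q) - 1 - q • (of R G h - 1) ∈ J R H * J R H := by
  have step : ∀ p : ℤ, of R G (h ^ (p + 1)) - 1
      = (of R G (h ^ p) - 1) + (of R G h - 1) + (of R G (h ^ p) - 1) * (of R G h - 1) := by
    intro p
    rw [zpow_add_one, map_mul]
    noncomm_ring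
  induction q using Int.induction_on with
  | zero =>
      simp only [zpow_zero, map_one]
      simpa using Submodule.zero_mem (J R H * J R H)
  | succ n ih =>
      have e : of R G (h ^ ((n : ℤ) + 1)) - 1 - ((n : ℤ) + 1) • (of R G h - 1)
          = (of R G (h ^ (n : ℤ)) - 1 - (n : ℤ) • (of R G h - 1))
            + (of R G (h ^ (n : ℤ)) - 1) * (of R G h - 1) := by
        rw [step, add_smul, one_smul]; abel
      rw [e]
      exact add_mem ih (Submodule.mul_mem_mul (mem_J (H.zpow_mem hh _)) (mem_J hh))
  | pred n ih =>
      have e : of R G (h ^ (-(n : ℤ) - 1)) - 1 - (-(n : ℤ) - 1) • (of R G h - 1)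
          = (of R G (h ^ (-(n : ℤ))) - 1 - (-(n : ℤ)) • (of R G h - 1))
            - (of R G (h ^ (-(n : ℤ) - 1)) - 1) * (of R G h - 1) := by
        have := step (-(n : ℤ) - 1)
        rw [sub_add_cancel] at this
        rw [this, sub_smul, one_smul]
        abel
      rw [e]
      exact sub_mem ih (Submodule.mul_mem_mul (mem_J (H.zpow_mem hh _)) (mem_J hh))

lemma relAug_eq (K H : Subgroup G) : relAugMulKH R K H = J R K * J R H := by
  rw [relAugMulKH, J, J, Submodule.span_mul_span]
  congr 1
  ext x
  constructor
  · rintro ⟨k, hk, h, hh, rfl⟩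
    exact ⟨_, ⟨k, hk, rfl⟩, _, ⟨h, hh, rfl⟩, rfl⟩
  · rintro ⟨y, ⟨k, hk, rfl⟩, z, ⟨h, hh, rfl⟩, rfl⟩
    exact ⟨k, hk, h, hh, rfl⟩

lemma augSq_eq (H : Subgroup G) :
    augSqMulH R H = J R (⊤ : Subgroup G) * J R (⊤ : Subgroup G) * J R H := by
  rw [augSqMulH]; simp only [J]; rw [Submodule.span_mul_span, Submodule.span_mul_span]
  congr 1
  ext x
  constructor
  · rintro ⟨g, g', h, hh, rfl⟩
    exact ⟨_, ⟨_, ⟨g, trivial, rfl⟩, _, ⟨g', trivial, rfl⟩, rfl⟩, _, ⟨h, hh, rfl⟩, rfl⟩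
  · rintro ⟨y, ⟨y1, ⟨g, -, rfl⟩, y2, ⟨g', -, rfl⟩, rfl⟩, z, ⟨h, hh, rfl⟩, rfl⟩
    exact ⟨g, g', h, hh, rfl⟩

variable (R)

/-- `M = I(K)I(H) + I(G)²I(H)`. -/
noncomputable def MM (K H : Subgroup G) : Submodule R (MonoidAlgebra R G) :=
  J R K * J R H ⊔ J R (⊤ : Subgroup G) * J R (⊤ : Subgroup G) * J R H

/-- `D = I(K) + I(G)²`. -/
noncomputable def DD (K : Subgroup G) : Submodule R (MonoidAlgebra R G) :=
  J R K ⊔ J R (⊤ : Subgroup G) * J R (⊤ : Subgroup G)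

variable {R}

variable {K H : Subgroup G}

lemma JJJH_le_MM : J R H * J R H * J R H ≤ MM R K H := by
  rw [MM]
  exact le_trans (mul_le_mul'
    (mul_le_mul' (J_mono le_top) (J_mono le_top)) le_rfl) le_sup_right

lemma JH_JJ_le_MM : J R H * (J R H * J R H) ≤ MM R K H := by
  rw [← mul_assoc]; exact JJJH_le_MM

lemma I_JJ_le_MM : J R (⊤ : Subgroup G) * (J R H * J R H) ≤ MM R K H := by
  rw [← mul_assoc, MM]
  refine le_trans ?_ le_sup_right
  exact mul_le_mul' (mul_le_mul' le_rfl (J_mono le_top)) le_rfl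

lemma I_mul_MM_le : J R (⊤ : Subgroup G) * MM R K H ≤ MM R K H := by
  rw [MM, Submodule.mul_sup]
  refine sup_le ?_ ?_
  · rw [← mul_assoc]
    exact le_trans (mul_le_mul'
      (mul_le_mul' le_rfl (J_mono le_top)) le_rfl) le_sup_right
  · rw [← mul_assoc, ← mul_assoc]
    exact le_trans (mul_le_mul'
      (mul_le_mul' (JJ_le ⊤) le_rfl) le_rfl) le_sup_right

lemma MM_mul_JH_le : MM R K H * J R H ≤ MM R K H := by
  rw [MM, Submodule.sup_mul]
  refine sup_le ?_ ?_
  · rw [mul_assoc]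
    exact le_trans (mul_le_mul' le_rfl (JJ_le H)) le_sup_left
  · rw [mul_assoc]
    exact le_trans (mul_le_mul' le_rfl (JJ_le H)) le_sup_right

lemma DD_mul_JH_le : DD R K * J R H ≤ MM R K H := by
  rw [DD, MM, Submodule.sup_mul]

lemma I_mul_DD_le : J R (⊤ : Subgroup G) * DD R K ≤ DD R K := by
  rw [DD, Submodule.mul_sup]
  refine sup_le (le_trans (mul_le_mul' le_rfl (J_mono le_top)) le_sup_right) ?_
  rw [← mul_assoc]
  exact le_trans (mul_le_mul' (JJ_le ⊤) le_rfl) le_sup_right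

variable (R K H)

/-- The subgroup of all `g` with `of g - 1 ∈ M`. -/
noncomputable def SM : Subgroup G :=
  grp ⊤ (MM R K H) fun g _ x hx =>
    I_mul_MM_le (Submodule.mul_mem_mul (mem_J (Subgroup.mem_top g)) hx)

/-- The subgroup of all `g` with `of g - 1 ∈ D`. -/
noncomputable def SD : Subgroup G :=
  grp ⊤ (DD R K) fun g _ x hx =>
    I_mul_DD_le (Submodule.mul_mem_mul (mem_J (Subgroup.mem_top g)) hx)

variable {R K H}

lemma JJJ_le_JJ (H' : Subgroup G) : J R H' * (J R H' * J R H') ≤ J R H' * J R H' := by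
  rw [← mul_assoc]
  exact mul_le_mul' (JJ_le H') le_rfl

lemma grp2_hP (H' : Subgroup G) :
    ∀ h ∈ H', ∀ x ∈ J R H' * J R H', (of R G h - 1) * x ∈ J R H' * J R H' :=
  fun _ hh x hx => JJJ_le_JJ H' (Submodule.mul_mem_mul (mem_J hh) hx)

variable (R) in
/-- The subgroup of all `g ∈ H'` with `of g - 1 ∈ J(H')²`. -/
noncomputable def S2 (H' : Subgroup G) : Subgroup G := grp H' (J R H' * J R H') (grp2_hP H')

/-- The derived subgroup of `H'` maps into `1 + J(H')²`. -/
lemma derived_le (H' : Subgroup G) : (⁅H', H'⁆ : Subgroup G) ≤ S2 R H' := by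
  rw [Subgroup.commutator_le]
  intro a ha b hb
  refine ⟨by rw [commutatorElement_def]
             exact mul_mem (mul_mem (mul_mem ha hb) (H'.inv_mem ha)) (H'.inv_mem hb), ?_⟩
  refine comm_mem (Submodule.mul_mem_mul (mem_J ha) (mem_J hb))
    (Submodule.mul_mem_mul (mem_J hb) (mem_J ha)) ?_
  refine mul_le_mul' (JJ_le H') le_rfl
    (Submodule.mul_mem_mul
      (sub_mem (Submodule.mul_mem_mul (mem_J ha) (mem_J hb))
        (Submodule.mul_mem_mul (mem_J hb) (mem_J ha)))
      (mem_J (H'.mul_mem (H'.inv_mem ha) (H'.inv_mem hb))))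

/-- commutator of two elements of `H`, with the two degree-2 products in `M`. -/
lemma comm_mem_MM {a b : G} (ha : a ∈ H) (hb : b ∈ H)
    (h1 : (of R G a - 1) * (of R G b - 1) ∈ MM R K H)
    (h2 : (of R G b - 1) * (of R G a - 1) ∈ MM R K H) :
    of R G ⁅a, b⁆ - 1 ∈ MM R K H := by
  refine comm_mem h1 h2 (JJJH_le_MM ?_)
  exact Submodule.mul_mem_mul
    (sub_mem (Submodule.mul_mem_mul (mem_J ha) (mem_J hb))
      (Submodule.mul_mem_mul (mem_J hb) (mem_J ha)))
    (mem_J (H.mul_mem (H.inv_mem ha) (H.inv_mem hb)))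

section ZModFacts

lemma nsmul_zero_of_cast (hc : ((n : ℕ) : R) = 0) (x : MonoidAlgebra R G) : n • x = 0 := by
  rw [← Nat.cast_smul_eq_nsmul R, hc, zero_smul]

/-- elements of `K ⊔ G₂ ⊔ Gᵐ` lie in `1 + D` when `(m : R) = 0`. -/
lemma L_le_SD {m : ℕ} (hm : ((m : ℕ) : R) = 0) :
    K ⊔ commutator G ⊔ powSubgroup G m ≤ SD R K := by
  refine sup_le (sup_le ?_ ?_) ?_
  · intro k hk
    exact ⟨trivial, (le_sup_left : J R K ≤ DD R K) (mem_J hk)⟩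
  · rw [commutator_def, Subgroup.commutator_le]
    intro a _ b _
    refine ⟨trivial, ?_⟩
    refine comm_mem
      ((le_sup_right : _ ≤ DD R K)
        (Submodule.mul_mem_mul (mem_J (Subgroup.mem_top a)) (mem_J (Subgroup.mem_top b))))
      ((le_sup_right : _ ≤ DD R K)
        (Submodule.mul_mem_mul (mem_J (Subgroup.mem_top b)) (mem_J (Subgroup.mem_top a)))) ?_
    refine (le_sup_right : _ ≤ DD R K) ?_
    refine mul_le_mul' (JJ_le ⊤) le_rfl ?_
    exact Submodule.mul_mem_mul
      (sub_mem (Submodule.mul_mem_mul (mem_J (Subgroup.mem_top a)) (mem_J (Subgroup.mem_top b)))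
        (Submodule.mul_mem_mul (mem_J (Subgroup.mem_top b)) (mem_J (Subgroup.mem_top a))))
      (mem_J (Subgroup.mem_top _))
  · rw [powSubgroup, Subgroup.closure_le]
    rintro x ⟨g, rfl⟩
    refine ⟨trivial, ?_⟩
    have h3 := of_pow_sub_mem (R := R) (⊤ : Subgroup G) (Subgroup.mem_top g) m
    rw [nsmul_zero_of_cast hm, sub_zero] at h3
    have e : of R G (g ^ m) - 1
        = (of R G (g ^ m) - 1
            - m.choose 2 • ((of R G g - 1) * (of R G g - 1)))
          + m.choose 2 • ((of R G g - 1) * (of R G g - 1)) := by abel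
    rw [e]
    refine add_mem ((le_sup_right : _ ≤ DD R K)
      (mul_le_mul' (JJ_le ⊤) le_rfl h3)) ?_
    have hsq : (of R G g - 1) * (of R G g - 1)
        ∈ J R (⊤ : Subgroup G) * J R (⊤ : Subgroup G) :=
      Submodule.mul_mem_mul (mem_J (Subgroup.mem_top g)) (mem_J (Subgroup.mem_top g))
    have hsq2 : m.choose 2 • ((of R G g - 1) * (of R G g - 1))
        ∈ J R (⊤ : Subgroup G) * J R (⊤ : Subgroup G) := nsmul_mem hsq _
    exact (le_sup_right : _ ≤ DD R K) hsq2

/-- power generators of `V` when both binomial coefficients vanish. -/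
lemma pow_mem_MM {h : G} (hh : h ∈ H) {n : ℕ}
    (hc1 : ((n : ℕ) : R) = 0) (hc2 : ((n.choose 2 : ℕ) : R) = 0) :
    of R G (h ^ n) - 1 ∈ MM R K H := by
  have h3 := of_pow_sub_mem (R := R) H hh n
  rw [nsmul_zero_of_cast hc1, nsmul_zero_of_cast hc2, sub_zero, sub_zero] at h3
  exact JJJH_le_MM h3

/-- the `W`-generators: `h ∈ H` with `h^{m/2} ∈ 1 + D`. -/
lemma W_pow_mem_MM {h : G} (hh : h ∈ H) {m : ℕ}
    (hm : ((m : ℕ) : R) = 0)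
    (hch : m.choose 2 = (m - 1) * (m / 2))
    (hDD : of R G (h ^ (m / 2)) - 1 ∈ DD R K) :
    of R G (h ^ m) - 1 ∈ MM R K H := by
  have h3 := of_pow_sub_mem (R := R) H hh m
  rw [nsmul_zero_of_cast hm, sub_zero] at h3
  have hq : m.choose 2 • ((of R G h - 1) * (of R G h - 1)) ∈ MM R K H := by
    rw [hch, mul_smul]
    refine nsmul_mem ?_ (m - 1)
    have hz := of_pow_sub_mem (R := R) H hh (m / 2)
    have e1 : (m / 2) • (of R G h - 1)
        = (of R G (h ^ (m / 2)) - 1)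
          - (m / 2).choose 2 • ((of R G h - 1) * (of R G h - 1))
          - (of R G (h ^ (m / 2)) - 1 - (m / 2) • (of R G h - 1)
              - (m / 2).choose 2 • ((of R G h - 1) * (of R G h - 1))) := by abel
    have e2 : (m / 2) • ((of R G h - 1) * (of R G h - 1))
        = ((m / 2) • (of R G h - 1)) * (of R G h - 1) := (smul_mul_assoc _ _ _).symm
    rw [e2, e1, sub_mul, sub_mul, smul_mul_assoc]
    refine sub_mem (sub_mem (DD_mul_JH_le (Submodule.mul_mem_mul hDD (mem_J hh))) ?_) ?_
    · exact nsmul_mem (JJJH_le_MM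
        (Submodule.mul_mem_mul (Submodule.mul_mem_mul (mem_J hh) (mem_J hh)) (mem_J hh))) _
    · exact MM_mul_JH_le (Submodule.mul_mem_mul (JJJH_le_MM hz) (mem_J hh))
  have e : of R G (h ^ m) - 1
      = (of R G (h ^ m) - 1 - m.choose 2 • ((of R G h - 1) * (of R G h - 1)))
        + m.choose 2 • ((of R G h - 1) * (of R G h - 1)) := by abel
  rw [e]
  exact add_mem (JJJH_le_MM h3) hq

/-- `T₁`-generators. -/
lemma T1_mem_MM {h k : G} (hh : h ∈ H) (hk : k ∈ H) (q : ℤ)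
    (hq1 : of R G (h ^ q) - 1 ∈ DD R K)
    (hq2 : of R G (k ^ q) - 1 ∈ DD R K) :
    of R G ⁅h, k ^ q⁆ - 1 ∈ MM R K H := by
  have hr := of_zpow_sub_mem (R := R) H hk q
  have hr' := of_zpow_sub_mem (R := R) H hh q
  set r : MonoidAlgebra R G := of R G (k ^ q) - 1 - q • (of R G k - 1) with hrd
  set r' : MonoidAlgebra R G := of R G (h ^ q) - 1 - q • (of R G h - 1) with hr'd
  refine comm_mem_MM hh (H.zpow_mem hk q) ?_
    (DD_mul_JH_le (Submodule.mul_mem_mul hq2 (mem_J hh)))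
  have key : (of R G h - 1) * (of R G (k ^ q) - 1)
      = (of R G (h ^ q) - 1) * (of R G k - 1) - r' * (of R G k - 1)
        + (of R G h - 1) * r := by
    have e0 : of R G (k ^ q) - 1 = q • (of R G k - 1) + r := by rw [hrd]; abel
    have e1 : q • (of R G h - 1) = (of R G (h ^ q) - 1) - r' := by rw [hr'd]; abel
    rw [e0, mul_add, mul_smul_comm, ← smul_mul_assoc, e1, sub_mul]
  rw [key]
  refine add_mem (sub_mem ?_ ?_) ?_
  · exact DD_mul_JH_le (Submodule.mul_mem_mul hq1 (mem_J hk))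
  · exact JJJH_le_MM (Submodule.mul_mem_mul hr' (mem_J hk))
  · exact JH_JJ_le_MM (Submodule.mul_mem_mul (mem_J hh) hr)

variable (R) in
/-- `D_q = D + q·I`. -/
noncomputable def DQ (K : Subgroup G) (q : ℤ) : Submodule R (MonoidAlgebra R G) :=
  DD R K ⊔ q • J R (⊤ : Subgroup G)

lemma mem_q_smul_iff {q : ℤ} {P : Submodule R (MonoidAlgebra R G)}
    {x : MonoidAlgebra R G} (hx : x ∈ q • P) : ∃ y ∈ P, q • y = x := by
  have h2 : x ∈ ((q • P : Submodule R (MonoidAlgebra R G)) : Set (MonoidAlgebra R G)) := hx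
  rw [Submodule.coe_pointwise_smul] at h2
  exact Set.mem_smul_set.1 h2

lemma I_mul_DQ_le {q : ℤ} : J R (⊤ : Subgroup G) * DQ R K q ≤ DQ R K q := by
  rw [DQ, Submodule.mul_sup]
  refine sup_le (le_trans I_mul_DD_le le_sup_left) ?_
  rw [Submodule.mul_le]
  intro f hf g hg
  obtain ⟨y, hy, rfl⟩ := mem_q_smul_iff hg
  rw [mul_smul_comm]
  refine Submodule.mem_sup_left (zsmul_mem ((le_sup_right : _ ≤ DD R K) ?_) q)
  exact mul_le_mul' le_rfl (J_mono le_top) (Submodule.mul_mem_mul hf hy)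

variable (R K) in
/-- The subgroup of all `g` with `of g - 1 ∈ D_q`. -/
noncomputable def SDQ (q : ℤ) : Subgroup G :=
  grp ⊤ (DQ R K q) fun g _ x hx =>
    I_mul_DQ_le (Submodule.mul_mem_mul (mem_J (Subgroup.mem_top g)) hx)

lemma LQ_le_SDQ {m : ℕ} (hm : ((m : ℕ) : R) = 0) (q : ℤ) :
    K ⊔ commutator G ⊔ powSubgroup G m ⊔ zpowSubgroup G q ≤ SDQ R K q := by
  refine sup_le ?_ ?_
  · intro x hx
    exact ⟨trivial, (le_sup_left : DD R K ≤ DQ R K q) ((L_le_SD hm hx).2)⟩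
  · rw [zpowSubgroup, Subgroup.closure_le]
    rintro x ⟨g, rfl⟩
    refine ⟨trivial, ?_⟩
    have hr := of_zpow_sub_mem (R := R) (⊤ : Subgroup G) (Subgroup.mem_top g) q
    have e : of R G (g ^ q) - 1
        = q • (of R G g - 1) + (of R G (g ^ q) - 1 - q • (of R G g - 1)) := by abel
    rw [e]
    refine add_mem ?_ ((le_sup_left : DD R K ≤ DQ R K q) ((le_sup_right : _ ≤ DD R K) hr))
    exact (le_sup_right : q • J R (⊤ : Subgroup G) ≤ DQ R K q)
      (Submodule.smul_mem_pointwise_smul _ q _ (mem_J (Subgroup.mem_top g)))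

/-- `T₂`-generators. -/
lemma T2_mem_MM {h k : G} (q : ℤ) (hh : h ∈ H) (hk : k ∈ H)
    (hhD : of R G h - 1 ∈ DD R K)
    (hkD : of R G k - 1 ∈ DQ R K q)
    (hcomm : of R G (h ^ q) - 1 ∈ J R H * J R H) :
    of R G ⁅h, k⁆ - 1 ∈ MM R K H := by
  refine comm_mem_MM hh hk (DD_mul_JH_le (Submodule.mul_mem_mul hhD (mem_J hk))) ?_
  rw [DQ] at hkD
  obtain ⟨d, hd, s, hs, hds⟩ := Submodule.mem_sup.1 hkD
  obtain ⟨y, hy, rfl⟩ := mem_q_smul_iff hs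
  have hr' := of_zpow_sub_mem (R := R) H hh q
  set r' : MonoidAlgebra R G := of R G (h ^ q) - 1 - q • (of R G h - 1) with hr'd
  have key : (of R G k - 1) * (of R G h - 1)
      = d * (of R G h - 1) + (y * (of R G (h ^ q) - 1) - y * r') := by
    have e1 : q • (of R G h - 1) = (of R G (h ^ q) - 1) - r' := by rw [hr'd]; abel
    rw [← hds, add_mul, smul_mul_assoc, ← mul_smul_comm, e1, mul_sub y]
  rw [key]
  refine add_mem (DD_mul_JH_le (Submodule.mul_mem_mul hd (mem_J hh))) (sub_mem ?_ ?_)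
  · exact I_JJ_le_MM (Submodule.mul_mem_mul hy hcomm)
  · exact I_JJ_le_MM (Submodule.mul_mem_mul hy hr')

lemma choose_two_cast_odd {m : ℕ} (hm : Odd m) : ((m.choose 2 : ℕ) : ZMod m) = 0 := by
  have h2 : 2 ∣ m - 1 := (Nat.Odd.sub_odd hm odd_one).two_dvd
  rw [Nat.choose_two_right, Nat.mul_div_assoc m h2, Nat.cast_mul, ZMod.natCast_self, zero_mul]

lemma choose_two_two_mul_cast (m : ℕ) : (((2 * m).choose 2 : ℕ) : ZMod m) = 0 := by
  have e : (2 * m).choose 2 = m * (2 * m - 1) := by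
    rw [Nat.choose_two_right, mul_assoc, Nat.mul_div_cancel_left _ (by norm_num : 0 < 2)]
  rw [e, Nat.cast_mul, ZMod.natCast_self, zero_mul]

lemma choose_two_even {m : ℕ} (hm : ¬ Odd m) : m.choose 2 = (m - 1) * (m / 2) := by
  have h2 : 2 ∣ m := (Nat.not_odd_iff_even.1 hm).two_dvd
  rw [Nat.choose_two_right, mul_comm m (m - 1), Nat.mul_div_assoc _ h2]

end ZModFacts

end FoxAux

open FoxAux in
/-- **Remark 3.4(1)**: the subgroup `H₃·V_H^{(m)}·T₁·T₂` is contained in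
`G ∩ (1_R + I_R(K)I_R(H) + I_R²(G)I_R(H))`, where `R = ℤ/mℤ`. -/
theorem fox_subgroup_lower_bound {G : Type*} [Group G] (H K : Subgroup G) (m : ℕ) :
    ∀ g ∈ (⁅(⁅H, H⁆ : Subgroup G), H⁆ ⊔ foxVH H K m ⊔ foxT1 H K m ⊔ foxT2 H K m :
        Subgroup G),
      of (ZMod m) G g - 1 ∈ relAugMulKH (ZMod m) K H + augSqMulH (ZMod m) H := by
  have hm : ((m : ℕ) : ZMod m) = 0 := ZMod.natCast_self m
  suffices hle : (⁅(⁅H, H⁆ : Subgroup G), H⁆ ⊔ foxVH H K m ⊔ foxT1 H K m ⊔ foxT2 H K m :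
      Subgroup G) ≤ SM (ZMod m) K H by
    intro g hg
    have hmem := (hle hg).2
    rw [MM] at hmem
    rw [relAug_eq, augSq_eq, Submodule.add_eq_sup]
    exact hmem
  refine sup_le (sup_le (sup_le ?h3 ?hV) ?hT1) ?hT2
  case h3 =>
    rw [Subgroup.commutator_le]
    intro c hc h hh
    obtain ⟨hcH, hc2⟩ := derived_le (R := ZMod m) H hc
    refine ⟨trivial, comm_mem_MM hcH hh ?_ ?_⟩
    · exact JJJH_le_MM (Submodule.mul_mem_mul hc2 (mem_J hh))
    · exact JH_JJ_le_MM (Submodule.mul_mem_mul (mem_J hh) hc2)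
  case hV =>
    rw [foxVH]
    by_cases hodd : Odd m
    · rw [if_pos hodd, powInSubgroup, Subgroup.closure_le]
      rintro x ⟨h, hh, rfl⟩
      exact ⟨trivial, pow_mem_MM hh hm (choose_two_cast_odd hodd)⟩
    · rw [if_neg hodd]
      refine sup_le ?_ ?_
      · rw [powInSubgroup, Subgroup.closure_le]
        rintro x ⟨h, hh, rfl⟩
        refine ⟨trivial, pow_mem_MM hh ?_ (choose_two_two_mul_cast m)⟩
        push_cast
        rw [hm, mul_zero]
      · rw [Subgroup.closure_le]
        rintro x ⟨h, hh, hcond, rfl⟩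
        refine ⟨trivial, W_pow_mem_MM hh hm (choose_two_even hodd) ?_⟩
        exact ((L_le_SD hm) hcond).2
  case hT1 =>
    rw [foxT1, Subgroup.closure_le]
    rintro x ⟨h, hh, k, hk, q, hq1, hq2, rfl⟩
    exact ⟨trivial, T1_mem_MM hh hk q ((L_le_SD hm hq1).2) ((L_le_SD hm hq2).2)⟩
  case hT2 =>
    rw [foxT2, Subgroup.closure_le]
    rintro x ⟨h, k, q, hh, hhL, hk, hkL, hq, rfl⟩
    exact ⟨trivial, T2_mem_MM q hh hk ((L_le_SD hm hhL).2)
      ((LQ_le_SDQ hm q hkL).2) ((derived_le (R := ZMod m) H hq).2)⟩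
end
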